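/- arXiv:2408.12951 — 4 statements merged into one kernel-verified Lean document; each statement's English description precedes it below -/
import Mathlib

section
/- For every block graph G with at least one vertex, b*(G) = m*(G) + 1. -/
variable {V : Type*} {W : Type*}

/-- A proper coloring of `G` using colors `{1, …, k}`: colors lie in `{1,…,k}`,
adjacent vertices get different colors, and every color in `{1,…,k}` is used. -/
def IsProperKColoring (G : SimpleGraph V) (k : ℕ) (c : V → ℕ) : Prop :=
  (∀ v, c v ∈ Set.Icc 1 k) ∧
  (∀ u v, G.Adj u v → c u ≠ c v) ∧
  (∀ j ∈ Set.Icc 1 k, ∃ v, c v = j)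

/-- `u` is a b-vertex: every color `j ∈ {1,…,k}` with `j ≠ c u` appears on a neighbor of `u`. -/
def IsBVertex (G : SimpleGraph V) (k : ℕ) (c : V → ℕ) (u : V) : Prop :=
  ∀ j ∈ Set.Icc 1 k, j ≠ c u → ∃ w, G.Adj u w ∧ c w = j

/-- `u` is a nice vertex: it is a b-vertex and for every color `j ≠ c u` in `{1,…,k}`
it has a b-vertex neighbor of color `j`. -/
def IsNiceVertex (G : SimpleGraph V) (k : ℕ) (c : V → ℕ) (u : V) : Prop :=
  IsBVertex G k c u ∧
  ∀ j ∈ Set.Icc 1 k, j ≠ c u → ∃ w, G.Adj u w ∧ c w = j ∧ IsBVertex G k c w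

/-- A Grundy coloring using `k` colors: proper, and every vertex of color `j` has a
neighbor of each smaller color `i ≥ 1`. -/
def IsGrundyColoring (G : SimpleGraph V) (k : ℕ) (c : V → ℕ) : Prop :=
  IsProperKColoring G k c ∧
  ∀ i j : ℕ, 1 ≤ i → i < j → j ≤ k → ∀ v, c v = j → ∃ w, G.Adj v w ∧ c w = i

/-- A z-coloring: a Grundy coloring with a nice vertex of (top) color `k`. -/
def IsZColoring (G : SimpleGraph V) (k : ℕ) (c : V → ℕ) : Prop :=
  IsGrundyColoring G k c ∧ ∃ u, c u = k ∧ IsNiceVertex G k c u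

/-- A b*-coloring: a proper coloring with a nice vertex of (top) color `k`. -/
def IsBStarColoring (G : SimpleGraph V) (k : ℕ) (c : V → ℕ) : Prop :=
  IsProperKColoring G k c ∧ ∃ u, c u = k ∧ IsNiceVertex G k c u

/-- The z-chromatic number: largest `k` admitting a z-coloring with `k` colors. -/
noncomputable def zNum (G : SimpleGraph V) : ℕ :=
  sSup {k | ∃ c : V → ℕ, IsZColoring G k c}

/-- The b*-chromatic number: largest `k` admitting a b*-coloring with `k` colors. -/
noncomputable def bStar (G : SimpleGraph V) : ℕ :=
  sSup {k | ∃ c : V → ℕ, IsBStarColoring G k c}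

/-- `m*(G)`: the largest `k` such that some vertex `u` has `k` distinct neighbors,
each of degree at least `k`. -/
noncomputable def mStar (G : SimpleGraph V) : ℕ :=
  sSup {k | ∃ (u : V) (s : Finset V), (↑s : Set V) ⊆ G.neighborSet u ∧ s.card = k ∧
    ∀ v ∈ s, k ≤ (G.neighborSet v).ncard}

/-- The clique number `ω(G)`. -/
noncomputable def omegaNum (G : SimpleGraph V) : ℕ :=
  sSup {n | ∃ s : Finset V, G.IsNClique n s}
/-- `B` is (the vertex set of) a block of `G`: a maximal set of vertices inducing a
connected subgraph with no cut vertex. -/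
def IsBlockSet (G : SimpleGraph V) (B : Set V) : Prop :=
  B.Nonempty ∧ (G.induce B).Connected ∧
  (∀ v ∈ B, (G.induce (B \ {v})).Preconnected) ∧
  ∀ B' : Set V, B ⊆ B' → (G.induce B').Connected →
    (∀ v ∈ B', (G.induce (B' \ {v})).Preconnected) → B' = B

/-- A block graph: every block is a clique. -/
def IsBlockGraph (G : SimpleGraph V) : Prop :=
  ∀ B : Set V, IsBlockSet G B → G.IsClique B
open SimpleGraph

lemma reach_induce_of_walk {G : SimpleGraph V} {S : Set V} :
    ∀ {x y : V} (p : G.Walk x y), (∀ z ∈ p.support, z ∈ S) →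
      ∀ (hx : x ∈ S) (hy : y ∈ S), (G.induce S).Reachable ⟨x, hx⟩ ⟨y, hy⟩ := by
  intro x y p
  induction p with
  | nil => intro _ hx hy; rfl
  | @cons a b c hab q ih =>
      intro hsup hx hy
      have hb : b ∈ S := hsup b (by simp [Walk.support_cons, q.start_mem_support])
      have h1 : (G.induce S).Adj ⟨a, hx⟩ ⟨b, hb⟩ := hab
      exact h1.reachable.trans (ih (fun z hz => hsup z (by simp [Walk.support_cons, hz])) hb hy)

lemma clique_of_no_cut [Fintype V] {G : SimpleGraph V} (hbg : IsBlockGraph G) {S : Set V}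
    (hne : S.Nonempty) (hconn : (G.induce S).Connected)
    (hcut : ∀ v ∈ S, (G.induce (S \ {v})).Preconnected) : G.IsClique S := by
  classical
  set F : Set (Set V) := {T | S ⊆ T ∧ (G.induce T).Connected ∧
    ∀ v ∈ T, (G.induce (T \ {v})).Preconnected} with hF
  have hSF : S ∈ F := ⟨subset_rfl, hconn, hcut⟩
  obtain ⟨T, hTF, hmax⟩ := Set.Finite.exists_maximalFor Set.ncard F (Set.toFinite F) ⟨S, hSF⟩
  have hblock : IsBlockSet G T := by
    refine ⟨hne.mono hTF.1, hTF.2.1, hTF.2.2, ?_⟩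
    intro B' hTB' hB'conn hB'cut
    have hB'F : B' ∈ F := ⟨hTF.1.trans hTB', hB'conn, hB'cut⟩
    have hle : T.ncard ≤ B'.ncard := Set.ncard_le_ncard hTB' (Set.toFinite _)
    have := hmax hB'F hle
    exact (Set.eq_of_subset_of_ncard_le hTB' this.ge (Set.toFinite _)).symm
  exact (hbg T hblock).subset hTF.1

/-- The triangle lemma: in a block graph, if `x, y` are neighbors of `w` joined by a
walk avoiding `w`, then `x` and `y` are adjacent. -/
lemma tri [Fintype V] {G : SimpleGraph V} (hbg : IsBlockGraph G) {w x y : V}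
    (hwx : G.Adj w x) (hwy : G.Adj w y) (hxy : x ≠ y)
    (p : G.Walk x y) (hwp : w ∉ p.support) : G.Adj x y := by
  classical
  set q : G.Walk x y := (p.toPath : G.Path x y).1 with hqdef
  have hq : q.IsPath := (p.toPath).2
  have hwq : w ∉ q.support := fun h => hwp (p.support_toPath_subset h)
  set S : Set V := insert w {z | z ∈ q.support} with hS
  have hwS : w ∈ S := Set.mem_insert _ _
  have hsupS : ∀ z ∈ q.support, z ∈ S := fun z hz => Set.mem_insert_iff.2 (Or.inr hz)
  have hxS : x ∈ S := hsupS x q.start_mem_support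
  have hyS : y ∈ S := hsupS y q.end_mem_support
  -- walk from any support vertex to w within S
  have toW : ∀ z (hz : z ∈ q.support), ∃ r : G.Walk z w, ∀ a ∈ r.support, a ∈ S := by
    intro z hz
    refine ⟨(q.dropUntil z hz).append (Walk.cons hwy.symm Walk.nil), ?_⟩
    intro a ha
    rw [Walk.support_append] at ha
    rcases List.mem_append.1 ha with h | h
    · exact hsupS a (q.support_dropUntil_subset hz h)
    · simp only [Walk.support_cons, Walk.support_nil, List.tail_cons,
        List.mem_singleton] at h
      exact h ▸ hwS
  have hconn : (G.induce S).Connected := by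
    rw [connected_iff]
    refine ⟨?_, ⟨⟨w, hwS⟩⟩⟩
    have hub : ∀ a : S, (G.induce S).Reachable a ⟨w, hwS⟩ := by
      rintro ⟨a, ha⟩
      rcases Set.mem_insert_iff.1 ha with rfl | ha'
      · rfl
      · obtain ⟨r, hr⟩ := toW a ha'
        exact reach_induce_of_walk r hr ha hwS
    intro a b
    exact (hub a).trans (hub b).symm
  have hcut : ∀ v ∈ S, (G.induce (S \ {v})).Preconnected := by
    intro v hv
    rcases Set.mem_insert_iff.1 hv with hveq | hvq
    · -- v = w : remaining is the path support
      rw [hveq]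
      have hub : ∀ a : ↥(S \ {w}), (G.induce (S \ {w})).Reachable a
          ⟨x, ⟨hxS, fun h => hwq (h ▸ q.start_mem_support)⟩⟩ := by
        rintro ⟨a, ha, haw⟩
        have haq : a ∈ q.support := by
          rcases Set.mem_insert_iff.1 ha with rfl | h
          · exact absurd rfl haw
          · exact h
        refine reach_induce_of_walk (q.takeUntil a haq).reverse ?_ _ _
        intro z hz
        rw [Walk.support_reverse, List.mem_reverse] at hz
        have hzq := q.support_takeUntil_subset haq hz
        exact ⟨hsupS z hzq, fun h => hwq (h ▸ hzq)⟩
      intro a b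
      exact (hub a).trans (hub b).symm
    · -- v on the path
      have hvw : w ≠ v := fun h => hwq (h ▸ hvq)
      have hwS' : w ∈ S \ {v} := ⟨hwS, hvw⟩
      have hub : ∀ a : ↥(S \ {v}), (G.induce (S \ {v})).Reachable a ⟨w, hwS'⟩ := by
        rintro ⟨a, ha, hav⟩
        rcases Set.mem_insert_iff.1 ha with rfl | haq
        · rfl
        have hav' : a ≠ v := hav
        by_cases hvt : v ∈ (q.takeUntil a haq).support
        · -- use dropUntil, v not in it
          have hsplit : q.support =
              (q.takeUntil a haq).support ++ (q.dropUntil a haq).support.tail := by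
            conv_lhs => rw [← q.take_spec haq]
            rw [Walk.support_append]
          have hnd : q.support.Nodup := hq.support_nodup
          rw [hsplit] at hnd
          have hdisj := List.disjoint_of_nodup_append hnd
          have hvd : v ∉ (q.dropUntil a haq).support := by
            intro hvd
            rw [Walk.support_eq_cons] at hvd
            rcases List.mem_cons.1 hvd with h | h
            · exact hav' h.symm
            · exact hdisj hvt h
          refine reach_induce_of_walk
            ((q.dropUntil a haq).append (Walk.cons hwy.symm Walk.nil)) ?_ _ _
          intro z hz
          rw [Walk.support_append] at hz
          rcases List.mem_append.1 hz with h | h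
          · exact ⟨hsupS z (q.support_dropUntil_subset haq h),
              fun he => hvd (he ▸ h)⟩
          · simp only [Walk.support_cons, Walk.support_nil, List.tail_cons,
              List.mem_singleton] at h
            exact h ▸ hwS'
        · -- use takeUntil reversed then edge x-w
          refine reach_induce_of_walk
            ((q.takeUntil a haq).reverse.append (Walk.cons hwx.symm Walk.nil)) ?_ _ _
          intro z hz
          rw [Walk.support_append] at hz
          rcases List.mem_append.1 hz with h | h
          · rw [Walk.support_reverse, List.mem_reverse] at h
            exact ⟨hsupS z (q.support_takeUntil_subset haq h),
              fun he => hvt (he ▸ h)⟩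
          · simp only [Walk.support_cons, Walk.support_nil, List.tail_cons,
              List.mem_singleton] at h
            exact h ▸ hwS'
      intro a b
      exact (hub a).trans (hub b).symm
  exact clique_of_no_cut hbg ⟨w, hwS⟩ hconn hcut hxS hyS hxy

/-- Two distinct neighbors of `h` with a common neighbor `z ≠ h` are adjacent. -/
lemma fact1 [Fintype V] {G : SimpleGraph V} (hbg : IsBlockGraph G) {h x y z : V}
    (hhx : G.Adj h x) (hhy : G.Adj h y) (hzx : G.Adj z x) (hzy : G.Adj z y)
    (hzh : z ≠ h) (hxy : x ≠ y) : G.Adj x y := by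
  refine tri hbg hhx hhy hxy (Walk.cons hzx.symm (Walk.cons hzy Walk.nil)) ?_
  simp only [Walk.support_cons, Walk.support_nil, List.mem_cons, List.mem_singleton,
    List.not_mem_nil, or_false]
  push_neg
  exact ⟨fun e => hhx.ne' e.symm, fun e => hzh e.symm, fun e => hhy.ne' e.symm⟩

/-- No vertex outside `N[u]` can be adjacent to two distinct neighbors of `u`. -/
lemma fact2 [Fintype V] {G : SimpleGraph V} (hbg : IsBlockGraph G) {u x y w : V}
    (hux : G.Adj u x) (huy : G.Adj u y) (hwx : G.Adj w x) (hwy : G.Adj w y)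
    (hxy : x ≠ y) (hwu : w ≠ u) (hnadj : ¬ G.Adj u w) : False := by
  have hxyadj : G.Adj x y := fact1 hbg hux huy hwx hwy hwu hxy
  have : G.Adj u w := by
    refine tri hbg hux.symm hwx.symm (Ne.symm hwu)
      (Walk.cons huy (Walk.cons hwy.symm Walk.nil)) ?_
    simp only [Walk.support_cons, Walk.support_nil, List.mem_cons, List.mem_singleton,
      List.not_mem_nil, or_false]
    push_neg
    exact ⟨hux.ne', hxy, hwx.ne'⟩
  exact hnadj this

lemma exists_boundary {G : SimpleGraph V} {S : Set V} :
    ∀ {a b : V}, (p : G.Walk a b) → a ∉ S → b ∈ S →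
      ∃ x y, x ∉ S ∧ y ∈ S ∧ G.Adj x y := by
  intro a b p
  induction p with
  | nil => intro ha hb; exact absurd hb ha
  | @cons a c b hac q ih =>
      intro ha hb
      by_cases hc : c ∈ S
      · exact ⟨a, c, ha, hc, hac⟩
      · exact ih hc hb

lemma ext_color [Fintype V] {G : SimpleGraph V} (hbg : IsBlockGraph G) (k : ℕ)
    (hclq : ∀ t : Finset V, G.IsClique (t : Set V) → t.card ≤ k + 1) :
    ∀ (n : ℕ) (S : Set V) (c : V → ℕ),
      Sᶜ.ncard ≤ n →
      (∀ v ∈ S, c v ∈ Set.Icc 1 (k+1)) →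
      (∀ x ∈ S, ∀ y ∈ S, G.Adj x y → c x ≠ c y) →
      (∀ w, w ∉ S → ∀ x ∈ S, ∀ y ∈ S, G.Adj w x → G.Adj w y → x ≠ y → G.Adj x y) →
      (∀ x ∈ S, ∀ y ∈ S, G.Reachable x y → ∃ p : G.Walk x y, ∀ z ∈ p.support, z ∈ S) →
      ∃ c' : V → ℕ, (∀ v ∈ S, c' v = c v) ∧ (∀ v, c' v ∈ Set.Icc 1 (k+1)) ∧
        ∀ x y, G.Adj x y → c' x ≠ c' y := by
  classical
  intro n
  induction n with
  | zero =>
      intro S c hnc hcol hprop _ _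
      have hS : S = Set.univ := by
        have : Sᶜ.ncard = 0 := Nat.le_zero.1 hnc
        have h0 : Sᶜ = ∅ := (Set.ncard_eq_zero (Set.toFinite _)).1 this
        rw [← Set.compl_empty, ← h0, compl_compl]
      refine ⟨c, fun v _ => rfl, fun v => hcol v (hS ▸ Set.mem_univ v), ?_⟩
      intro x y hxy
      exact hprop x (hS ▸ Set.mem_univ x) y (hS ▸ Set.mem_univ y) hxy
  | succ n ih =>
      intro S c hnc hcol hprop hinv1 hinv2
      by_cases hS : S = Set.univ
      · refine ⟨c, fun v _ => rfl, fun v => hcol v (hS ▸ Set.mem_univ v), ?_⟩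
        intro x y hxy
        exact hprop x (hS ▸ Set.mem_univ x) y (hS ▸ Set.mem_univ y) hxy
      -- pick the vertex to color
      obtain ⟨v₀, hv₀⟩ := Set.ne_univ_iff_exists_notMem S |>.1 hS
      have hncard : ∀ v : V, v ∉ S → ((insert v S)ᶜ : Set V).ncard ≤ n := by
        intro v hv
        have hvc : v ∈ Sᶜ := hv
        have h1 : ((insert v S)ᶜ : Set V) = Sᶜ \ {v} := by
          ext z; simp [Set.mem_compl_iff, and_comm]
        rw [h1, Set.ncard_diff_singleton_of_mem hvc]
        have : 0 < Sᶜ.ncard := (Set.ncard_pos (Set.toFinite _)).2 ⟨v, hvc⟩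
        omega
      by_cases hA : ∃ v, v ∉ S ∧ ∃ s, s ∈ S ∧ G.Adj v s
      case pos =>
        obtain ⟨v, hv, s, hsS, hvs⟩ := hA
        -- choose a color for v
        have hNcS : ∀ x ∈ Finset.univ.filter (fun x => x ∈ S ∧ G.Adj v x),
            x ∈ S ∧ G.Adj v x := by
          intro x hx; simpa using hx
        set Nc : Finset V := Finset.univ.filter (fun x => x ∈ S ∧ G.Adj v x) with hNc
        have hcliq : G.IsClique ((insert v Nc : Finset V) : Set V) := by
          intro a ha b hb hab
          simp only [Finset.coe_insert, Set.mem_insert_iff, Finset.mem_coe] at ha hb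
          rcases ha with rfl | ha
          · rcases hb with rfl | hb
            · exact absurd rfl hab
            · exact (hNcS b hb).2
          · rcases hb with rfl | hb
            · exact (hNcS a ha).2.symm
            · exact hinv1 v hv a (hNcS a ha).1 b (hNcS b hb).1
                (hNcS a ha).2 (hNcS b hb).2 hab
        have hNccard : Nc.card ≤ k := by
          have h1 := hclq _ hcliq
          have h2 : v ∉ Nc := fun h => (G.loopless.irrefl v (hNcS v h).2).elim
          rw [Finset.card_insert_of_notMem h2] at h1
          omega
        have hj : ∃ j ∈ Finset.Icc 1 (k+1), j ∉ Nc.image c := by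
          by_contra h
          push_neg at h
          have hsub : Finset.Icc 1 (k+1) ⊆ Nc.image c := fun j hj => h j hj
          have := Finset.card_le_card hsub
          have h2 := le_trans (Finset.card_image_le (s := Nc) (f := c)) hNccard
          rw [Nat.card_Icc] at this
          omega
        obtain ⟨j, hjIcc, hjT⟩ := hj
        have hc'S : ∀ x ∈ S, Function.update c v j x = c x := by
          intro x hx
          refine Function.update_of_ne ?_ _ _
          rintro rfl; exact hv hx
        have hc'v : Function.update c v j v = j := by simp
        have hgetwalk : ∀ y ∈ S, G.Reachable v y →
            ∃ p : G.Walk v y, ∀ z ∈ p.support, z ∈ insert v S := by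
          intro y hy hr
          obtain ⟨p, hp⟩ := hinv2 s hsS y hy ((hvs.symm.reachable).trans hr)
          refine ⟨Walk.cons hvs p, ?_⟩
          intro z hz
          rw [Walk.support_cons, List.mem_cons] at hz
          rcases hz with rfl | hz
          · exact Set.mem_insert _ _
          · exact Set.mem_insert_of_mem _ (hp z hz)
        have hadjS : ∀ y ∈ S, ∀ w, w ∉ insert v S → G.Adj w v → G.Adj w y → G.Adj v y := by
          intro y hy w hw hwv hwy
          have hr : G.Reachable v y := (hwv.symm.reachable).trans hwy.reachable
          obtain ⟨p, hp⟩ := hgetwalk y hy hr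
          have hvy : v ≠ y := by rintro rfl; exact hv hy
          refine tri hbg hwv hwy hvy p ?_
          intro hwp
          exact hw (hp w hwp)
        refine (ih (insert v S) (Function.update c v j) (hncard v hv) ?_ ?_ ?_ ?_).imp ?_
        · -- colors
          intro x hx
          rcases Set.mem_insert_iff.1 hx with hxv | hx'
          · subst hxv; rw [hc'v]; simpa using hjIcc
          · rw [hc'S x hx']; exact hcol x hx'
        · -- proper
          intro x hx y hy hxy
          rcases Set.mem_insert_iff.1 hx with hxv | hx'
          · subst hxv
            rcases Set.mem_insert_iff.1 hy with hyv | hy'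
            · exact absurd (hyv ▸ hxy) (G.loopless.irrefl _)
            · rw [hc'v, hc'S y hy']
              intro h
              exact hjT (Finset.mem_image.2 ⟨y, by simp [hNc, hy', hxy], h.symm⟩)
          · rcases Set.mem_insert_iff.1 hy with hyv | hy'
            · subst hyv
              rw [hc'v, hc'S x hx']
              intro h
              exact hjT (Finset.mem_image.2 ⟨x, by simp [hNc, hx', hxy.symm], h⟩)
            · rw [hc'S x hx', hc'S y hy']
              exact hprop x hx' y hy' hxy
        · -- inv1
          intro w hw x hx y hy hwx hwy hxy
          have hwS : w ∉ S := fun h => hw (Set.mem_insert_of_mem _ h)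
          rcases Set.mem_insert_iff.1 hx with hxv | hx'
          · subst hxv
            rcases Set.mem_insert_iff.1 hy with hyv | hy'
            · exact absurd hyv.symm hxy
            · exact hadjS y hy' w hw hwx hwy
          · rcases Set.mem_insert_iff.1 hy with hyv | hy'
            · subst hyv
              exact (hadjS x hx' w hw hwy hwx).symm
            · exact hinv1 w hwS x hx' y hy' hwx hwy hxy
        · -- inv2
          intro x hx y hy hr
          rcases Set.mem_insert_iff.1 hx with hxv | hx'
          · subst hxv
            rcases Set.mem_insert_iff.1 hy with hyv | hy'
            · subst hyv
              exact ⟨Walk.nil, by simp [Set.mem_insert_iff]⟩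
            · exact hgetwalk y hy' hr
          · rcases Set.mem_insert_iff.1 hy with hyv | hy'
            · subst hyv
              obtain ⟨p, hp⟩ := hgetwalk x hx' hr.symm
              refine ⟨p.reverse, ?_⟩
              intro z hz
              rw [Walk.support_reverse, List.mem_reverse] at hz
              exact hp z hz
            · obtain ⟨p, hp⟩ := hinv2 x hx' y hy' hr
              exact ⟨p, fun z hz => Set.mem_insert_of_mem _ (hp z hz)⟩
        · -- transfer conclusion
          rintro c'' ⟨he, hcols, hpr⟩
          exact ⟨fun x hx => by rw [he x (Set.mem_insert_of_mem _ hx), hc'S x hx],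
            hcols, hpr⟩
      case neg =>
        -- no vertex outside S is adjacent to S
        have hnoadj : ∀ w, w ∉ S → ∀ y ∈ S, ¬ G.Adj w y := by
          intro w hw y hy hwy
          exact hA ⟨w, hw, y, hy, hwy⟩
        have hc'S : ∀ x ∈ S, Function.update c v₀ 1 x = c x := by
          intro x hx
          refine Function.update_of_ne ?_ _ _
          rintro rfl; exact hv₀ hx
        have hc'v : Function.update c v₀ 1 v₀ = 1 := by simp
        refine (ih (insert v₀ S) (Function.update c v₀ 1) (hncard v₀ hv₀) ?_ ?_ ?_ ?_).imp ?_
        · intro x hx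
          rcases Set.mem_insert_iff.1 hx with hxv | hx'
          · subst hxv; rw [hc'v]; simp
          · rw [hc'S x hx']; exact hcol x hx'
        · intro x hx y hy hxy
          rcases Set.mem_insert_iff.1 hx with hxv | hx'
          · subst hxv
            rcases Set.mem_insert_iff.1 hy with hyv | hy'
            · exact absurd (hyv ▸ hxy) (G.loopless.irrefl _)
            · exact absurd hxy (hnoadj x hv₀ y hy')
          · rcases Set.mem_insert_iff.1 hy with hyv | hy'
            · subst hyv
              exact absurd hxy.symm (hnoadj y hv₀ x hx')
            · rw [hc'S x hx', hc'S y hy']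
              exact hprop x hx' y hy' hxy
        · intro w hw x hx y hy hwx hwy hxy
          have hwS : w ∉ S := fun h => hw (Set.mem_insert_of_mem _ h)
          rcases Set.mem_insert_iff.1 hx with hxv | hx'
          · subst hxv
            rcases Set.mem_insert_iff.1 hy with hyv | hy'
            · exact absurd hyv.symm hxy
            · exact absurd hwy (hnoadj w hwS y hy')
          · rcases Set.mem_insert_iff.1 hy with hyv | hy'
            · exact absurd hwx (hnoadj w hwS x hx')
            · exact hinv1 w hwS x hx' y hy' hwx hwy hxy
        · intro x hx y hy hr
          rcases Set.mem_insert_iff.1 hx with hxv | hx'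
          · subst hxv
            rcases Set.mem_insert_iff.1 hy with hyv | hy'
            · subst hyv
              exact ⟨Walk.nil, by simp [Set.mem_insert_iff]⟩
            · obtain ⟨p⟩ := hr
              obtain ⟨a, b, ha, hb, hab⟩ := exists_boundary p hv₀ hy'
              exact absurd hab (hnoadj a ha b hb)
          · rcases Set.mem_insert_iff.1 hy with hyv | hy'
            · subst hyv
              obtain ⟨p⟩ := hr.symm
              obtain ⟨a, b, ha, hb, hab⟩ := exists_boundary p hv₀ hx'
              exact absurd hab (hnoadj a ha b hb)
            · obtain ⟨p, hp⟩ := hinv2 x hx' y hy' hr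
              exact ⟨p, fun z hz => Set.mem_insert_of_mem _ (hp z hz)⟩
        · rintro c'' ⟨he, hcols, hpr⟩
          exact ⟨fun x hx => by rw [he x (Set.mem_insert_of_mem _ hx), hc'S x hx],
            hcols, hpr⟩

/-- An injection from the finset `D` into the finset `T` of naturals (valid
whenever `D.card ≤ T.card`). -/
noncomputable def pickInj {α : Type*} [DecidableEq α] (D : Finset α) (T : Finset ℕ) (x : α) : ℕ :=
  (T.sort (· ≤ ·)).getD (D.toList.idxOf x) 0

lemma pickInj_mem {α : Type*} [DecidableEq α] {D : Finset α} {T : Finset ℕ}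
    (h : D.card ≤ T.card) {x : α} (hx : x ∈ D) : pickInj D T x ∈ T := by
  have hidx : D.toList.idxOf x < D.toList.length :=
    List.idxOf_lt_length_iff.2 (Finset.mem_toList.2 hx)
  have hlen : D.toList.idxOf x < (T.sort (· ≤ ·)).length := by
    rw [Finset.length_sort]
    calc D.toList.idxOf x < D.toList.length := hidx
    _ = D.card := Finset.length_toList _
    _ ≤ T.card := h
  rw [pickInj, List.getD_eq_getElem _ _ hlen]
  exact (Finset.mem_sort _).1 (List.getElem_mem hlen)

lemma pickInj_inj {α : Type*} [DecidableEq α] {D : Finset α} {T : Finset ℕ}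
    (h : D.card ≤ T.card) {x y : α} (hx : x ∈ D) (hy : y ∈ D) (hxy : x ≠ y) :
    pickInj D T x ≠ pickInj D T y := by
  have hix : D.toList.idxOf x < D.toList.length :=
    List.idxOf_lt_length_iff.2 (Finset.mem_toList.2 hx)
  have hiy : D.toList.idxOf y < D.toList.length :=
    List.idxOf_lt_length_iff.2 (Finset.mem_toList.2 hy)
  have hcards : D.toList.length ≤ (T.sort (· ≤ ·)).length := by
    rw [Finset.length_sort, Finset.length_toList]; exact h
  have hlx := lt_of_lt_of_le hix hcards
  have hly := lt_of_lt_of_le hiy hcards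
  rw [pickInj, pickInj, List.getD_eq_getElem _ _ hlx, List.getD_eq_getElem _ _ hly]
  intro he
  have hidxeq : D.toList.idxOf x = D.toList.idxOf y :=
    ((Finset.sort_nodup _ _).getElem_inj_iff).1 he
  apply hxy
  have h1 := List.getElem_idxOf hix
  have h2 := List.getElem_idxOf hiy
  rw [← h1, ← h2]
  congr 1


lemma main_construction [Fintype V] {G : SimpleGraph V} (hbg : IsBlockGraph G)
    (k : ℕ) (hk : 1 ≤ k) (u : V) (s : Finset V)
    (hsN : (↑s : Set V) ⊆ G.neighborSet u) (hcard : s.card = k)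
    (hdeg : ∀ v ∈ s, k ≤ (G.neighborSet v).ncard)
    (hclq : ∀ t : Finset V, G.IsClique (t : Set V) → t.card ≤ k + 1) :
    ∃ c : V → ℕ, IsBStarColoring G (k+1) c := by
  classical
  set A : Finset V := Set.toFinset (G.neighborSet u) with hA
  have hmemA : ∀ x, x ∈ A ↔ G.Adj u x := by intro x; simp [hA]
  have hsA : s ⊆ A := fun x hx => (hmemA x).2 (hsN hx)
  have huA : u ∉ A := fun h => G.loopless.irrefl u ((hmemA u).1 h)
  -- classes of the neighborhood of u
  set Cl : V → Finset V := fun x => insert x (A.filter (fun y => G.Adj x y)) with hCl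
  have hmemCl : ∀ x, x ∈ Cl x := fun x => Finset.mem_insert_self _ _
  have hCl_spec : ∀ x, ∀ y ∈ Cl x, y = x ∨ (y ∈ A ∧ G.Adj x y) := by
    intro x y hy
    rcases Finset.mem_insert.1 hy with h | h
    · exact Or.inl h
    · exact Or.inr (by simpa using (Finset.mem_filter.1 h))
  have hCl_sub : ∀ x ∈ A, Cl x ⊆ A := by
    intro x hx y hy
    rcases hCl_spec x y hy with rfl | h
    · exact hx
    · exact h.1
  have hCl_adj : ∀ x, ∀ y ∈ Cl x, y ≠ x → G.Adj x y := by
    intro x y hy hne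
    rcases hCl_spec x y hy with h | h
    · exact absurd h hne
    · exact h.2
  have hCl_of_adj : ∀ x, ∀ y ∈ A, G.Adj x y → y ∈ Cl x := by
    intro x y hyA hadj
    exact Finset.mem_insert_of_mem (Finset.mem_filter.2 ⟨hyA, hadj⟩)
  have hCl_clique : ∀ x ∈ A, G.IsClique ((Cl x : Finset V) : Set V) := by
    intro x hx a ha b hb hab
    simp only [Finset.mem_coe] at ha hb
    rcases hCl_spec x a ha with h | ha'
    · rw [h]
      exact hCl_adj x b hb (fun hbx => hab (h.trans hbx.symm))
    · rcases hCl_spec x b hb with h | hb'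
      · rw [h]
        exact (hCl_adj x a ha (fun hax => hab (hax.trans h.symm))).symm
      · refine fact1 hbg ((hmemA a).1 ha'.1) ((hmemA b).1 hb'.1) ha'.2 hb'.2 ?_ hab
        intro h; rw [h] at hx; exact huA hx
  have hCl_eq : ∀ x ∈ A, ∀ y ∈ Cl x, Cl y = Cl x := by
    intro x hx y hy
    rcases hCl_spec x y hy with h | ⟨hyA, hxy⟩
    · rw [h]
    apply Finset.ext
    intro z
    constructor
    · intro hz
      rcases hCl_spec y z hz with h | ⟨hzA, hyz⟩
      · rw [h]; exact hy
      by_cases hzx : z = x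
      · exact hzx ▸ hmemCl x
      refine hCl_of_adj x z hzA ?_
      exact fact1 hbg ((hmemA x).1 hx) ((hmemA z).1 hzA) hxy.symm hyz
        (fun h => huA (h ▸ hyA)) (Ne.symm hzx)
    · intro hz
      rcases hCl_spec x z hz with h | ⟨hzA, hxz⟩
      · rw [h]; exact hCl_of_adj y x hx hxy.symm
      by_cases hzy : z = y
      · exact hzy ▸ hmemCl y
      refine hCl_of_adj y z hzA ?_
      exact fact1 hbg ((hmemA y).1 hyA) ((hmemA z).1 hzA) hxy hxz
        (fun h => huA (h ▸ hx)) (Ne.symm hzy)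
  have hCl_card : ∀ x ∈ A, (Cl x).card ≤ k := by
    intro x hx
    have hclique : G.IsClique ((insert u (Cl x) : Finset V) : Set V) := by
      intro a ha b hb hab
      simp only [Finset.coe_insert, Set.mem_insert_iff, Finset.mem_coe] at ha hb
      rcases ha with rfl | ha
      · rcases hb with rfl | hb
        · exact absurd rfl hab
        · exact (hmemA b).1 (hCl_sub x hx hb)
      · rcases hb with rfl | hb
        · exact ((hmemA a).1 (hCl_sub x hx ha)).symm
        · exact hCl_clique x hx ha hb hab
    have h1 := hclq _ hclique
    have h2 : u ∉ Cl x := fun h => huA (hCl_sub x hx h)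
    rw [Finset.card_insert_of_notMem h2] at h1
    omega
  -- the coloring of the chosen vertices
  set σ : {x // x ∈ s} ≃ Fin k := s.equivFin.trans (finCongr hcard) with hσ
  set colS : V → ℕ := fun x => if hx : x ∈ s then ((σ ⟨x, hx⟩ : Fin k) : ℕ) + 1 else 0
    with hcolS
  have hcolS_mem : ∀ x ∈ s, colS x ∈ Finset.Icc 1 k := by
    intro x hx
    have : ((σ ⟨x, hx⟩ : Fin k) : ℕ) < k := (σ ⟨x, hx⟩).2
    simp only [hcolS, dif_pos hx, Finset.mem_Icc]
    omega
  have hcolS_inj : ∀ x ∈ s, ∀ y ∈ s, x ≠ y → colS x ≠ colS y := by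
    intro x hx y hy hne
    simp only [hcolS, dif_pos hx, dif_pos hy]
    intro h
    have h2 : σ ⟨x, hx⟩ = σ ⟨y, hy⟩ := Fin.ext (by omega)
    have := σ.injective h2
    exact hne (congrArg Subtype.val this)
  have hcolS_surj : ∀ j ∈ Finset.Icc 1 k, ∃ x ∈ s, colS x = j := by
    intro j hj
    rw [Finset.mem_Icc] at hj
    have hlt : j - 1 < k := by omega
    refine ⟨(σ.symm ⟨j - 1, hlt⟩ : {x // x ∈ s}).1, (σ.symm ⟨j - 1, hlt⟩).2, ?_⟩
    simp only [hcolS, dif_pos (σ.symm ⟨j - 1, hlt⟩).2]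
    have h2 : (⟨(σ.symm ⟨j - 1, hlt⟩ : {x // x ∈ s}).1, (σ.symm ⟨j - 1, hlt⟩).2⟩ :
        {x // x ∈ s}) = σ.symm ⟨j - 1, hlt⟩ := rfl
    rw [h2, Equiv.apply_symm_apply]
    simp only [Fin.val_mk]
    omega
  -- coloring of all of A
  set cA : V → ℕ := fun x => if x ∈ s then colS x
    else pickInj ((Cl x) \ s) ((Finset.Icc 1 k) \ ((Cl x ∩ s).image colS)) x with hcA
  have hTIc_card : ∀ x, ((Finset.Icc 1 k) \ ((Cl x ∩ s).image colS)).card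
      = k - (Cl x ∩ s).card := by
    intro x
    have hsub : (Cl x ∩ s).image colS ⊆ Finset.Icc 1 k := by
      intro j hj
      obtain ⟨y, hy, rfl⟩ := Finset.mem_image.1 hj
      exact hcolS_mem y (Finset.mem_inter.1 hy).2
    rw [Finset.card_sdiff_of_subset hsub, Nat.card_Icc,
      Finset.card_image_of_injOn (fun a ha b hb hne => by
        by_contra hne'
        exact hcolS_inj a (Finset.mem_inter.1 ha).2 b (Finset.mem_inter.1 hb).2 hne' hne)]
    omega
  have hDT : ∀ x ∈ A, ((Cl x) \ s).card
      ≤ ((Finset.Icc 1 k) \ ((Cl x ∩ s).image colS)).card := by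
    intro x hx
    rw [hTIc_card]
    have h1 := Finset.card_sdiff_add_card_inter (Cl x) s
    have h2 := hCl_card x hx
    omega
  have hcA_s : ∀ x ∈ s, cA x = colS x := fun x hx => if_pos hx
  have hcA_mem : ∀ x ∈ A, cA x ∈ Finset.Icc 1 k := by
    intro x hx
    by_cases hxs : x ∈ s
    · rw [hcA_s x hxs]; exact hcolS_mem x hxs
    · have : cA x = pickInj ((Cl x) \ s) ((Finset.Icc 1 k) \ ((Cl x ∩ s).image colS)) x :=
        if_neg hxs
      rw [this]
      have hm := pickInj_mem (hDT x hx) (Finset.mem_sdiff.2 ⟨hmemCl x, hxs⟩)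
      exact (Finset.mem_sdiff.1 hm).1
  have hcA_notim : ∀ x ∈ A, x ∉ s → cA x ∉ (Cl x ∩ s).image colS := by
    intro x hx hxs
    have : cA x = pickInj ((Cl x) \ s) ((Finset.Icc 1 k) \ ((Cl x ∩ s).image colS)) x :=
      if_neg hxs
    rw [this]
    have hm := pickInj_mem (hDT x hx) (Finset.mem_sdiff.2 ⟨hmemCl x, hxs⟩)
    exact (Finset.mem_sdiff.1 hm).2
  have hcA_inj : ∀ x ∈ A, ∀ a ∈ Cl x, ∀ b ∈ Cl x, a ≠ b → cA a ≠ cA b := by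
    intro x hx a ha b hb hab
    have haA : a ∈ A := hCl_sub x hx ha
    have hbA : b ∈ A := hCl_sub x hx hb
    have hCla : Cl a = Cl x := hCl_eq x hx a ha
    have hClb : Cl b = Cl x := hCl_eq x hx b hb
    by_cases has : a ∈ s
    · by_cases hbs : b ∈ s
      · rw [hcA_s a has, hcA_s b hbs]
        exact hcolS_inj a has b hbs hab
      · rw [hcA_s a has]
        intro h
        refine hcA_notim b hbA hbs ?_
        rw [hClb, ← h]
        exact Finset.mem_image.2 ⟨a, Finset.mem_inter.2 ⟨hCla ▸ hmemCl a, has⟩, rfl⟩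
    · by_cases hbs : b ∈ s
      · rw [hcA_s b hbs]
        intro h
        refine hcA_notim a haA has ?_
        rw [hCla, h]
        exact Finset.mem_image.2 ⟨b, Finset.mem_inter.2 ⟨hClb ▸ hmemCl b, hbs⟩, rfl⟩
      · have e1 : cA a = pickInj ((Cl x) \ s) ((Finset.Icc 1 k) \ ((Cl x ∩ s).image colS)) a := by
          rw [show cA a = pickInj ((Cl a) \ s) ((Finset.Icc 1 k) \ ((Cl a ∩ s).image colS)) a
            from if_neg has, hCla]
        have e2 : cA b = pickInj ((Cl x) \ s) ((Finset.Icc 1 k) \ ((Cl x ∩ s).image colS)) b := by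
          rw [show cA b = pickInj ((Cl b) \ s) ((Finset.Icc 1 k) \ ((Cl b ∩ s).image colS)) b
            from if_neg hbs, hClb]
        rw [e1, e2]
        exact pickInj_inj (hDT x hx) (Finset.mem_sdiff.2 ⟨ha, has⟩)
          (Finset.mem_sdiff.2 ⟨hb, hbs⟩) hab
  -- missing colors at each chosen vertex
  set R : V → Finset ℕ := fun x => (Finset.Icc 1 k) \ ((Cl x).image cA) with hR
  have hR_card : ∀ x ∈ A, (R x).card = k - (Cl x).card := by
    intro x hx
    have hsub : (Cl x).image cA ⊆ Finset.Icc 1 k := by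
      intro j hj
      obtain ⟨y, hy, rfl⟩ := Finset.mem_image.1 hj
      exact hcA_mem y (hCl_sub x hx hy)
    rw [hR]
    rw [Finset.card_sdiff_of_subset hsub, Nat.card_Icc,
      Finset.card_image_of_injOn (fun a ha b hb hne => by
        by_contra hne'
        exact hcA_inj x hx a ha b hb hne' hne)]
    omega
  -- outside neighborhoods
  set Nb : V → Finset V := fun x => Set.toFinset (G.neighborSet x) with hNb
  have hmemNb : ∀ x z, z ∈ Nb x ↔ G.Adj x z := by intro x z; simp [hNb]
  have hNbcard : ∀ x ∈ s, k ≤ (Nb x).card := by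
    intro x hx
    have := hdeg x hx
    rwa [Set.ncard_eq_toFinset_card'] at this
  set OutN : V → Finset V := fun x => (Nb x) \ (insert u A) with hOutN
  have hOut_card : ∀ x ∈ s, k - (Cl x).card ≤ (OutN x).card := by
    intro x hx
    have hxA : x ∈ A := hsA hx
    have hinter : (Nb x) ∩ (insert u A) = insert u ((Cl x).erase x) := by
      apply Finset.ext
      intro z
      simp only [Finset.mem_inter, Finset.mem_insert, Finset.mem_erase]
      constructor
      · rintro ⟨hz1, hz2⟩
        rcases hz2 with rfl | hz2
        · exact Or.inl rfl
        · refine Or.inr ⟨?_, hCl_of_adj x z hz2 ((hmemNb x z).1 hz1)⟩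
          intro h; rw [h] at hz1; exact G.loopless.irrefl x ((hmemNb x x).1 hz1)
      · rintro (hzu | ⟨hz1, hz2⟩)
        · refine ⟨?_, Or.inl hzu⟩
          rw [hzu]
          exact (hmemNb x u).2 ((hmemA x).1 hxA).symm
        · exact ⟨(hmemNb x z).2 (hCl_adj x z hz2 hz1), Or.inr (hCl_sub x hxA hz2)⟩
    have h1 := Finset.card_sdiff_add_card_inter (Nb x) (insert u A)
    have h0 : OutN x = Nb x \ insert u A := by rw [hOutN]
    rw [hinter, ← h0] at h1
    have hucl : u ∉ (Cl x).erase x := fun h => huA (hCl_sub x hxA (Finset.mem_of_mem_erase h))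
    rw [Finset.card_insert_of_notMem hucl, Finset.card_erase_of_mem (hmemCl x)] at h1
    have h2 := hNbcard x hx
    have h3 : 1 ≤ (Cl x).card := Finset.card_pos.2 ⟨x, hmemCl x⟩
    have := hCl_card x hxA
    omega
  -- choose the W sets
  have hWex : ∀ x, x ∈ s → ∃ t ⊆ OutN x, t.card = (R x).card := by
    intro x hx
    apply Finset.exists_subset_card_eq
    rw [hR_card x (hsA hx)]
    exact hOut_card x hx
  set W : V → Finset V := fun x => if hx : x ∈ s then (hWex x hx).choose else ∅ with hW
  have hWsub : ∀ x ∈ s, W x ⊆ OutN x := by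
    intro x hx
    rw [hW]; simp only [dif_pos hx]
    exact (hWex x hx).choose_spec.1
  have hWcard : ∀ x ∈ s, (W x).card = (R x).card := by
    intro x hx
    rw [hW]; simp only [dif_pos hx]
    exact (hWex x hx).choose_spec.2
  have hWfacts : ∀ x ∈ s, ∀ w ∈ W x, G.Adj x w ∧ w ≠ u ∧ w ∉ A ∧ ¬ G.Adj u w := by
    intro x hx w hw
    have h1 := Finset.mem_sdiff.1 (hWsub x hx hw)
    have h2 : w ∉ insert u A := h1.2
    rw [Finset.mem_insert] at h2
    push_neg at h2
    exact ⟨(hmemNb x w).1 h1.1, h2.1, h2.2, fun h => h2.2 ((hmemA w).2 h)⟩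
  have hWadjA : ∀ x ∈ s, ∀ w ∈ W x, ∀ b ∈ A, b ≠ x → ¬ G.Adj w b := by
    intro x hx w hw b hb hbx hadj
    obtain ⟨hxw, hwu, hwA, hnuw⟩ := hWfacts x hx w hw
    exact fact2 hbg ((hmemA b).1 hb) ((hmemA x).1 (hsA hx)) hadj hxw.symm hbx hwu hnuw
  have hWdisj : ∀ x ∈ s, ∀ x' ∈ s, x ≠ x' → ∀ w ∈ W x, w ∉ W x' := by
    intro x hx x' hx' hne w hw hw'
    exact hWadjA x hx w hw x' (hsA hx') (Ne.symm hne) (hWfacts x' hx' w hw').1.symm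
  have hWW : ∀ x ∈ s, ∀ x' ∈ s, x ≠ x' → ∀ a ∈ W x, ∀ b ∈ W x', ¬ G.Adj a b := by
    intro x hx x' hx' hne a ha b hb hadj
    obtain ⟨hxa, hau, haA, hnua⟩ := hWfacts x hx a ha
    obtain ⟨hx'b, hbu, hbA, hnub⟩ := hWfacts x' hx' b hb
    have hbxne : b ≠ x := fun h => hbA (h ▸ hsA hx)
    have hbxadj : G.Adj b x := by
      refine tri hbg hadj hxa.symm hbxne
        (Walk.cons hx'b.symm (Walk.cons ((hmemA x').1 (hsA hx')).symm
          (Walk.cons ((hmemA x).1 (hsA hx)) Walk.nil))) ?_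
      simp only [Walk.support_cons, Walk.support_nil, List.mem_cons, List.mem_singleton,
        List.not_mem_nil, or_false]
      push_neg
      refine ⟨hadj.ne, ?_, ?_, ?_⟩
      · intro h; rw [h] at haA; exact haA (hsA hx')
      · intro h; rw [h] at hau; exact hau rfl
      · intro h; rw [h] at haA; exact haA (hsA hx)
    exact fact2 hbg ((hmemA x).1 (hsA hx)) ((hmemA x').1 (hsA hx')) hbxadj hx'b.symm
      hne hbu hnub
  -- surjectivity of the W colorings
  have hWimage : ∀ x ∈ s, (W x).image (pickInj (W x) (R x)) = R x := by
    intro x hx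
    have hle : (W x).card ≤ (R x).card := (hWcard x hx).le
    refine Finset.eq_of_subset_of_card_le ?_ ?_
    · intro j hj
      obtain ⟨w, hw, rfl⟩ := Finset.mem_image.1 hj
      exact pickInj_mem hle hw
    · rw [Finset.card_image_of_injOn (fun a ha b hb hne => by
        by_contra hne'
        exact pickInj_inj hle ha hb hne' hne)]
      exact (hWcard x hx).ge
  -- the global initial coloring
  set c₀ : V → ℕ := fun v => if v = u then k + 1 else if v ∈ A then cA v
    else if h : ∃ x, x ∈ s ∧ v ∈ W x then pickInj (W h.choose) (R h.choose) v else 0 with hc₀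
  have hc₀u : c₀ u = k + 1 := by rw [hc₀]; simp
  have hc₀A : ∀ x ∈ A, c₀ x = cA x := by
    intro x hx
    have hxu : x ≠ u := fun h => huA (h ▸ hx)
    rw [hc₀]
    simp only [if_neg hxu, if_pos hx]
  have hc₀W : ∀ x ∈ s, ∀ w ∈ W x, c₀ w = pickInj (W x) (R x) w := by
    intro x hx w hw
    obtain ⟨hxw, hwu, hwA, hnuw⟩ := hWfacts x hx w hw
    have hex : ∃ x, x ∈ s ∧ w ∈ W x := ⟨x, hx, hw⟩
    have h1 : c₀ w = pickInj (W hex.choose) (R hex.choose) w := by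
      rw [hc₀]
      simp only [if_neg hwu, if_neg hwA, dif_pos hex]
    have h2 : hex.choose = x := by
      by_contra hne
      exact hWdisj hex.choose hex.choose_spec.1 x hx hne w hex.choose_spec.2 hw
    rw [h1, h2]
  -- the initial colored region
  set S₀f : Finset V := insert u (A ∪ s.biUnion W) with hS₀f
  set S₀ : Set V := (S₀f : Set V) with hS₀
  have hS₀mem : ∀ v, v ∈ S₀ ↔ v = u ∨ v ∈ A ∨ ∃ x ∈ s, v ∈ W x := by
    intro v
    rw [hS₀, hS₀f]
    simp [Finset.mem_insert, Finset.mem_union, Finset.mem_biUnion]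
  have hS₀u : u ∈ S₀ := (hS₀mem u).2 (Or.inl rfl)
  have hS₀A : ∀ x ∈ A, x ∈ S₀ := fun x hx => (hS₀mem x).2 (Or.inr (Or.inl hx))
  have hS₀W : ∀ x ∈ s, ∀ w ∈ W x, w ∈ S₀ :=
    fun x hx w hw => (hS₀mem w).2 (Or.inr (Or.inr ⟨x, hx, hw⟩))
  -- membership facts for outsiders
  have hout : ∀ w, w ∉ S₀ → w ≠ u ∧ w ∉ A ∧ ¬ G.Adj u w ∧ ∀ x ∈ s, w ∉ W x := by
    intro w hw
    have h1 : w ≠ u := fun h => hw (h ▸ hS₀u)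
    have h2 : w ∉ A := fun h => hw (hS₀A w h)
    exact ⟨h1, h2, fun h => h2 ((hmemA w).2 h), fun x hx hwx => hw (hS₀W x hx w hwx)⟩
  -- colors used initially lie in [1, k+1]
  have hcol₀ : ∀ v ∈ S₀, c₀ v ∈ Set.Icc 1 (k+1) := by
    intro v hv
    rcases (hS₀mem v).1 hv with rfl | hvA | ⟨x, hx, hvW⟩
    · rw [hc₀u]; constructor <;> omega
    · rw [hc₀A v hvA]
      have := Finset.mem_Icc.1 (hcA_mem v hvA)
      constructor <;> omega
    · rw [hc₀W x hx v hvW]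
      have hm := pickInj_mem (hWcard x hx).le hvW
      have hm2 : pickInj (W x) (R x) v ∈ Finset.Icc 1 k := by
        rw [hR] at hm
        exact (Finset.mem_sdiff.1 hm).1
      have := Finset.mem_Icc.1 hm2
      constructor <;> omega
  -- W vertices adjacent only to their chosen vertex within A
  have hAWadj : ∀ t ∈ s, ∀ y ∈ W t, ∀ x ∈ A, G.Adj x y → x = t := by
    intro t ht y hy x hx hadj
    by_contra hne
    exact hWadjA t ht y hy x hx hne hadj.symm
  -- initial proper coloring
  have hprop₀ : ∀ x ∈ S₀, ∀ y ∈ S₀, G.Adj x y → c₀ x ≠ c₀ y := by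
    have key : ∀ x ∈ S₀, ∀ y ∈ S₀, G.Adj x y → x ≠ u → c₀ x ≠ c₀ y := by
      intro x hxS y hyS hadj hxu
      rcases (hS₀mem x).1 hxS with h | hxA | ⟨t, ht, hxW⟩
      · exact absurd h hxu
      · -- x ∈ A
        rcases (hS₀mem y).1 hyS with rfl | hyA | ⟨t, ht, hyW⟩
        · rw [hc₀u, hc₀A x hxA]
          have := Finset.mem_Icc.1 (hcA_mem x hxA)
          omega
        · rw [hc₀A x hxA, hc₀A y hyA]
          exact hcA_inj x hxA x (hmemCl x) y (hCl_of_adj x y hyA hadj) hadj.ne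
        · have hxt : x = t := hAWadj t ht y hyW x hxA hadj
          subst hxt
          rw [hc₀A x hxA, hc₀W x ht y hyW]
          have hm := pickInj_mem (hWcard x ht).le hyW
          rw [hR] at hm
          have hnot := (Finset.mem_sdiff.1 hm).2
          intro h
          exact hnot (Finset.mem_image.2 ⟨x, hmemCl x, h⟩)
      · -- x ∈ W t
        rcases (hS₀mem y).1 hyS with rfl | hyA | ⟨t', ht', hyW⟩
        · exact absurd hadj.symm (hWfacts t ht x hxW).2.2.2
        · have hyt : y = t := hAWadj t ht x hxW y hyA hadj.symm
          subst hyt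
          rw [hc₀A y hyA, hc₀W y ht x hxW]
          have hm := pickInj_mem (hWcard y ht).le hxW
          rw [hR] at hm
          have hnot := (Finset.mem_sdiff.1 hm).2
          intro h
          exact hnot (Finset.mem_image.2 ⟨y, hmemCl y, h.symm⟩)
        · by_cases htt : t = t'
          · subst htt
            rw [hc₀W t ht x hxW, hc₀W t ht y hyW]
            exact pickInj_inj (hWcard t ht).le hxW hyW hadj.ne
          · exact absurd hadj (hWW t ht t' ht' htt x hxW y hyW)
    intro x hxS y hyS hadj
    by_cases hxu : x = u
    · subst hxu
      exact (key y hyS x hxS hadj.symm hadj.ne').symm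
    · exact key x hxS y hyS hadj hxu
  -- INV1 for the initial region
  have hinv1 : ∀ w, w ∉ S₀ → ∀ x ∈ S₀, ∀ y ∈ S₀, G.Adj w x → G.Adj w y → x ≠ y →
      G.Adj x y := by
    have key : ∀ w, w ∉ S₀ → ∀ x ∈ S₀, ∀ y ∈ S₀, G.Adj w x → G.Adj w y → x ≠ y →
        x ≠ u → y ≠ u → (∃ a ∈ A, x = a) → G.Adj x y := by
      intro w hwS x hxS y hyS hwx hwy hxy hxu hyu ⟨a, haA, hxa⟩
      obtain ⟨hwu, hwA, hnuw, hwW⟩ := hout w hwS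
      have hxA : x ∈ A := hxa ▸ haA
      rcases (hS₀mem y).1 hyS with h | hyA | ⟨t, ht, hyW⟩
      · exact absurd h hyu
      · exact fact1 hbg ((hmemA x).1 hxA) ((hmemA y).1 hyA) hwx hwy hwu hxy
      · -- y ∈ W t
        by_cases hxt : x = t
        · rw [hxt]
          exact (hWfacts t ht y hyW).1
        · exfalso
          obtain ⟨hty, hyu', hyA, hnuy⟩ := hWfacts t ht y hyW
          have htA : t ∈ A := hsA ht
          have htw : G.Adj t w := by
            refine tri hbg hty.symm hwy.symm ?_
              (Walk.cons ((hmemA t).1 htA).symm (Walk.cons ((hmemA x).1 hxA)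
                (Walk.cons hwx.symm Walk.nil))) ?_
            · intro h; rw [h] at htA; exact hwA htA
            · simp only [Walk.support_cons, Walk.support_nil, List.mem_cons,
                List.mem_singleton, List.not_mem_nil, or_false]
              push_neg
              refine ⟨?_, ?_, ?_, ?_⟩
              · intro h; rw [h] at hyA; exact hyA htA
              · intro h; rw [h] at hyu'; exact hyu' rfl
              · intro h; rw [h] at hyA; exact hyA hxA
              · exact fun h => G.ne_of_adj hwy.symm h
          exact fact2 hbg ((hmemA x).1 hxA) ((hmemA t).1 htA) hwx htw.symm
            hxt hwu hnuw
    intro w hwS x hxS y hyS hwx hwy hxy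
    obtain ⟨hwu, hwA, hnuw, hwW⟩ := hout w hwS
    have hxu : x ≠ u := by rintro rfl; exact hnuw hwx.symm
    have hyu : y ≠ u := by rintro rfl; exact hnuw hwy.symm
    rcases (hS₀mem x).1 hxS with h | hxA | ⟨t, ht, hxW⟩
    · exact absurd h hxu
    · exact key w hwS x hxS y hyS hwx hwy hxy hxu hyu ⟨x, hxA, rfl⟩
    · rcases (hS₀mem y).1 hyS with h | hyA | ⟨t', ht', hyW⟩
      · exact absurd h hyu
      · exact (key w hwS y hyS x hxS hwy hwx (Ne.symm hxy) hyu hxu ⟨y, hyA, rfl⟩).symm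
      · by_cases htt : t = t'
        · subst htt
          exact fact1 hbg (hWfacts t ht x hxW).1 (hWfacts t ht y hyW).1 hwx hwy
            (fun h => hwA (h ▸ hsA ht)) hxy
        · -- different W sets: 5-cycle forces adjacency
          obtain ⟨htx, hxu', hxA, hnux⟩ := hWfacts t ht x hxW
          obtain ⟨ht'y, hyu', hyA, hnuy⟩ := hWfacts t' ht' y hyW
          refine tri hbg hwx hwy hxy
            (Walk.cons htx.symm (Walk.cons ((hmemA t).1 (hsA ht)).symm
              (Walk.cons ((hmemA t').1 (hsA ht')) (Walk.cons ht'y Walk.nil)))) ?_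
          simp only [Walk.support_cons, Walk.support_nil, List.mem_cons,
            List.mem_singleton, List.not_mem_nil, or_false]
          push_neg
          refine ⟨fun h => G.ne_of_adj hwx h, ?_, hwu, ?_, fun h => G.ne_of_adj hwy h⟩
          · intro h; rw [h] at hwA; exact hwA (hsA ht)
          · intro h; rw [h] at hwA; exact hwA (hsA ht')
  -- INV2: walks inside the initial region
  have htoU : ∀ x ∈ S₀, ∃ p : G.Walk x u, ∀ z ∈ p.support, z ∈ S₀ := by
    intro x hxS
    rcases (hS₀mem x).1 hxS with h | hxA | ⟨t, ht, hxW⟩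
    · subst h
      exact ⟨Walk.nil, by simp [hS₀u]⟩
    · refine ⟨Walk.cons ((hmemA x).1 hxA).symm Walk.nil, ?_⟩
      intro z hz
      simp only [Walk.support_cons, Walk.support_nil, List.mem_cons, List.mem_singleton,
        List.not_mem_nil, or_false] at hz
      rcases hz with h | h
      · rw [h]; exact hxS
      · rw [h]; exact hS₀u
    · refine ⟨Walk.cons (hWfacts t ht x hxW).1.symm
        (Walk.cons ((hmemA t).1 (hsA ht)).symm Walk.nil), ?_⟩
      intro z hz
      simp only [Walk.support_cons, Walk.support_nil, List.mem_cons, List.mem_singleton,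
        List.not_mem_nil, or_false] at hz
      rcases hz with h | h | h
      · rw [h]; exact hxS
      · rw [h]; exact hS₀A t (hsA ht)
      · rw [h]; exact hS₀u
  have hinv2 : ∀ x ∈ S₀, ∀ y ∈ S₀, G.Reachable x y →
      ∃ p : G.Walk x y, ∀ z ∈ p.support, z ∈ S₀ := by
    intro x hxS y hyS _
    obtain ⟨p, hp⟩ := htoU x hxS
    obtain ⟨q, hq⟩ := htoU y hyS
    refine ⟨p.append q.reverse, ?_⟩
    intro z hz
    rw [Walk.support_append] at hz
    rcases List.mem_append.1 hz with h | h
    · exact hp z h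
    · have := List.mem_of_mem_tail h
      rw [Walk.support_reverse, List.mem_reverse] at this
      exact hq z this
  -- the clique bound
  have hncard : S₀ᶜ.ncard ≤ Fintype.card V := by
    have := Set.ncard_le_ncard (Set.subset_univ S₀ᶜ) (Set.toFinite _)
    rwa [Set.ncard_univ, Nat.card_eq_fintype_card] at this
  obtain ⟨c', hc'ext, hc'col, hc'prop⟩ := ext_color hbg k hclq (Fintype.card V) S₀ c₀
    hncard hcol₀ hprop₀ hinv1 hinv2
  -- final verification
  have hc'u : c' u = k + 1 := by rw [hc'ext u hS₀u, hc₀u]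
  have hc's : ∀ x ∈ s, c' x = colS x := by
    intro x hx
    rw [hc'ext x (hS₀A x (hsA hx)), hc₀A x (hsA hx), hcA_s x hx]
  -- every chosen vertex is a b-vertex
  have hbvert : ∀ x ∈ s, IsBVertex G (k+1) c' x := by
    intro x hx m hm hmne
    rw [hc's x hx] at hmne
    rw [Set.mem_Icc] at hm
    have hxA : x ∈ A := hsA hx
    by_cases hmk : m = k + 1
    · exact ⟨u, ((hmemA x).1 hxA).symm, hmk ▸ hc'u⟩
    · have hmIcc : m ∈ Finset.Icc 1 k := Finset.mem_Icc.2 ⟨hm.1, by omega⟩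
      by_cases hmim : m ∈ (Cl x).image cA
      · obtain ⟨z, hz, hzm⟩ := Finset.mem_image.1 hmim
        have hzx : z ≠ x := by
          rintro rfl
          rw [hcA_s z hx] at hzm
          exact hmne hzm.symm
        refine ⟨z, hCl_adj x z hz hzx, ?_⟩
        rw [hc'ext z (hS₀A z (hCl_sub x hxA hz)), hc₀A z (hCl_sub x hxA hz), hzm]
      · have hmr : m ∈ R x := by rw [hR]; exact Finset.mem_sdiff.2 ⟨hmIcc, hmim⟩
        rw [← hWimage x hx] at hmr
        obtain ⟨z, hz, hzm⟩ := Finset.mem_image.1 hmr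
        refine ⟨z, (hWfacts x hx z hz).1, ?_⟩
        rw [hc'ext z (hS₀W x hx z hz), hc₀W x hx z hz, hzm]
  refine ⟨c', ⟨⟨fun v => hc'col v, fun a b h => hc'prop a b h, ?_⟩, u, hc'u, ?_, ?_⟩⟩
  · -- all colors used
    intro j hj
    rw [Set.mem_Icc] at hj
    by_cases hjk : j = k + 1
    · exact ⟨u, hjk ▸ hc'u⟩
    · obtain ⟨x, hx, hxj⟩ := hcolS_surj j (Finset.mem_Icc.2 ⟨hj.1, by omega⟩)
      exact ⟨x, by rw [hc's x hx, hxj]⟩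
  · -- u is a b-vertex
    intro j hj hjne
    rw [Set.mem_Icc] at hj
    rw [hc'u] at hjne
    obtain ⟨x, hx, hxj⟩ := hcolS_surj j (Finset.mem_Icc.2 ⟨hj.1, by omega⟩)
    exact ⟨x, (hmemA x).1 (hsA hx), by rw [hc's x hx, hxj]⟩
  · -- u is nice
    intro j hj hjne
    rw [Set.mem_Icc] at hj
    rw [hc'u] at hjne
    obtain ⟨x, hx, hxj⟩ := hcolS_surj j (Finset.mem_Icc.2 ⟨hj.1, by omega⟩)
    exact ⟨x, (hmemA x).1 (hsA hx), by rw [hc's x hx, hxj], hbvert x hx⟩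


/-- for every block graph `G` with at least one vertex,
`b*(G) = m*(G) + 1`. -/
theorem blockGraph_bStar_eq_mStar_add_one [Fintype V] [Nonempty V]
    (G : SimpleGraph V) (hbg : IsBlockGraph G) :
    bStar G = mStar G + 1 := by
  classical
  set M : Set ℕ := {k | ∃ (u : V) (s : Finset V), (↑s : Set V) ⊆ G.neighborSet u ∧
    s.card = k ∧ ∀ v ∈ s, k ≤ (G.neighborSet v).ncard} with hMdef
  have hM0 : 0 ∈ M := ⟨Classical.arbitrary V, ∅, by simp, by simp, by simp⟩
  have hMbdd : BddAbove M := by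
    refine ⟨Fintype.card V, ?_⟩
    rintro m ⟨u, s, _, hcard, _⟩
    rw [← hcard]
    exact Finset.card_le_univ s
  have hmStar : mStar G = sSup M := rfl
  set k := mStar G with hk
  have hkmem : k ∈ M := by rw [hmStar]; exact Nat.sSup_mem ⟨0, hM0⟩ hMbdd
  have hMle : ∀ m ∈ M, m ≤ k := fun m hm => by
    rw [hmStar]; exact le_csSup hMbdd hm
  -- the clique bound
  have hclq : ∀ t : Finset V, G.IsClique (t : Set V) → t.card ≤ k + 1 := by
    intro t ht
    rcases Nat.eq_zero_or_pos t.card with h0 | hpos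
    · omega
    obtain ⟨v, hv⟩ := Finset.card_pos.1 hpos
    have hmem : t.card - 1 ∈ M := by
      refine ⟨v, t.erase v, ?_, by rw [Finset.card_erase_of_mem hv], ?_⟩
      · intro z hz
        rw [Finset.coe_erase, Set.mem_diff] at hz
        exact (ht hv (Finset.mem_coe.1 hz.1) (fun h => hz.2 (h ▸ rfl)) : G.Adj v z)
      · intro w hw
        have hwt : w ∈ t := Finset.mem_of_mem_erase hw
        have hsub : ((t.erase w : Finset V) : Set V) ⊆ G.neighborSet w := by
          intro z hz
          rw [Finset.coe_erase, Set.mem_diff] at hz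
          exact (ht hwt (Finset.mem_coe.1 hz.1) (fun h => hz.2 (h ▸ rfl)) : G.Adj w z)
        calc t.card - 1 = ((t.erase w : Finset V) : Set V).ncard := by
              rw [Set.ncard_coe_finset, Finset.card_erase_of_mem hwt]
        _ ≤ (G.neighborSet w).ncard := Set.ncard_le_ncard hsub (Set.toFinite _)
    have := hMle _ hmem
    omega
  -- upper bound: any b*-coloring uses at most k+1 colors
  have hub : ∀ m, (∃ c : V → ℕ, IsBStarColoring G m c) → m ≤ k + 1 := by
    rintro m ⟨c, ⟨hcolor, hproper, _⟩, z, hz, hbz, hnice⟩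
    have hm1 : 1 ≤ m := by
      have := hcolor (Classical.arbitrary V)
      rw [Set.mem_Icc] at this
      omega
    have hmem : m - 1 ∈ M := by
      have hfex : ∀ j ∈ Finset.Icc 1 (m-1), ∃ w, G.Adj z w ∧ c w = j ∧
          IsBVertex G m c w := by
        intro j hj
        rw [Finset.mem_Icc] at hj
        exact hnice j (Set.mem_Icc.2 ⟨hj.1, by omega⟩) (by omega : j ≠ c z)
      set f : ℕ → V := fun j => if hj : j ∈ Finset.Icc 1 (m-1) then (hfex j hj).choose
        else Classical.arbitrary V with hf
      have hfspec : ∀ j ∈ Finset.Icc 1 (m-1), G.Adj z (f j) ∧ c (f j) = j ∧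
          IsBVertex G m c (f j) := by
        intro j hj
        rw [hf]; simp only [dif_pos hj]
        exact (hfex j hj).choose_spec
      refine ⟨z, (Finset.Icc 1 (m-1)).image f, ?_, ?_, ?_⟩
      · intro w hw
        rw [Finset.coe_image] at hw
        obtain ⟨j, hj, rfl⟩ := hw
        exact (hfspec j hj).1
      · have hinj : Set.InjOn f ((Finset.Icc 1 (m-1) : Finset ℕ) : Set ℕ) := by
          intro a ha b hb hab
          have h1 := (hfspec a (Finset.mem_coe.1 ha)).2.1
          have h2 := (hfspec b (Finset.mem_coe.1 hb)).2.1
          rw [hab] at h1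
          rw [h1] at h2
          exact h2
        rw [Finset.card_image_of_injOn hinj, Nat.card_Icc]
        omega
      · intro w hw
        obtain ⟨j, hj, rfl⟩ := Finset.mem_image.1 hw
        obtain ⟨hadj, hcol, hbv⟩ := hfspec j hj
        rw [Finset.mem_Icc] at hj
        -- the b-vertex f j has at least m-1 neighbors
        have hgex : ∀ i ∈ (Finset.Icc 1 m).erase j, ∃ w', G.Adj (f j) w' ∧ c w' = i := by
          intro i hi
          rw [Finset.mem_erase, Finset.mem_Icc] at hi
          exact hbv i (Set.mem_Icc.2 hi.2) (by rw [hcol]; exact hi.1)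
        set g : ℕ → V := fun i => if hi : i ∈ (Finset.Icc 1 m).erase j then
          (hgex i hi).choose else Classical.arbitrary V with hg
        have hgspec : ∀ i ∈ (Finset.Icc 1 m).erase j, G.Adj (f j) (g i) ∧ c (g i) = i := by
          intro i hi
          rw [hg]; simp only [dif_pos hi]
          exact (hgex i hi).choose_spec
        have hsub : ((((Finset.Icc 1 m).erase j).image g : Finset V) : Set V) ⊆
            G.neighborSet (f j) := by
          intro w' hw'
          rw [Finset.coe_image] at hw'
          obtain ⟨i, hi, rfl⟩ := hw'
          exact (hgspec i hi).1
        have hinj : Set.InjOn g (((Finset.Icc 1 m).erase j : Finset ℕ) : Set ℕ) := by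
          intro a ha b hb hab
          have h1 := (hgspec a (Finset.mem_coe.1 ha)).2
          have h2 := (hgspec b (Finset.mem_coe.1 hb)).2
          rw [hab] at h1
          rw [h1] at h2
          exact h2
        calc m - 1 = (((Finset.Icc 1 m).erase j).image g).card := by
              rw [Finset.card_image_of_injOn hinj, Finset.card_erase_of_mem
                (Finset.mem_Icc.2 ⟨hj.1, by omega⟩), Nat.card_Icc]
              omega
        _ = ((((Finset.Icc 1 m).erase j).image g : Finset V) : Set V).ncard :=
              (Set.ncard_coe_finset _).symm
        _ ≤ (G.neighborSet (f j)).ncard := Set.ncard_le_ncard hsub (Set.toFinite _)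
    have := hMle _ hmem
    omega
  -- lower bound: a b*-coloring with k+1 colors exists
  have hlb : ∃ c : V → ℕ, IsBStarColoring G (k+1) c := by
    rcases Nat.eq_zero_or_pos k with hk0 | hkpos
    · -- G is edgeless
      have hedge : ∀ a b : V, ¬ G.Adj a b := by
        intro a b hab
        have h1 : 1 ∈ M := by
          refine ⟨a, {b}, ?_, by simp, ?_⟩
          · intro z hz
            rw [Finset.coe_singleton, Set.mem_singleton_iff] at hz
            exact hz ▸ hab
          · intro w hw
            rw [Finset.mem_singleton] at hw
            subst hw
            have : a ∈ G.neighborSet w := hab.symm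
            have := Set.ncard_pos (Set.toFinite _) |>.2 ⟨a, this⟩
            omega
        have := hMle _ h1
        omega
      refine ⟨fun _ => 1, ⟨⟨fun v => by rw [hk0]; exact ⟨le_refl 1, le_refl 1⟩, ?_, ?_⟩,
        Classical.arbitrary V, by rw [hk0], ?_, ?_⟩⟩
      · intro a b hab
        exact absurd hab (hedge a b)
      · intro j hj
        rw [hk0] at hj
        rw [Set.mem_Icc] at hj
        exact ⟨Classical.arbitrary V, show (1:ℕ) = j by omega⟩
      · intro j hj hjne
        rw [hk0, Set.mem_Icc] at hj
        exact absurd (show j = 1 by omega) hjne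
      · intro j hj hjne
        rw [hk0, Set.mem_Icc] at hj
        exact absurd (show j = 1 by omega) hjne
    · obtain ⟨u, s, hsN, hcard, hdeg⟩ := hkmem
      exact main_construction hbg k hkpos u s hsN hcard hdeg hclq
  -- conclude
  have hBbdd : BddAbove {m | ∃ c : V → ℕ, IsBStarColoring G m c} := ⟨k+1, hub⟩
  have h1 : bStar G ≤ k + 1 := csSup_le ⟨k+1, hlb⟩ hub
  have h2 : k + 1 ≤ bStar G := le_csSup hBbdd hlb
  omega
end

section
/- For every tree T (a finite connected acyclic simple graph with at least one vertex), b*(T) = m*(T) + 1. -/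
variable {V : Type*} {W : Type*}

set_option maxHeartbeats 1000000
section AuxTree


/-- In an acyclic connected graph, an edge changes distance from a fixed vertex by exactly one. -/
lemma aux_tree_adj_dist (T : SimpleGraph V) (hconn : T.Connected) (hacyc : T.IsAcyclic)
    (u : V) {a b : V} (hab : T.Adj a b) :
    T.dist u b = T.dist u a + 1 ∨ T.dist u a = T.dist u b + 1 := by
  classical
  obtain ⟨p, hp, hplen⟩ := hconn.exists_path_of_dist u a
  by_cases hb : b ∈ p.support
  · right
    have hsp := p.take_spec hb
    have hlen : (p.takeUntil b hb).length + (p.dropUntil b hb).length = T.dist u a := by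
      rw [← hplen, ← SimpleGraph.Walk.length_append, hsp]
    have h1 : T.dist u b ≤ (p.takeUntil b hb).length := SimpleGraph.dist_le _
    have h2 : T.dist b a ≤ (p.dropUntil b hb).length := SimpleGraph.dist_le _
    have h3 : T.dist b a = 1 := SimpleGraph.dist_eq_one_iff_adj.mpr hab.symm
    have h4 : T.dist u a ≤ T.dist u b + T.dist b a := hconn.dist_triangle
    omega
  · left
    have hq : (p.concat hab).IsPath := by
      have h1 : (SimpleGraph.Walk.cons hab.symm p.reverse).IsPath := by
        refine SimpleGraph.Walk.IsPath.cons hp.reverse ?_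
        rwa [SimpleGraph.Walk.support_reverse, List.mem_reverse]
      have h2 := h1.reverse
      rwa [SimpleGraph.Walk.reverse_cons, SimpleGraph.Walk.reverse_reverse] at h2
    obtain ⟨r, hr, hrlen⟩ := hconn.exists_path_of_dist u b
    have := SimpleGraph.isAcyclic_iff_path_unique.mp hacyc ⟨p.concat hab, hq⟩ ⟨r, hr⟩
    have hlen : (p.concat hab).length = r.length := by
      rw [show (p.concat hab) = r from congrArg Subtype.val this]
    rw [SimpleGraph.Walk.length_concat, hplen] at hlen
    omega


/-- In an acyclic graph there is no triangle. -/
lemma aux_tree_no_triangle (T : SimpleGraph V) (hacyc : T.IsAcyclic)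
    {u w x : V} (h1 : T.Adj u w) (h2 : T.Adj w x) (h3 : T.Adj u x) : False := by
  have hP : (SimpleGraph.Walk.cons h3 SimpleGraph.Walk.nil : T.Walk u x).IsPath := by
    simp [h3.ne]
  have hQ : (SimpleGraph.Walk.cons h1 (SimpleGraph.Walk.cons h2 SimpleGraph.Walk.nil) :
      T.Walk u x).IsPath := by
    simp [SimpleGraph.Walk.isPath_def]
    exact ⟨⟨h1.ne, h3.ne⟩, h2.ne⟩
  have := SimpleGraph.isAcyclic_iff_path_unique.mp hacyc ⟨_, hP⟩ ⟨_, hQ⟩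
  have hlen := congrArg (fun q : T.Path u x => q.1.length) this
  simp at hlen

/-- Unique common neighbor on a 2-path in an acyclic graph. -/
lemma aux_tree_unique_mid (T : SimpleGraph V) (hacyc : T.IsAcyclic)
    {u b w w' : V} (hub : u ≠ b) (h1 : T.Adj u w) (h2 : T.Adj w b)
    (h1' : T.Adj u w') (h2' : T.Adj w' b) : w = w' := by
  have hP : (SimpleGraph.Walk.cons h1 (SimpleGraph.Walk.cons h2 SimpleGraph.Walk.nil) :
      T.Walk u b).IsPath := by
    simp [SimpleGraph.Walk.isPath_def]
    exact ⟨⟨h1.ne, hub⟩, h2.ne⟩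
  have hQ : (SimpleGraph.Walk.cons h1' (SimpleGraph.Walk.cons h2' SimpleGraph.Walk.nil) :
      T.Walk u b).IsPath := by
    simp [SimpleGraph.Walk.isPath_def]
    exact ⟨⟨h1'.ne, hub⟩, h2'.ne⟩
  have := SimpleGraph.isAcyclic_iff_path_unique.mp hacyc ⟨_, hP⟩ ⟨_, hQ⟩
  have hsup := congrArg (fun q : T.Path u b => q.1.support) this
  simp at hsup
  exact hsup

lemma aux_mStar_bddAbove [Fintype V] (G : SimpleGraph V) :
    BddAbove {k | ∃ (u : V) (s : Finset V), (↑s : Set V) ⊆ G.neighborSet u ∧ s.card = k ∧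
      ∀ v ∈ s, k ≤ (G.neighborSet v).ncard} := by
  refine ⟨Fintype.card V, fun k hk => ?_⟩
  obtain ⟨u, s, -, hcard, -⟩ := hk
  rw [← hcard]
  exact Finset.card_le_univ s

lemma aux_mStar_mem [Fintype V] [Nonempty V] (G : SimpleGraph V) :
    ∃ (u : V) (s : Finset V), (↑s : Set V) ⊆ G.neighborSet u ∧ s.card = mStar G ∧
      ∀ v ∈ s, mStar G ≤ (G.neighborSet v).ncard := by
  have hne : {k | ∃ (u : V) (s : Finset V), (↑s : Set V) ⊆ G.neighborSet u ∧ s.card = k ∧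
      ∀ v ∈ s, k ≤ (G.neighborSet v).ncard}.Nonempty := by
    refine ⟨0, Classical.arbitrary V, ∅, by simp, by simp, by simp⟩
  exact Nat.sSup_mem hne (aux_mStar_bddAbove G)

section Construction

variable [Fintype V] [Nonempty V]

lemma aux_exists_bstar_coloring (T : SimpleGraph V) (hconn : T.Connected) (hacyc : T.IsAcyclic) :
    ∃ c : V → ℕ, (∀ v, c v ∈ Set.Icc 1 (mStar T + 1)) ∧
      (∀ a b, T.Adj a b → c a ≠ c b) ∧
      (∀ j ∈ Set.Icc 1 (mStar T + 1), ∃ v, c v = j) ∧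
      ∃ u, c u = mStar T + 1 ∧
        (∀ j ∈ Set.Icc 1 (mStar T + 1), j ≠ c u → ∃ w, T.Adj u w ∧ c w = j) ∧
        (∀ j ∈ Set.Icc 1 (mStar T + 1), j ≠ c u → ∃ w, T.Adj u w ∧ c w = j ∧
          (∀ i ∈ Set.Icc 1 (mStar T + 1), i ≠ c w → ∃ x, T.Adj w x ∧ c x = i)) := by
  classical
  obtain ⟨u, s, hsub, hcard, hdeg⟩ := aux_mStar_mem T
  set m := mStar T with hm
  rcases Nat.eq_zero_or_pos m with hm0 | hm1
  · -- m = 0 : no edges, single vertex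
    have hnoadj : ∀ a b : V, ¬ T.Adj a b := by
      intro a b hab
      have hdb : ∀ v ∈ ({b} : Finset V), 1 ≤ (T.neighborSet v).ncard := by
        intro v hv
        rw [Finset.mem_singleton] at hv
        subst hv
        have h2 : (T.neighborSet v).Nonempty := ⟨a, hab.symm⟩
        have := (Set.ncard_pos (Set.toFinite _)).mpr h2
        omega
      have h1 : 1 ≤ m := by
        rw [hm]
        exact le_csSup (aux_mStar_bddAbove T) ⟨a, {b}, by simpa using hab, by simp, hdb⟩
      omega
    refine ⟨fun _ => 1, ?_, ?_, ?_, u, by show (1:ℕ) = m + 1; omega, ?_, ?_⟩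
    · intro v
      show (1:ℕ) ∈ Set.Icc 1 (m+1)
      rw [Set.mem_Icc]; omega
    · intro a b hab; exact absurd hab (hnoadj a b)
    · intro j hj
      rw [Set.mem_Icc] at hj
      exact ⟨u, by show (1:ℕ) = j; omega⟩
    · intro j hj hj1
      rw [Set.mem_Icc] at hj
      exact absurd (by show j = (1:ℕ); omega) hj1
    · intro j hj hj1
      rw [Set.mem_Icc] at hj
      exact absurd (by show j = (1:ℕ); omega) hj1
  · -- main case m ≥ 1
    have huns : u ∉ s := fun h => T.irrefl (hsub h)
    have hadj : ∀ w ∈ s, T.Adj u w := fun w hw => hsub hw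
    have hd0 : ∀ v : V, T.dist u v = 0 ↔ v = u := by
      intro v
      rw [hconn.dist_eq_zero_iff]
      exact eq_comm
    have hdist1 : ∀ w ∈ s, T.dist u w = 1 := fun w hw =>
      SimpleGraph.dist_eq_one_iff_adj.mpr (hadj w hw)
    -- the color map on s
    have hscard : Fintype.card ↥s = m := by rw [Fintype.card_coe]; exact hcard
    set e : ↥s ≃ Fin m := Fintype.equivFinOfCardEq hscard with he
    set σ : V → ℕ := fun v => if h : v ∈ s then (e ⟨v, h⟩ : ℕ) + 1 else 0 with hσ
    have hσval : ∀ w (h : w ∈ s), σ w = (e ⟨w, h⟩ : ℕ) + 1 := by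
      intro w h
      simp only [hσ]; rw [dif_pos h]
    have hσmem : ∀ w ∈ s, 1 ≤ σ w ∧ σ w ≤ m := by
      intro w hw
      rw [hσval w hw]
      have := (e ⟨w, hw⟩).2
      omega
    have hσsurj : ∀ j, 1 ≤ j → j ≤ m → ∃ w ∈ s, σ w = j := by
      intro j h1 h2
      refine ⟨(e.symm ⟨j - 1, by omega⟩ : ↥s), (e.symm ⟨j - 1, by omega⟩).2, ?_⟩
      rw [hσval _ (e.symm ⟨j - 1, by omega⟩).2]
      have : e ⟨(e.symm ⟨j - 1, by omega⟩ : ↥s), (e.symm ⟨j - 1, by omega⟩).2⟩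
          = ⟨j - 1, by omega⟩ := by
        rw [Subtype.coe_eta, Equiv.apply_symm_apply]
      rw [this]
      show j - 1 + 1 = j
      omega
    -- the sets of extra neighbors
    have hNcard : ∀ w ∈ s, m - 1 ≤ (T.neighborFinset w \ {u}).card := by
      intro w hw
      have h1 : u ∈ T.neighborFinset w := by
        rw [SimpleGraph.mem_neighborFinset]
        exact (hadj w hw).symm
      have h2 : (T.neighborFinset w \ {u}).card = (T.neighborFinset w).card - 1 := by
        rw [Finset.sdiff_singleton_eq_erase, Finset.card_erase_of_mem h1]
      have h3 : m ≤ (T.neighborFinset w).card := by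
        have := hdeg w hw
        rwa [SimpleGraph.neighborFinset_def, ← Set.ncard_eq_toFinset_card']
      omega
    have hex_t : ∀ w : V, ∃ t : Finset V,
        t ⊆ T.neighborFinset w \ {u} ∧ (w ∈ s → t.card = m - 1) := by
      intro w
      by_cases hw : w ∈ s
      · obtain ⟨t, h1, h2⟩ := Finset.exists_subset_card_eq (hNcard w hw)
        exact ⟨t, h1, fun _ => h2⟩
      · exact ⟨∅, by simp, fun h => absurd h hw⟩
    choose t htsub htcard using hex_t
    have htadj : ∀ w, ∀ x ∈ t w, T.Adj w x ∧ x ≠ u := by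
      intro w x hx
      have := htsub w hx
      rw [Finset.mem_sdiff, SimpleGraph.mem_neighborFinset, Finset.mem_singleton] at this
      exact this
    -- the target color sets
    set C : V → Finset ℕ := fun w => (Finset.Icc 1 m).erase (σ w) with hC
    have hCcard : ∀ w ∈ s, (C w).card = m - 1 := by
      intro w hw
      simp only [hC]
      rw [Finset.card_erase_of_mem (Finset.mem_Icc.mpr (hσmem w hw)), Nat.card_Icc]
      omega
    -- the bijections onto extra colors
    have hex_τ : ∀ w : V, ∃ f : V → ℕ, (w ∈ s → Set.BijOn f ↑(t w) ↑(C w)) := by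
      intro w
      by_cases hw : w ∈ s
      · have hcc : Fintype.card ↥(t w) = Fintype.card ↥(C w) := by
          rw [Fintype.card_coe, Fintype.card_coe, htcard w hw, hCcard w hw]
        set eq := Fintype.equivOfCardEq hcc with heq
        refine ⟨fun x => if h : x ∈ t w then (eq ⟨x, h⟩ : ℕ) else 0, fun _ => ⟨?_, ?_, ?_⟩⟩
        · intro x hx
          have hx' : x ∈ t w := hx
          have hfx : (fun x => if h : x ∈ t w then ((eq ⟨x, h⟩ : ↥(C w)) : ℕ) else 0) x
              = ((eq ⟨x, hx'⟩ : ↥(C w)) : ℕ) := dif_pos hx'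
          rw [hfx]
          exact (eq ⟨x, hx'⟩).2
        · intro x hx y hy hxy
          have hx' : x ∈ t w := hx
          have hy' : y ∈ t w := hy
          have hfx : (fun x => if h : x ∈ t w then ((eq ⟨x, h⟩ : ↥(C w)) : ℕ) else 0) x
              = ((eq ⟨x, hx'⟩ : ↥(C w)) : ℕ) := dif_pos hx'
          have hfy : (fun x => if h : x ∈ t w then ((eq ⟨x, h⟩ : ↥(C w)) : ℕ) else 0) y
              = ((eq ⟨y, hy'⟩ : ↥(C w)) : ℕ) := dif_pos hy'
          rw [hfx, hfy] at hxy
          have := eq.injective (Subtype.ext hxy)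
          exact congrArg Subtype.val this
        · intro i hi
          have hi' : i ∈ C w := hi
          refine ⟨(eq.symm ⟨i, hi'⟩ : V), (eq.symm ⟨i, hi'⟩).2, ?_⟩
          have hfx : (fun x => if h : x ∈ t w then ((eq ⟨x, h⟩ : ↥(C w)) : ℕ) else 0)
              ((eq.symm ⟨i, hi'⟩ : V)) = ((eq ⟨(eq.symm ⟨i, hi'⟩ : V), (eq.symm ⟨i, hi'⟩).2⟩ :
              ↥(C w)) : ℕ) := dif_pos (eq.symm ⟨i, hi'⟩).2
          rw [hfx, Subtype.coe_eta, Equiv.apply_symm_apply]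
      · exact ⟨fun _ => 0, fun h => absurd h hw⟩
    choose τ hτ using hex_τ
    -- the swap function
    set sw : ℕ → ℕ := fun j => if j = 1 then 2 else 1 with hsw
    -- the coloring
    set c : V → ℕ := fun v =>
      if v = u then m + 1
      else if v ∈ s then σ v
      else if h : ∃ w, w ∈ s ∧ T.Adj w v then
        (if v ∈ t h.choose then τ h.choose v else sw (σ h.choose))
      else if T.dist u v = 1 then (if m = 1 then 1 else 2)
      else if Odd (T.dist u v) then (if m = 1 then 1 else m + 1)
      else (if m = 1 then 2 else 1) with hcdef
    -- branch evaluation lemmas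
    have hcu : c u = m + 1 := if_pos rfl
    have hcs : ∀ w ∈ s, c w = σ w := by
      intro w hw
      have hwu : w ≠ u := fun h => huns (h ▸ hw)
      calc c w = if w ∈ s then σ w
          else if h : ∃ w', w' ∈ s ∧ T.Adj w' w then
            (if w ∈ t h.choose then τ h.choose w else sw (σ h.choose))
          else if T.dist u w = 1 then (if m = 1 then 1 else 2)
          else if Odd (T.dist u w) then (if m = 1 then 1 else m + 1)
          else (if m = 1 then 2 else 1) := if_neg hwu
        _ = σ w := if_pos hw
    have hbr3 : ∀ v, v ≠ u → v ∉ s → ∀ w ∈ s, T.Adj w v →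
        c v = (if v ∈ t w then τ w v else sw (σ w)) := by
      intro v hvu hvs w hw hwv
      have hex : ∃ w', w' ∈ s ∧ T.Adj w' v := ⟨w, hw, hwv⟩
      have hch := hex.choose_spec
      have hchw : hex.choose = w :=
        aux_tree_unique_mid T hacyc (fun h => hvu h.symm) (hadj _ hch.1) hch.2 (hadj w hw) hwv
      calc c v = if v ∈ s then σ v
          else if h : ∃ w', w' ∈ s ∧ T.Adj w' v then
            (if v ∈ t h.choose then τ h.choose v else sw (σ h.choose))
          else if T.dist u v = 1 then (if m = 1 then 1 else 2)
          else if Odd (T.dist u v) then (if m = 1 then 1 else m + 1)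
          else (if m = 1 then 2 else 1) := if_neg hvu
        _ = if h : ∃ w', w' ∈ s ∧ T.Adj w' v then
            (if v ∈ t h.choose then τ h.choose v else sw (σ h.choose))
          else if T.dist u v = 1 then (if m = 1 then 1 else 2)
          else if Odd (T.dist u v) then (if m = 1 then 1 else m + 1)
          else (if m = 1 then 2 else 1) := if_neg hvs
        _ = (if v ∈ t hex.choose then τ hex.choose v else sw (σ hex.choose)) := dif_pos hex
        _ = (if v ∈ t w then τ w v else sw (σ w)) := by rw [hchw]
    have hbr45 : ∀ v, v ≠ u → v ∉ s → (¬ ∃ w, w ∈ s ∧ T.Adj w v) →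
        c v = (if T.dist u v = 1 then (if m = 1 then 1 else 2)
          else if Odd (T.dist u v) then (if m = 1 then 1 else m + 1)
          else (if m = 1 then 2 else 1)) := by
      intro v hvu hvs hno
      calc c v = if v ∈ s then σ v
          else if h : ∃ w', w' ∈ s ∧ T.Adj w' v then
            (if v ∈ t h.choose then τ h.choose v else sw (σ h.choose))
          else if T.dist u v = 1 then (if m = 1 then 1 else 2)
          else if Odd (T.dist u v) then (if m = 1 then 1 else m + 1)
          else (if m = 1 then 2 else 1) := if_neg hvu
        _ = if h : ∃ w', w' ∈ s ∧ T.Adj w' v then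
            (if v ∈ t h.choose then τ h.choose v else sw (σ h.choose))
          else if T.dist u v = 1 then (if m = 1 then 1 else 2)
          else if Odd (T.dist u v) then (if m = 1 then 1 else m + 1)
          else (if m = 1 then 2 else 1) := if_neg hvs
        _ = _ := dif_neg hno
    -- swap facts
    have hswne : ∀ j, 1 ≤ j → sw j ≠ j ∧ 1 ≤ sw j ∧ sw j ≤ 2 := by
      intro j hj
      by_cases h : j = 1
      · subst h; simp [hsw]
      · simp only [hsw, if_neg h]
        omega
    -- distance facts
    have hadjd : ∀ a b, T.Adj a b →
        T.dist u b = T.dist u a + 1 ∨ T.dist u a = T.dist u b + 1 :=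
      fun a b hab => aux_tree_adj_dist T hconn hacyc u hab
    have hdne : ∀ v : V, T.dist u v ≠ 0 → v ≠ u := by
      intro v h hv
      exact h ((hd0 v).mpr hv)
    have hnos : ∀ v : V, T.dist u v ≠ 1 → v ∉ s := by
      intro v h hv
      exact h (hdist1 v hv)
    have hno3 : ∀ v : V, 3 ≤ T.dist u v → ¬ ∃ w, w ∈ s ∧ T.Adj w v := by
      rintro v hv ⟨w, hw, hwv⟩
      rcases hadjd w v hwv with h | h <;> (rw [hdist1 w hw] at h; omega)
    -- value claims
    have hA1 : m = 1 → ∀ v, T.dist u v = 2 → c v = 2 := by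
      intro hm1' v hv2
      have hvu : v ≠ u := hdne v (by omega)
      have hvs : v ∉ s := hnos v (by omega)
      by_cases hb3 : ∃ w, w ∈ s ∧ T.Adj w v
      · obtain ⟨w, hw, hwv⟩ := hb3
        rw [hbr3 v hvu hvs w hw hwv]
        have htempty : t w = ∅ := by
          rw [← Finset.card_eq_zero, htcard w hw, hm1']
        rw [htempty]
        rw [if_neg (Finset.notMem_empty v)]
        have hσ1 : σ w = 1 := by have := hσmem w hw; omega
        rw [hσ1]
        simp [hsw]
      · rw [hbr45 v hvu hvs hb3, hv2]
        norm_num [hm1']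
    have hA2 : 2 ≤ m → ∀ v, T.dist u v = 2 → 1 ≤ c v ∧ c v ≤ m := by
      intro hm2 v hv2
      have hvu : v ≠ u := hdne v (by omega)
      have hvs : v ∉ s := hnos v (by omega)
      by_cases hb3 : ∃ w, w ∈ s ∧ T.Adj w v
      · obtain ⟨w, hw, hwv⟩ := hb3
        rw [hbr3 v hvu hvs w hw hwv]
        by_cases hvt : v ∈ t w
        · rw [if_pos hvt]
          have := (hτ w hw).1 (Finset.mem_coe.mpr hvt)
          rw [Finset.mem_coe] at this
          simp only [hC] at this
          rw [Finset.mem_erase, Finset.mem_Icc] at this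
          exact this.2
        · rw [if_neg hvt]
          have := hswne (σ w) (hσmem w hw).1
          omega
      · rw [hbr45 v hvu hvs hb3, hv2]
        norm_num [Nat.odd_iff]
        split_ifs <;> omega
    have hBodd : ∀ v, 3 ≤ T.dist u v → Odd (T.dist u v) →
        c v = (if m = 1 then 1 else m + 1) := by
      intro v hv hodd
      rw [hbr45 v (hdne v (by omega)) (hnos v (by omega)) (hno3 v hv),
        if_neg (by omega : ¬ T.dist u v = 1), if_pos hodd]
    have hBeven : ∀ v, 3 ≤ T.dist u v → ¬ Odd (T.dist u v) →
        c v = (if m = 1 then 2 else 1) := by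
      intro v hv hev
      rw [hbr45 v (hdne v (by omega)) (hnos v (by omega)) (hno3 v hv),
        if_neg (by omega : ¬ T.dist u v = 1), if_neg hev]
    -- properness, one direction
    have hkey : ∀ a b, T.Adj a b → T.dist u b = T.dist u a + 1 → c a ≠ c b := by
      intro a b hab hd
      by_cases ha0 : T.dist u a = 0
      · -- a = u
        have hau : a = u := (hd0 a).mp ha0
        rw [hau, hcu]
        have hbu : b ≠ u := fun hh => hab.ne (hau.trans hh.symm)
        by_cases hbs : b ∈ s
        · rw [hcs b hbs]
          have := hσmem b hbs
          omega
        · have hno : ¬ ∃ w, w ∈ s ∧ T.Adj w b := by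
            rintro ⟨w, hw, hwb⟩
            rcases hadjd w b hwb with h | h <;>
              (rw [hdist1 w hw] at h; omega)
          rw [hbr45 b hbu hbs hno, hd, ha0]
          norm_num
          split_ifs <;> omega
      · by_cases ha1 : T.dist u a = 1
        · -- a at distance 1, b at distance 2
          have hbu : b ≠ u := hdne b (by omega)
          have hbs : b ∉ s := hnos b (by omega)
          by_cases has : a ∈ s
          · rw [hcs a has, hbr3 b hbu hbs a has hab]
            by_cases hbt : b ∈ t a
            · rw [if_pos hbt]
              have := (hτ a has).1 (Finset.mem_coe.mpr hbt)
              rw [Finset.mem_coe] at this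
              simp only [hC] at this
              rw [Finset.mem_erase] at this
              exact this.1.symm
            · rw [if_neg hbt]
              have := hswne (σ a) (hσmem a has).1
              exact this.1.symm
          · have hua : T.Adj u a := SimpleGraph.dist_eq_one_iff_adj.mp ha1
            have hno_a : ¬ ∃ w, w ∈ s ∧ T.Adj w a := by
              rintro ⟨w, hw, hwa⟩
              rcases hadjd w a hwa with h | h <;>
                (rw [hdist1 w hw] at h; omega)
            have hno_b : ¬ ∃ w, w ∈ s ∧ T.Adj w b := by
              rintro ⟨w, hw, hwb⟩
              have hweq : w = a :=
                aux_tree_unique_mid T hacyc (fun h => hbu h.symm) (hadj w hw) hwb hua hab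
              exact has (hweq ▸ hw)
            rw [hbr45 a (hdne a ha0) has hno_a, hbr45 b hbu hbs hno_b, ha1, hd, ha1]
            norm_num [Nat.odd_iff]
            split_ifs <;> omega
        · by_cases ha2 : T.dist u a = 2
          · -- a at distance 2, b at distance 3
            have hb3' : T.dist u b = 3 := by omega
            have hcb : c b = (if m = 1 then 1 else m + 1) :=
              hBodd b (by omega) (by rw [hb3']; decide)
            by_cases hm1' : m = 1
            · rw [hA1 hm1' a ha2, hcb, if_pos hm1']
              omega
            · have := hA2 (by omega) a ha2
              rw [hcb, if_neg hm1']
              omega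
          · -- both at distance ≥ 3
            have ha3 : 3 ≤ T.dist u a := by omega
            have hb3' : 3 ≤ T.dist u b := by omega
            rcases Nat.even_or_odd (T.dist u a) with hpar | hpar
            · have hodd : Odd (T.dist u b) := by
                rw [hd]
                exact Even.add_one hpar
              rw [hBeven a ha3 (by rwa [Nat.not_odd_iff_even]), hBodd b hb3' hodd]
              split_ifs <;> omega
            · have hev : ¬ Odd (T.dist u b) := by
                rw [hd, Nat.not_odd_iff_even]
                exact Odd.add_one hpar
              rw [hBodd a ha3 hpar, hBeven b hb3' hev]
              split_ifs <;> omega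
    have hproper : ∀ a b, T.Adj a b → c a ≠ c b := by
      intro a b hab
      rcases hadjd a b hab with h | h
      · exact hkey a b hab h
      · exact Ne.symm (hkey b a hab.symm h)
    -- all colors are in range
    have hrange : ∀ v, 1 ≤ c v ∧ c v ≤ m + 1 := by
      intro v
      by_cases hvu : v = u
      · rw [hvu, hcu]; omega
      · by_cases hvs : v ∈ s
        · rw [hcs v hvs]
          have := hσmem v hvs
          omega
        · by_cases hb3 : ∃ w, w ∈ s ∧ T.Adj w v
          · obtain ⟨w, hw, hwv⟩ := hb3
            rw [hbr3 v hvu hvs w hw hwv]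
            by_cases hvt : v ∈ t w
            · rw [if_pos hvt]
              have := (hτ w hw).1 (Finset.mem_coe.mpr hvt)
              rw [Finset.mem_coe] at this
              simp only [hC] at this
              rw [Finset.mem_erase, Finset.mem_Icc] at this
              omega
            · rw [if_neg hvt]
              have := hswne (σ w) (hσmem w hw).1
              omega
          · rw [hbr45 v hvu hvs hb3]
            split_ifs <;> omega
    -- all colors are used
    have hused : ∀ j ∈ Set.Icc 1 (m + 1), ∃ v, c v = j := by
      intro j hj
      rw [Set.mem_Icc] at hj
      by_cases hjm : j = m + 1
      · exact ⟨u, by rw [hcu, hjm]⟩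
      · obtain ⟨w, hw, hwj⟩ := hσsurj j hj.1 (by omega)
        exact ⟨w, by rw [hcs w hw, hwj]⟩
    -- u is a b-vertex
    have hBu : ∀ j ∈ Set.Icc 1 (m + 1), j ≠ c u → ∃ w, T.Adj u w ∧ c w = j := by
      intro j hj hne
      rw [Set.mem_Icc] at hj
      rw [hcu] at hne
      obtain ⟨w, hw, hwj⟩ := hσsurj j hj.1 (by omega)
      exact ⟨w, hadj w hw, by rw [hcs w hw, hwj]⟩
    -- every member of s is a b-vertex
    have hBw : ∀ w ∈ s, ∀ i ∈ Set.Icc 1 (m + 1), i ≠ c w → ∃ x, T.Adj w x ∧ c x = i := by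
      intro w hw i hi hne
      rw [Set.mem_Icc] at hi
      rw [hcs w hw] at hne
      by_cases him : i = m + 1
      · exact ⟨u, (hadj w hw).symm, by rw [hcu, him]⟩
      · have hiC : i ∈ C w := by
          simp only [hC]
          rw [Finset.mem_erase, Finset.mem_Icc]
          exact ⟨hne, hi.1, by omega⟩
        obtain ⟨x, hx, hxi⟩ := (hτ w hw).2.2 (Finset.mem_coe.mpr hiC)
        have hxt : x ∈ t w := hx
        obtain ⟨hwx, hxu⟩ := htadj w x hxt
        have hxs : x ∉ s := fun hxs' => aux_tree_no_triangle T hacyc (hadj w hw) hwx (hadj x hxs')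
        refine ⟨x, hwx, ?_⟩
        rw [hbr3 x hxu hxs w hw hwx, if_pos hxt, hxi]
    -- assemble
    refine ⟨c, fun v => Set.mem_Icc.mpr (hrange v), hproper, hused, u, hcu, hBu, ?_⟩
    intro j hj hne
    rw [Set.mem_Icc] at hj
    rw [hcu] at hne
    obtain ⟨w, hw, hwj⟩ := hσsurj j hj.1 (by omega)
    exact ⟨w, hadj w hw, by rw [hcs w hw, hwj], hBw w hw⟩

end Construction

section UB
variable [Fintype V] [Nonempty V]

lemma aux_le_mStar {G : SimpleGraph V} {k : ℕ} (u : V) (s : Finset V)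
    (h1 : (↑s : Set V) ⊆ G.neighborSet u) (h2 : s.card = k)
    (h3 : ∀ v ∈ s, k ≤ (G.neighborSet v).ncard) : k ≤ mStar G :=
  le_csSup (aux_mStar_bddAbove G) ⟨u, s, h1, h2, h3⟩

/-- The b-vertex degree bound: a b-vertex has at least k-1 neighbors. -/
lemma aux_bvertex_deg {G : SimpleGraph V} {k : ℕ} {c : V → ℕ} {v : V}
    (hB : IsBVertex G k c v) : k - 1 ≤ (G.neighborSet v).ncard := by
  classical
  set A : Finset ℕ := (Finset.Icc 1 k).erase (c v) with hA
  have hAcard : k - 1 ≤ A.card := by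
    rw [hA]
    rcases Finset.decidableMem (c v) (Finset.Icc 1 k) with h | h
    · rw [Finset.erase_eq_of_notMem h, Nat.card_Icc]; omega
    · rw [Finset.card_erase_of_mem h, Nat.card_Icc]; omega
  have hex : ∀ i ∈ A, ∃ w, G.Adj v w ∧ c w = i := by
    intro i hi
    rw [hA, Finset.mem_erase, Finset.mem_Icc] at hi
    exact hB i (Set.mem_Icc.mpr hi.2) hi.1
  choose g hg1 hg2 using hex
  set f : ℕ → V := fun i => if h : i ∈ A then g i h else v with hf
  have hmap : ∀ i ∈ A, f i ∈ G.neighborFinset v := by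
    intro i hi
    rw [hf]; simp only [dif_pos hi]
    exact (G.mem_neighborFinset v _).mpr (hg1 i hi)
  have hinj : Set.InjOn f A := by
    intro i hi0 j hj0 hij
    have hi : i ∈ A := hi0
    have hj : j ∈ A := hj0
    have h1 : c (f i) = i := by simp only [hf]; rw [dif_pos hi]; exact hg2 i hi
    have h2 : c (f j) = j := by simp only [hf]; rw [dif_pos hj]; exact hg2 j hj
    rw [← h1, ← h2, hij]
  have hle : A.card ≤ (G.neighborFinset v).card :=
    Finset.card_le_card_of_injOn f hmap hinj
  have hn : (G.neighborSet v).ncard = (G.neighborFinset v).card := by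
    rw [SimpleGraph.neighborFinset_def, Set.ncard_eq_toFinset_card']
  omega

end UB

lemma aux_bStarColoring_le_mStar [Fintype V] [Nonempty V] {G : SimpleGraph V} {k : ℕ} {c : V → ℕ}
    (h : IsBStarColoring G k c) : k ≤ mStar G + 1 := by
  classical
  obtain ⟨⟨hc1, hc2, hc3⟩, u, hcu, hBu, hnice⟩ := h
  rcases Nat.eq_zero_or_pos k with hk | hk
  · omega
  have hex : ∀ j ∈ Finset.Icc 1 (k-1), ∃ w, G.Adj u w ∧ c w = j ∧ IsBVertex G k c w := by
    intro j hj
    rw [Finset.mem_Icc] at hj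
    exact hnice j (Set.mem_Icc.mpr ⟨hj.1, by omega⟩) (by rw [hcu]; omega)
  choose g hg1 hg2 hg3 using hex
  set f : ℕ → V := fun j => if h : j ∈ Finset.Icc 1 (k-1) then g j h else u with hf
  have hcf : ∀ j ∈ Finset.Icc 1 (k-1), c (f j) = j := by
    intro j hj
    simp only [hf]; rw [dif_pos hj]; exact hg2 j hj
  set s : Finset V := (Finset.Icc 1 (k-1)).image f with hs
  have hcard : s.card = k - 1 := by
    rw [hs, Finset.card_image_of_injOn, Nat.card_Icc]
    · omega
    · intro i hi0 j hj0 hij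
      have hi : i ∈ Finset.Icc 1 (k-1) := hi0
      have hj : j ∈ Finset.Icc 1 (k-1) := hj0
      rw [← hcf i hi, ← hcf j hj, hij]
  have hsub : (↑s : Set V) ⊆ G.neighborSet u := by
    intro v hv
    rw [hs] at hv
    simp only [Finset.coe_image, Set.mem_image, Finset.mem_coe] at hv
    obtain ⟨j, hj, rfl⟩ := hv
    simp only [hf]; rw [dif_pos hj]
    exact hg1 j hj
  have hdeg : ∀ v ∈ s, k - 1 ≤ (G.neighborSet v).ncard := by
    intro v hv
    rw [hs, Finset.mem_image] at hv
    obtain ⟨j, hj, rfl⟩ := hv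
    have : IsBVertex G k c (f j) := by
      simp only [hf]; rw [dif_pos hj]; exact hg3 j hj
    exact aux_bvertex_deg this
  have := aux_le_mStar u s hsub hcard hdeg
  omega


end AuxTree

/-- for every tree `T` (finite, connected, acyclic, with at least one
vertex), `b*(T) = m*(T) + 1`. -/
theorem tree_bStar_eq_mStar_add_one [Fintype V] [Nonempty V]
    (T : SimpleGraph V) (hconn : T.Connected) (hacyc : T.IsAcyclic) :
    bStar T = mStar T + 1 := by
  classical
  have hub : ∀ k ∈ {k | ∃ c : V → ℕ, IsBStarColoring T k c}, k ≤ mStar T + 1 := by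
    rintro k ⟨c, hc⟩
    exact aux_bStarColoring_le_mStar hc
  have hmem : (mStar T + 1) ∈ {k | ∃ c : V → ℕ, IsBStarColoring T k c} := by
    obtain ⟨c, h1, h2, h3, u, h4, h5, h6⟩ := aux_exists_bstar_coloring T hconn hacyc
    exact ⟨c, ⟨h1, h2, h3⟩, u, h4, h5, h6⟩
  apply le_antisymm
  · exact csSup_le ⟨_, hmem⟩ hub
  · exact le_csSup ⟨mStar T + 1, hub⟩ hmem
end

section
/- Every cactus graph G is z-monotonic and b*-monotonic: for every induced subgraph H_1 of G and every induced subgraph H_2 of H_1 (both with at least one vertex), z(H_2) ≤ z(H_1) and b*(H_2) ≤ b*(H_1). -/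
variable {V : Type*} {W : Type*}

/-- A cactus: a connected graph in which any two distinct cycles (cycles with
different edge sets) share at most one vertex. -/
def IsCactus (G : SimpleGraph V) : Prop :=
  G.Connected ∧
  ∀ (u v : V) (p : G.Walk u u) (q : G.Walk v v), p.IsCycle → q.IsCycle →
    {e | e ∈ p.edges} ≠ {e | e ∈ q.edges} →
    ({a | a ∈ p.support} ∩ {a | a ∈ q.support}).Subsingleton

open SimpleGraph


open SimpleGraph


section AuxDefs

variable {V : Type*}

open Classical in
/-- least color `≥ 1` not in `S` -/
noncomputable def mex1 (S : Finset ℕ) : ℕ := sInf {n | 1 ≤ n ∧ n ∉ S}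

lemma mex1_spec (S : Finset ℕ) : 1 ≤ mex1 S ∧ mex1 S ∉ S := by
  have hne : {n | 1 ≤ n ∧ n ∉ S}.Nonempty := by
    classical
    obtain ⟨m, hm⟩ := S.exists_nat_subset_range
    refine ⟨m + 1, by omega, fun h => ?_⟩
    have := hm h
    simp only [Finset.mem_range] at this
    omega
  exact Nat.sInf_mem hne

lemma one_le_mex1 (S : Finset ℕ) : 1 ≤ mex1 S := (mex1_spec S).1

lemma mex1_not_mem (S : Finset ℕ) : mex1 S ∉ S := (mex1_spec S).2

lemma mem_of_lt_mex1 {S : Finset ℕ} {i : ℕ} (h1 : 1 ≤ i) (h2 : i < mex1 S) : i ∈ S := by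
  by_contra hi
  have : mex1 S ≤ i := Nat.sInf_le ⟨h1, hi⟩
  omega

lemma mex1_le_card_add_one (S : Finset ℕ) : mex1 S ≤ S.card + 1 := by
  by_contra h
  push_neg at h
  have hsub : Finset.Icc 1 (S.card + 1) ⊆ S := by
    intro i hi
    simp only [Finset.mem_Icc] at hi
    exact mem_of_lt_mex1 hi.1 (by omega)
  have := Finset.card_le_card hsub
  simp [Nat.card_Icc] at this

variable (G : SimpleGraph V)

/-- reachability within a vertex set `s` -/
def SReach (s : Set V) (x y : V) : Prop :=
  ∃ p : G.Walk x y, ∀ z ∈ p.support, z ∈ s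

variable {G}

lemma SReach.refl {s : Set V} {x : V} (hx : x ∈ s) : SReach G s x x :=
  ⟨Walk.nil, by simp [hx]⟩

lemma SReach.symm {s : Set V} {x y : V} (h : SReach G s x y) : SReach G s y x := by
  obtain ⟨p, hp⟩ := h
  exact ⟨p.reverse, fun z hz => hp z (by simpa using hz)⟩

lemma SReach.trans {s : Set V} {x y z : V} (h : SReach G s x y) (h' : SReach G s y z) :
    SReach G s x z := by
  obtain ⟨p, hp⟩ := h
  obtain ⟨q, hq⟩ := h'
  refine ⟨p.append q, fun w hw => ?_⟩
  rw [Walk.mem_support_append_iff] at hw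
  exact hw.elim (hp w) (hq w)

lemma SReach.mem_left {s : Set V} {x y : V} (h : SReach G s x y) : x ∈ s := by
  obtain ⟨p, hp⟩ := h
  exact hp x p.start_mem_support

lemma SReach.mem_right {s : Set V} {x y : V} (h : SReach G s x y) : y ∈ s := by
  obtain ⟨p, hp⟩ := h
  exact hp y p.end_mem_support

lemma SReach.adj {s : Set V} {x y : V} (hx : x ∈ s) (hy : y ∈ s) (h : G.Adj x y) :
    SReach G s x y := ⟨Walk.cons h Walk.nil, by simp [hx, hy]⟩

/-- if `x` is in `s` and reachable-within-`s` points are closed under adjacency -/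
lemma SReach.adj_right {s : Set V} {x y z : V} (h : SReach G s x y) (hz : z ∈ s)
    (hyz : G.Adj y z) : SReach G s x z :=
  h.trans (SReach.adj h.mem_right hz hyz)

/-- the only edge of a path at its starting point is the first one -/
lemma edge_start_unique {u b y y' : V} {p : G.Walk u b} (hp : p.IsPath)
    (h : s(u, y) ∈ p.edges) (h' : s(u, y') ∈ p.edges) : y = y' := by
  induction p with
  | nil => simp at h
  | cons hadj q ih =>
    rename_i a c d
    rw [Walk.cons_isPath_iff] at hp
    simp only [Walk.edges_cons, List.mem_cons] at h h'
    rcases h with h | h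
    · rcases h' with h' | h'
      · rw [Sym2.eq_iff] at h h'
        rcases h with ⟨-, rfl⟩ | ⟨h1, h2⟩
        · rcases h' with ⟨-, rfl⟩ | ⟨h1', h2'⟩
          · rfl
          · exact absurd (h1' ▸ hadj) G.irrefl
        · exact absurd (h1 ▸ hadj) G.irrefl
      · exact absurd (Walk.fst_mem_support_of_mem_edges q h') hp.2
    · exact absurd (Walk.fst_mem_support_of_mem_edges q h) hp.2

lemma ne_of_isPath_of_length_pos {a b : V} {p : G.Walk a b} (hp : p.IsPath)
    (hl : 0 < p.length) : a ≠ b := by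
  cases p with
  | nil => simp at hl
  | cons hadj q =>
    rw [Walk.cons_isPath_iff] at hp
    rintro rfl
    exact hp.2 q.end_mem_support

end AuxDefs


section WalkAux
variable {V : Type*} [DecidableEq V] {G : SimpleGraph V}

lemma takeUntil_cons_ne {a x b u : V} (r : G.Adj a x) (q : G.Walk x b)
    (h : u ∈ (Walk.cons r q).support) (hne : a ≠ u) (hq : u ∈ q.support) :
    (Walk.cons r q).takeUntil u h = Walk.cons r (q.takeUntil u hq) := by
  simp [Walk.takeUntil, hne]

lemma mem_takeUntil_total {a b z z' : V} (p : G.Walk a b) (hz : z ∈ p.support)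
    (hz' : z' ∈ p.support) :
    z' ∈ (p.takeUntil z hz).support ∨ z ∈ (p.takeUntil z' hz').support := by
  induction p with
  | nil =>
    rw [Walk.mem_support_nil_iff] at hz hz'
    subst hz; subst hz'
    left; exact Walk.end_mem_support _
  | cons r q ih =>
    rename_i c d e
    by_cases hza : c = z
    · subst hza
      right; exact Walk.start_mem_support _
    · by_cases hz'a : c = z'
      · subst hz'a
        left; exact Walk.start_mem_support _
      · have hzq : z ∈ q.support := by
          rw [Walk.support_cons, List.mem_cons] at hz; rcases hz with h' | h'
          · exact absurd h'.symm hza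
          · exact h'
        have hz'q : z' ∈ q.support := by
          rw [Walk.support_cons, List.mem_cons] at hz'; rcases hz' with h' | h'
          · exact absurd h'.symm hz'a
          · exact h'
        rw [takeUntil_cons_ne r q hz hza hzq, takeUntil_cons_ne r q hz' hz'a hz'q]
        simp only [Walk.support_cons, List.mem_cons]
        rcases ih hzq hz'q with h' | h'
        · left; right; exact h'
        · right; right; exact h'
end WalkAux


section WalkAux
variable {V : Type*} {G : SimpleGraph V}


/-- the start of a path does not lie on the `dropUntil` part (unless it is the split point) -/
lemma start_not_mem_dropUntil_support [DecidableEq V] {a b z : V} {p : G.Walk a b}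
    (hp : p.IsPath) (hz : z ∈ p.support) (hne : z ≠ a) :
    a ∉ (p.dropUntil z hz).support := by
  intro ha
  have hsplit := p.take_spec hz
  have hnd : p.support.Nodup := hp.support_nodup
  rw [← hsplit, Walk.support_append] at hnd
  have hdisj := List.disjoint_of_nodup_append hnd
  have hat : a ∈ (p.takeUntil z hz).support := Walk.start_mem_support _
  have : a ∈ (p.dropUntil z hz).support.tail := by
    have hcons := Walk.support_eq_cons (p.dropUntil z hz)
    rw [hcons] at ha
    rcases List.mem_cons.mp ha with ha | ha
    · exact (hne ha.symm).elim
    · exact ha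
  exact hdisj hat this

/-- A maximal-length path inside `t` has an endpoint with at most 2 neighbours inside `t`,
given the cactus property. -/
lemma endpoint_degree_le_two [Fintype V] [DecidableEq V] [DecidableRel G.Adj] (hc : IsCactus G)
    (t : Finset V) (N : ℕ)
    (hmax : ∀ (a' b' : V) (p' : G.Walk a' b'), p'.IsPath → (∀ z ∈ p'.support, z ∈ t) →
      p'.length ≤ N)
    {a b : V} (p : G.Walk a b) (hp : p.IsPath) (hsup : ∀ z ∈ p.support, z ∈ t)
    (hlen : p.length = N) :
    (t.filter (fun y => G.Adj a y)).card ≤ 2 := by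
  by_contra hbig
  push_neg at hbig
  rw [Finset.two_lt_card_iff] at hbig
  obtain ⟨z₁, z₂, z₃, hz₁, hz₂, hz₃, h12, h13, h23⟩ := hbig
  rw [Finset.mem_filter] at hz₁ hz₂ hz₃
  -- all neighbours lie on the path
  have hmem : ∀ z, z ∈ t → G.Adj a z → z ∈ p.support := by
    intro z hzt hadj
    by_contra hzs
    have hpath : (Walk.cons hadj.symm p).IsPath := by
      rw [Walk.cons_isPath_iff]; exact ⟨hp, hzs⟩
    have := hmax z b (Walk.cons hadj.symm p) hpath (by
      intro w hw
      rw [Walk.support_cons, List.mem_cons] at hw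
      rcases hw with rfl | hw
      · exact hzt
      · exact hsup w hw)
    simp [Walk.length_cons, hlen] at this
  -- at most one neighbour can be the second vertex of p
  -- choose two neighbours z z' with s(a,z), s(a,z') ∉ p.edges
  have hchoose : ∃ z z', z ≠ z' ∧ z ∈ t ∧ z' ∈ t ∧ G.Adj a z ∧ G.Adj a z' ∧
      s(a, z) ∉ p.edges ∧ s(a, z') ∉ p.edges := by
    by_cases he1 : s(a, z₁) ∈ p.edges
    · refine ⟨z₂, z₃, h23, hz₂.1, hz₃.1, hz₂.2, hz₃.2, ?_, ?_⟩
      · intro h; exact h12 (edge_start_unique hp he1 h)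
      · intro h; exact h13 (edge_start_unique hp he1 h)
    · by_cases he2 : s(a, z₂) ∈ p.edges
      · refine ⟨z₁, z₃, h13, hz₁.1, hz₃.1, hz₁.2, hz₃.2, he1, ?_⟩
        intro h; exact h23 (edge_start_unique hp he2 h)
      · exact ⟨z₁, z₂, h12, hz₁.1, hz₂.1, hz₁.2, hz₂.2, he1, he2⟩
  obtain ⟨z, z', hne, hzt, hz't, hadj, hadj', hedge, hedge'⟩ := hchoose
  have hzs := hmem z hzt hadj
  have hz's := hmem z' hz't hadj'
  -- a key symmetric sub-argument
  have key : ∀ (z z' : V), z ≠ z' → G.Adj a z → G.Adj a z' →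
      s(a, z) ∉ p.edges → s(a, z') ∉ p.edges →
      (hz's : z' ∈ p.support) → z ∈ (p.takeUntil z' hz's).support → False := by
    clear hne hzt hz't hadj hadj' hedge hedge' hzs hz's z z'
    intro z z' hne hadj hadj' hedge hedge' hz's horder
    have hza : z ≠ a := hadj.ne'
    have hz'a : z' ≠ a := hadj'.ne'
    set q : G.Walk a z' := p.takeUntil z' hz's with hqdef
    have hq : q.IsPath := hp.takeUntil hz's
    have hqe : q.edges ⊆ p.edges := Walk.edges_takeUntil_subset p hz's
    have hqs : q.support ⊆ p.support := Walk.support_takeUntil_subset p hz's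
    -- cycle A
    have haq : s(z', a) ∉ q.edges := by
      intro h
      rw [Sym2.eq_swap] at h
      exact hedge' (hqe h)
    have hA : (Walk.cons hadj'.symm q).IsCycle :=
      (Walk.cons_isCycle_iff q hadj'.symm).mpr ⟨hq, haq⟩
    -- cycle B
    set r : G.Walk z z' := q.dropUntil z horder with hrdef
    have hr : r.IsPath := hq.dropUntil horder
    have har : a ∉ r.support := start_not_mem_dropUntil_support hq horder hza
    have hre : r.edges ⊆ q.edges := by
      intro e he
      have := q.take_spec horder
      rw [← this, Walk.edges_append]
      exact List.mem_append_right _ he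
    set w' : G.Walk z a := r.concat hadj'.symm with hw'def
    have hw' : w'.IsPath := by
      rw [← Walk.isPath_reverse_iff, hw'def, Walk.reverse_concat, Walk.cons_isPath_iff]
      constructor
      · rw [Walk.isPath_reverse_iff]; exact hr
      · rw [Walk.support_reverse]
        intro h
        exact har (List.mem_reverse.mp h)
    have hBe : s(a, z) ∉ w'.edges := by
      rw [hw'def, Walk.edges_concat, List.concat_eq_append, List.mem_append]
      rintro (h | h)
      · exact har (Walk.fst_mem_support_of_mem_edges r h)
      · simp only [List.mem_singleton] at h
        rw [Sym2.eq_iff] at h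
        rcases h with ⟨rfl, -⟩ | ⟨-, h2⟩
        · exact hadj'.ne rfl
        · exact hne h2
    have hB : (Walk.cons hadj w').IsCycle :=
      (Walk.cons_isCycle_iff w' hadj).mpr ⟨hw', hBe⟩
    -- distinct edge sets
    have hBnotA : s(a, z) ∉ (Walk.cons hadj'.symm q).edges := by
      rw [Walk.edges_cons, List.mem_cons]
      rintro (h | h)
      · rw [Sym2.eq_iff] at h
        rcases h with ⟨h1, -⟩ | ⟨-, h2⟩
        · exact hadj'.ne h1
        · exact hne h2
      · exact hedge (hqe h)
    have hediff : {e | e ∈ (Walk.cons hadj'.symm q).edges} ≠ {e | e ∈ (Walk.cons hadj w').edges} := by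
      intro h
      have hmm : s(a, z) ∈ {e | e ∈ (Walk.cons hadj'.symm q).edges} := by
        rw [h]; simp
      exact hBnotA hmm
    have hsub := hc.2 z' a _ _ hA hB hediff
    have haA : a ∈ (Walk.cons hadj'.symm q).support := by
      rw [Walk.support_cons, List.mem_cons]; right; exact Walk.start_mem_support _
    have haB : a ∈ (Walk.cons hadj w').support := Walk.start_mem_support _
    have hz'A : z' ∈ (Walk.cons hadj'.symm q).support := Walk.start_mem_support _
    have hz'B : z' ∈ (Walk.cons hadj w').support := by
      rw [Walk.support_cons, List.mem_cons]
      right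
      rw [hw'def, Walk.support_concat, List.mem_append]
      left; exact Walk.end_mem_support r
    have : a = z' := hsub ⟨haA, haB⟩ ⟨hz'A, hz'B⟩
    exact hz'a this.symm
  rcases mem_takeUntil_total p hzs hz's with h | h
  · exact key z' z hne.symm hadj' hadj hedge' hedge hzs h
  · exact key z z' hne hadj hadj' hedge hedge' hz's h

end WalkAux
section CactusLemmas
variable {V : Type*} {G : SimpleGraph V}

/-- every finite vertex set (with ≥ 2 elements) in a cactus has a vertex `≠ v`
with at most two neighbours inside the set -/
lemma cactus_low_deg [Fintype V] [DecidableEq V] [DecidableRel G.Adj] (hc : IsCactus G)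
    (t : Finset V) (hcard : 2 ≤ t.card) (v : V) (hv : v ∈ t) :
    ∃ x ∈ t, x ≠ v ∧ (t.filter (fun y => G.Adj x y)).card ≤ 2 := by
  set PS : Set ℕ := {n | ∃ (a b : V) (p : G.Walk a b), p.IsPath ∧
      (∀ z ∈ p.support, z ∈ t) ∧ p.length = n} with hPS
  have h0 : 0 ∈ PS := ⟨v, v, Walk.nil, by simp, by simp [hv], rfl⟩
  have hbdd : ∀ n ∈ PS, n ≤ Fintype.card V := by
    rintro n ⟨a, b, p, hp, -, rfl⟩
    exact le_of_lt hp.length_lt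
  set N := sSup PS with hNdef
  have hNmem : N ∈ PS := Nat.sSup_mem ⟨0, h0⟩ ⟨Fintype.card V, hbdd⟩
  have hNmax : ∀ n ∈ PS, n ≤ N := fun n hn => le_csSup ⟨Fintype.card V, hbdd⟩ hn
  obtain ⟨a, b, p, hp, hsup, hlen⟩ := hNmem
  have hmax : ∀ (a' b' : V) (p' : G.Walk a' b'), p'.IsPath →
      (∀ z ∈ p'.support, z ∈ t) → p'.length ≤ N :=
    fun a' b' p' hp' hs' => hNmax _ ⟨a', b', p', hp', hs', rfl⟩
  by_cases hN0 : N = 0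
  · -- no edges inside t at all
    obtain ⟨x, hx, hxv⟩ := Finset.exists_mem_ne (s := t) (by omega) v
    refine ⟨x, hx, hxv, ?_⟩
    have : t.filter (fun y => G.Adj x y) = ∅ := by
      rw [Finset.filter_eq_empty_iff]
      intro y hy hadj
      have hpath : (Walk.cons hadj Walk.nil).IsPath := by simp [hadj.ne]
      have := hmax x y _ hpath (by
        intro z hz
        simp only [Walk.support_cons, Walk.support_nil, List.mem_cons,
          List.mem_singleton] at hz
        rcases hz with rfl | rfl | h
        · exact hx
        · exact hy
        · simp at h)
      simp [hN0] at this
    simp [this]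
  · have hab : a ≠ b := ne_of_isPath_of_length_pos hp (by omega)
    by_cases hav : a = v
    · refine ⟨b, hsup b p.end_mem_support, by rw [← hav]; exact hab.symm, ?_⟩
      exact endpoint_degree_le_two hc t N hmax p.reverse hp.reverse
        (by intro z hz; rw [Walk.support_reverse] at hz; exact hsup z (List.mem_reverse.mp hz))
        (by simp [hlen])
    · exact ⟨a, hsup a p.start_mem_support, hav,
        endpoint_degree_le_two hc t N hmax p hp hsup hlen⟩

/-- a vertex outside `s` cannot have three distinct neighbours in the same
connected piece of `s`, in a cactus -/
lemma cactus_three_nbrs (hc : IsCactus G) {s : Set V} {v : V} (hv : v ∉ s)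
    {w₁ w₂ w₃ : V} (a1 : G.Adj v w₁) (a2 : G.Adj v w₂) (a3 : G.Adj v w₃)
    (hne12 : w₁ ≠ w₂) (hne13 : w₁ ≠ w₃) (hne23 : w₂ ≠ w₃)
    (r12 : SReach G s w₁ w₂) (r23 : SReach G s w₂ w₃) : False := by
  classical
  -- extract paths within s
  have hpath : ∀ {x y : V}, SReach G s x y → ∃ p : G.Walk x y, p.IsPath ∧
      ∀ z ∈ p.support, z ∈ s := by
    rintro x y ⟨p, hp⟩
    exact ⟨p.toPath, p.toPath.2, fun z hz => hp z (Walk.support_toPath_subset p hz)⟩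
  obtain ⟨P₁, hP₁, hS₁⟩ := hpath r12
  obtain ⟨P₂, hP₂, hS₂⟩ := hpath r23
  -- build the two cycles through v
  have mkCycle : ∀ {x y : V} (P : G.Walk x y), x ≠ y → P.IsPath → (∀ z ∈ P.support, z ∈ s) →
      ∀ (ax : G.Adj v x) (ay : G.Adj v y), (Walk.cons ax (P.concat ay.symm)).IsCycle := by
    intro x y P hxy hP hS ax ay
    have hvP : v ∉ P.support := fun h => hv (hS v h)
    have hPath : (P.concat ay.symm).IsPath := by
      rw [← Walk.isPath_reverse_iff, Walk.reverse_concat, Walk.cons_isPath_iff]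
      refine ⟨by rw [Walk.isPath_reverse_iff]; exact hP, ?_⟩
      rw [Walk.support_reverse]
      intro h
      exact hvP (List.mem_reverse.mp h)
    refine (Walk.cons_isCycle_iff _ ax).mpr ⟨hPath, ?_⟩
    rw [Walk.edges_concat, List.concat_eq_append, List.mem_append]
    rintro (h | h)
    · exact hvP (Walk.fst_mem_support_of_mem_edges P h)
    · simp only [List.mem_singleton] at h
      rw [Sym2.eq_iff] at h
      rcases h with ⟨-, h2⟩ | ⟨-, h2⟩
      · exact ax.ne h2.symm
      · exact hxy h2
  have hC₁ : (Walk.cons a1 (P₁.concat a2.symm)).IsCycle := mkCycle P₁ hne12 hP₁ hS₁ a1 a2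
  have hC₂ : (Walk.cons a2 (P₂.concat a3.symm)).IsCycle := mkCycle P₂ hne23 hP₂ hS₂ a2 a3
  -- the edge s(v,w₁) is in C₁ but not C₂
  have hkey : s(v, w₁) ∉ (Walk.cons a2 (P₂.concat a3.symm)).edges := by
    rw [Walk.edges_cons, Walk.edges_concat, List.concat_eq_append, List.mem_cons,
      List.mem_append]
    rintro (h | h | h)
    · rw [Sym2.eq_iff] at h
      rcases h with ⟨-, h2⟩ | ⟨h1, -⟩
      · exact hne12 h2
      · exact hv (by rw [h1]; exact hS₂ w₂ P₂.start_mem_support)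
    · exact hv (hS₂ v (Walk.fst_mem_support_of_mem_edges P₂ h))
    · simp only [List.mem_singleton] at h
      rw [Sym2.eq_iff] at h
      rcases h with ⟨-, h2⟩ | ⟨-, h2⟩
      · exact a1.ne h2.symm
      · exact hne13 h2
  have hediff : {e | e ∈ (Walk.cons a1 (P₁.concat a2.symm)).edges} ≠
      {e | e ∈ (Walk.cons a2 (P₂.concat a3.symm)).edges} := by
    intro h
    have hmm : s(v, w₁) ∈ {e | e ∈ (Walk.cons a1 (P₁.concat a2.symm)).edges} := by simp
    rw [h] at hmm
    exact hkey hmm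
  have hsub := hc.2 v v _ _ hC₁ hC₂ hediff
  have hv1 : v ∈ (Walk.cons a1 (P₁.concat a2.symm)).support := Walk.start_mem_support _
  have hv2 : v ∈ (Walk.cons a2 (P₂.concat a3.symm)).support := Walk.start_mem_support _
  have hw21 : w₂ ∈ (Walk.cons a1 (P₁.concat a2.symm)).support := by
    rw [Walk.support_cons, List.mem_cons]
    right
    rw [Walk.support_concat, List.mem_append]
    left; exact P₁.end_mem_support
  have hw22 : w₂ ∈ (Walk.cons a2 (P₂.concat a3.symm)).support := by
    rw [Walk.support_cons, List.mem_cons]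
    right
    rw [Walk.support_concat, List.mem_append]
    left; exact P₂.start_mem_support
  have : v = w₂ := hsub ⟨hv1, hv2⟩ ⟨hw21, hw22⟩
  exact hv (this ▸ hS₂ w₂ P₂.start_mem_support)

end CactusLemmas
section Greedy
variable {V : Type*} [DecidableEq V] {G : SimpleGraph V} [DecidableRel G.Adj]

/-- `GoodL G d l`: processing `l` after the already-colored set `d`, every vertex has
at most 2 earlier neighbours. -/
def GoodL (G : SimpleGraph V) [DecidableRel G.Adj] : Finset V → List V → Prop
  | _, [] => True
  | d, x :: xs => (d.filter (fun y => G.Adj x y)).card ≤ 2 ∧ GoodL G (insert x d) xs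

@[simp] lemma goodL_nil {d : Finset V} : GoodL G d [] := trivial

lemma goodL_cons {d : Finset V} {x : V} {xs : List V} :
    GoodL G d (x :: xs) ↔
      (d.filter (fun y => G.Adj x y)).card ≤ 2 ∧ GoodL G (insert x d) xs := Iff.rfl

lemma aux_insert_union_comm (a : V) (d e : Finset V) :
    insert a d ∪ e = d ∪ insert a e := by
  ext y; simp only [Finset.mem_union, Finset.mem_insert]; tauto

lemma goodL_append_singleton {d : Finset V} {l : List V} {x : V} :
    GoodL G d (l ++ [x]) ↔ GoodL G d l ∧
      ((d ∪ l.toFinset).filter (fun y => G.Adj x y)).card ≤ 2 := by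
  induction l generalizing d with
  | nil => simp [goodL_cons]
  | cons a as ih =>
    rw [List.cons_append, goodL_cons, goodL_cons, ih, List.toFinset_cons,
      aux_insert_union_comm]
    tauto

lemma goodL_split {d : Finset V} {l l₁ l₂ : List V} {x : V} (hgl : GoodL G d l)
    (hsplit : l = l₁ ++ x :: l₂) :
    ((d ∪ l₁.toFinset).filter (fun y => G.Adj x y)).card ≤ 2 := by
  induction l₁ generalizing d l with
  | nil =>
    subst hsplit
    simpa using hgl.1
  | cons a as ih =>
    subst hsplit
    have := ih (d := insert a d) (l := as ++ x :: l₂) hgl.2 rfl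
    rwa [aux_insert_union_comm, ← List.toFinset_cons] at this

/-- first-fit greedy coloring along a list -/
noncomputable def greedyCol (G : SimpleGraph V) [DecidableRel G.Adj] :
    List V → Finset V → (V → ℕ) → (V → ℕ)
  | [], _, f => f
  | x :: xs, d, f =>
      greedyCol G xs (insert x d)
        (Function.update f x (mex1 ((d.filter (fun y => G.Adj x y)).image f)))

lemma greedyCol_nil {d : Finset V} {f : V → ℕ} : greedyCol G [] d f = f := rfl

lemma greedyCol_cons {x : V} {xs : List V} {d : Finset V} {f : V → ℕ} :
    greedyCol G (x :: xs) d f =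
      greedyCol G xs (insert x d)
        (Function.update f x (mex1 ((d.filter (fun y => G.Adj x y)).image f))) := rfl

lemma greedyCol_eq_of_not_mem {l : List V} {d : Finset V} {f : V → ℕ} {x : V}
    (hx : x ∉ l) : greedyCol G l d f x = f x := by
  induction l generalizing d f with
  | nil => rfl
  | cons a as ih =>
    simp only [List.mem_cons, not_or] at hx
    rw [greedyCol_cons, ih hx.2, Function.update_of_ne hx.1]

lemma greedyCol_spec {l : List V} {d : Finset V} {f : V → ℕ}
    (hnd : l.Nodup) (hdisj : ∀ x ∈ l, x ∉ d) :
    ∀ (l₁ l₂ : List V) (x : V), l = l₁ ++ x :: l₂ →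
      greedyCol G l d f x =
        mex1 (((d ∪ l₁.toFinset).filter (fun y => G.Adj x y)).image (greedyCol G l d f)) := by
  induction l generalizing d f with
  | nil => intro l₁ l₂ x h; exact absurd h (by simp)
  | cons a as ih =>
    intro l₁ l₂ x hsplit
    have hand : a ∉ as ∧ as.Nodup := List.nodup_cons.mp hnd
    cases l₁ with
    | nil =>
      simp only [List.nil_append, List.cons.injEq] at hsplit
      obtain ⟨rfl, rfl⟩ := hsplit
      rw [greedyCol_cons, greedyCol_eq_of_not_mem hand.1, Function.update_self]
      congr 1
      rw [List.toFinset_nil, Finset.union_empty]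
      apply Finset.image_congr
      intro y hy
      simp only [Finset.coe_filter, Set.mem_setOf_eq] at hy
      have hya : y ≠ a := fun h => (hdisj a (by simp)) (h ▸ hy.1)
      have hyas : y ∉ as := fun h => (hdisj y (by simp [h])) hy.1
      rw [greedyCol_eq_of_not_mem hyas, Function.update_of_ne hya]
    | cons b bs =>
      simp only [List.cons_append, List.cons.injEq] at hsplit
      obtain ⟨rfl, hsplit⟩ := hsplit
      rw [greedyCol_cons]
      rw [ih hand.2 (by
        intro y hy
        simp only [Finset.mem_insert]
        rintro (rfl | hyd)
        · exact hand.1 hy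
        · exact hdisj y (by simp [hy]) hyd) bs l₂ x hsplit]
      rw [aux_insert_union_comm, ← List.toFinset_cons]

end Greedy
section Peel
variable {V : Type*} [Fintype V] [DecidableEq V] {G : SimpleGraph V} [DecidableRel G.Adj]

lemma exists_goodList (hc : IsCactus G) (t : Finset V) (v : V) (hv : v ∈ t) :
    ∃ l : List V, l.Nodup ∧ v ∉ l ∧ insert v l.toFinset = t ∧ GoodL G {v} l := by
  generalize hn : t.card = n
  induction n using Nat.strong_induction_on generalizing t with
  | _ n ih =>
    by_cases hcard : t.card ≤ 1
    · have : t = {v} := by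
        apply Finset.eq_singleton_iff_unique_mem.mpr
        refine ⟨hv, fun x hx => ?_⟩
        by_contra hxv
        have : 2 ≤ t.card := Finset.one_lt_card_iff.mpr ⟨x, v, hx, hv, hxv⟩
        omega
      exact ⟨[], by simp, by simp, by simp [this], goodL_nil⟩
    · push_neg at hcard
      obtain ⟨x, hxt, hxv, hdeg⟩ := cactus_low_deg hc t (by omega) v hv
      have hvx : v ∈ t.erase x := Finset.mem_erase.mpr ⟨(Ne.symm hxv), hv⟩
      have hcarderase : (t.erase x).card = n - 1 := by
        rw [Finset.card_erase_of_mem hxt, hn]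
      obtain ⟨l', hnd', hvl', hins', hgl'⟩ :=
        ih (n - 1) (by omega) (t.erase x) hvx hcarderase
      have hxl' : x ∉ l' := by
        intro h
        have : x ∈ t.erase x := by
          rw [← hins']; exact Finset.mem_insert_of_mem (List.mem_toFinset.mpr h)
        exact (Finset.mem_erase.mp this).1 rfl
      have hmem' : ∀ y, y ∈ insert v l'.toFinset ↔ y ∈ t.erase x := fun y => by rw [hins']
      refine ⟨l' ++ [x], ?_, ?_, ?_, ?_⟩
      · rw [List.nodup_append]
        refine ⟨hnd', by simp, ?_⟩
        intro y hy b hb hyb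
        simp only [List.mem_singleton] at hb
        exact hxl' (hb ▸ hyb ▸ hy)
      · rw [List.mem_append]
        rintro (h | h)
        · exact hvl' h
        · simp only [List.mem_singleton] at h
          exact hxv h.symm
      · ext y
        constructor
        · intro hy
          simp only [Finset.mem_insert, List.mem_toFinset, List.mem_append,
            List.mem_singleton] at hy
          rcases hy with rfl | hy | rfl
          · exact hv
          · have := (hmem' y).mp (Finset.mem_insert_of_mem (List.mem_toFinset.mpr hy))
            exact (Finset.mem_erase.mp this).2
          · exact hxt
        · intro hy
          simp only [Finset.mem_insert, List.mem_toFinset, List.mem_append,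
            List.mem_singleton]
          by_cases hyx : y = x
          · right; right; exact hyx
          · have : y ∈ insert v l'.toFinset := (hmem' y).mpr (Finset.mem_erase.mpr ⟨hyx, hy⟩)
            rcases Finset.mem_insert.mp this with rfl | h
            · left; rfl
            · right; left; exact List.mem_toFinset.mp h
      · rw [goodL_append_singleton]
        refine ⟨hgl', ?_⟩
        have hsub : ({v} : Finset V) ∪ l'.toFinset ⊆ t := by
          intro y hy
          rw [show ({v} : Finset V) ∪ l'.toFinset = insert v l'.toFinset from by ext z; simp] at hy
          exact Finset.erase_subset x t ((hmem' y).mp hy)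
        calc ((({v} : Finset V) ∪ l'.toFinset).filter (fun y => G.Adj x y)).card
            ≤ (t.filter (fun y => G.Adj x y)).card :=
              Finset.card_le_card (Finset.filter_subset_filter _ hsub)
          _ ≤ 2 := hdeg

end Peel
section StepMain
variable {V : Type*} [Fintype V] {G : SimpleGraph V}

lemma step_main (hc : IsCactus G) {s : Set V} {v : V} (hv : v ∉ s) {k : ℕ}
    {c : ↥s → ℕ} (hk : 3 ≤ k) (hpc : IsProperKColoring (G.induce s) k c)
    {u : ↥s} (huk : c u = k) (hun : IsNiceVertex (G.induce s) k c u) :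
    ∃ c' : ↥(insert v s) → ℕ,
      IsProperKColoring (G.induce (insert v s)) k c' ∧
      (∃ u' : ↥(insert v s), c' u' = k ∧ IsNiceVertex (G.induce (insert v s)) k c' u') ∧
      ((∀ i j : ℕ, 1 ≤ i → i < j → j ≤ k → ∀ x : ↥s, c x = j →
          ∃ w, (G.induce s).Adj x w ∧ c w = i) →
        ∀ i j : ℕ, 1 ≤ i → i < j → j ≤ k → ∀ x : ↥(insert v s), c' x = j →
          ∃ w, (G.induce (insert v s)).Adj x w ∧ c' w = i) := by
  classical
  set cV : V → ℕ := fun x => if h : x ∈ s then c ⟨x, h⟩ else 0 with hcV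
  have hcVs : ∀ (x : V) (h : x ∈ s), cV x = c ⟨x, h⟩ := fun x h => dif_pos h
  set Cstar : Set V := {x | SReach G s x ↑u} with hCstar
  have hCs : Cstar ⊆ s := fun x hx => hx.mem_left
  have huC : ↑u ∈ Cstar := SReach.refl u.2
  have hclose : ∀ {x y : V}, x ∈ Cstar → y ∈ s → G.Adj y x → y ∈ Cstar :=
    fun {x y} hx hy hadj => (SReach.adj hy hx.mem_left hadj).trans hx
  have hsep : ∀ {x y : V}, x ∈ s → x ∉ Cstar → y ∈ Cstar → ¬G.Adj x y :=
    fun {x y} hx hxn hy hadj => hxn ((SReach.adj hx hy.mem_left hadj).trans hy)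
  set CF : Finset V := Finset.univ.filter (· ∈ Cstar) with hCFdef
  have hCF : ∀ x, x ∈ CF ↔ x ∈ Cstar := fun x => by simp [hCFdef]
  set AF : Finset V := CF.filter (fun y => G.Adj v y) with hAFdef
  have hAF : ∀ x, x ∈ AF ↔ x ∈ Cstar ∧ G.Adj v x := fun x => by simp [hAFdef, hCF, Finset.mem_filter]
  have hAcard : AF.card ≤ 2 := by
    by_contra hbig
    push_neg at hbig
    rw [Finset.two_lt_card_iff] at hbig
    obtain ⟨w₁, w₂, w₃, hw₁, hw₂, hw₃, h12, h13, h23⟩ := hbig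
    rw [hAF] at hw₁ hw₂ hw₃
    exact cactus_three_nbrs hc hv hw₁.2 hw₂.2 hw₃.2 h12 h13 h23
      (hw₁.1.trans hw₂.1.symm) (hw₂.1.trans hw₃.1.symm)
  set m₀ : ℕ := mex1 (AF.image cV) with hm₀def
  have hm₀3 : m₀ ≤ 3 := by
    have h1 := mex1_le_card_add_one (AF.image cV)
    have h2 := Finset.card_image_le (s := AF) (f := cV)
    omega
  have hm₀1 : 1 ≤ m₀ := one_le_mex1 _
  have hm₀nbr : ∀ y, y ∈ Cstar → G.Adj v y → cV y ≠ m₀ := by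
    intro y hy hadj h
    exact mex1_not_mem (AF.image cV)
      (Finset.mem_image.mpr ⟨y, (hAF y).mpr ⟨hy, hadj⟩, h⟩)
  have hm₀small : ∀ i, 1 ≤ i → i < m₀ → ∃ y, y ∈ Cstar ∧ G.Adj v y ∧ cV y = i := by
    intro i h1 h2
    obtain ⟨y, hy, hcy⟩ := Finset.mem_image.mp (mem_of_lt_mex1 h1 h2)
    exact ⟨y, ((hAF y).mp hy).1, ((hAF y).mp hy).2, hcy⟩
  -- the peel order on the rest
  set sF' : Finset V := Finset.univ.filter (· ∈ insert v s) with hsF'def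
  set QF : Finset V := sF' \ CF with hQFdef
  have hvQF : v ∈ QF := by
    simp only [hQFdef, Finset.mem_sdiff, hsF'def, Finset.mem_filter, Finset.mem_univ,
      true_and, hCF]
    exact ⟨Set.mem_insert v s, fun h => hv (hCs h)⟩
  obtain ⟨l, hlnd, hvl, hlins, hgl⟩ := exists_goodList hc QF v hvQF
  have hlQ : ∀ x ∈ l, x ∈ QF := by
    intro x hx
    rw [← hlins]
    exact Finset.mem_insert_of_mem (List.mem_toFinset.mpr hx)
  have hlmem : ∀ x ∈ l, x ∈ s ∧ x ∉ Cstar ∧ x ≠ v := by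
    intro x hx
    have hq := hlQ x hx
    simp only [hQFdef, Finset.mem_sdiff, hsF'def, Finset.mem_filter, Finset.mem_univ,
      true_and, hCF] at hq
    have hxv : x ≠ v := fun h => hvl (h ▸ hx)
    rcases hq.1 with h | h
    · exact absurd h hxv
    · exact ⟨h, hq.2, hxv⟩
  set d₀ : Finset V := insert v CF with hd₀def
  set f₀ : V → ℕ := Function.update cV v m₀ with hf₀def
  set F : V → ℕ := greedyCol G l d₀ f₀ with hFdef
  have hdisj : ∀ x ∈ l, x ∉ d₀ := by
    intro x hx
    obtain ⟨hxs, hxC, hxv⟩ := hlmem x hx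
    simp only [hd₀def, Finset.mem_insert, hCF]
    rintro (rfl | h)
    · exact hxv rfl
    · exact hxC h
  have hFC : ∀ x, x ∈ Cstar → F x = cV x := by
    intro x hx
    have hxl : x ∉ l := fun h => (hlmem x h).2.1 hx
    rw [hFdef, greedyCol_eq_of_not_mem hxl, hf₀def,
      Function.update_of_ne (fun h => hv (hCs (by rw [← h]; exact hx)))]
  have hFv : F v = m₀ := by
    rw [hFdef, greedyCol_eq_of_not_mem hvl, hf₀def, Function.update_self]
  -- trichotomy
  have htri : ∀ x : V, x ∈ insert v s → x = v ∨ x ∈ Cstar ∨ x ∈ l := by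
    intro x hx
    by_cases hxv : x = v
    · exact Or.inl hxv
    · by_cases hxC : x ∈ Cstar
      · exact Or.inr (Or.inl hxC)
      · right; right
        have hxQ : x ∈ QF := by
          simp only [hQFdef, Finset.mem_sdiff, hsF'def, Finset.mem_filter, Finset.mem_univ,
            true_and, hCF]
          exact ⟨hx, hxC⟩
        rw [← hlins] at hxQ
        rcases Finset.mem_insert.mp hxQ with h | h
        · exact absurd h hxv
        · exact List.mem_toFinset.mp h
  -- the master fact about greedy-colored vertices
  have hmex : ∀ (l₁ l₂ : List V) (x : V), l = l₁ ++ x :: l₂ →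
      F x = mex1 (((d₀ ∪ l₁.toFinset).filter (fun y => G.Adj x y)).image F) ∧
      ((d₀ ∪ l₁.toFinset).filter (fun y => G.Adj x y)).card ≤ 2 := by
    intro l₁ l₂ x hsplit
    have hxl : x ∈ l := by rw [hsplit]; simp
    obtain ⟨hxs, hxC, hxv⟩ := hlmem x hxl
    constructor
    · exact greedyCol_spec hlnd hdisj l₁ l₂ x hsplit
    · have hsub : (d₀ ∪ l₁.toFinset).filter (fun y => G.Adj x y) ⊆
          (({v} : Finset V) ∪ l₁.toFinset).filter (fun y => G.Adj x y) := by
        intro y hy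
        rw [Finset.mem_filter] at hy ⊢
        refine ⟨?_, hy.2⟩
        rcases Finset.mem_union.mp hy.1 with h | h
        · rcases Finset.mem_insert.mp h with rfl | h
          · exact Finset.mem_union_left _ (Finset.mem_singleton_self _)
          · exact absurd hy.2 (hsep hxs hxC ((hCF y).mp h))
        · exact Finset.mem_union_right _ h
      exact le_trans (Finset.card_le_card hsub) (goodL_split hgl hsplit)
  have hbounds : ∀ x ∈ l, 1 ≤ F x ∧ F x ≤ 3 := by
    intro x hx
    obtain ⟨l₁, l₂, hsplit⟩ := List.append_of_mem hx
    obtain ⟨hfx, hcard⟩ := hmex l₁ l₂ x hsplit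
    refine ⟨hfx ▸ one_le_mex1 _, ?_⟩
    have h1 := mex1_le_card_add_one
      (((d₀ ∪ l₁.toFinset).filter (fun y => G.Adj x y)).image F)
    have h2 := Finset.card_image_le
      (s := (d₀ ∪ l₁.toFinset).filter (fun y => G.Adj x y)) (f := F)
    omega
  have hPll : ∀ x ∈ l, ∀ (l₁ l₂ : List V), l = l₁ ++ x :: l₂ →
      ∀ y, G.Adj x y → y ∈ d₀ ∪ l₁.toFinset → F x ≠ F y := by
    intro x hx l₁ l₂ hsplit y hadj hymem
    obtain ⟨hfx, -⟩ := hmex l₁ l₂ x hsplit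
    rw [hfx]
    intro h
    apply mex1_not_mem (((d₀ ∪ l₁.toFinset).filter (fun y => G.Adj x y)).image F)
    rw [h]
    exact Finset.mem_image.mpr ⟨y, Finset.mem_filter.mpr ⟨hymem, hadj⟩, rfl⟩
  have hprop_lv : ∀ x ∈ l, G.Adj x v → F x ≠ F v := by
    intro x hx hadj
    obtain ⟨l₁, l₂, hsplit⟩ := List.append_of_mem hx
    exact hPll x hx l₁ l₂ hsplit v hadj
      (Finset.mem_union_left _ (Finset.mem_insert_self _ _))
  have hprop_lC : ∀ x ∈ l, ∀ y, y ∈ Cstar → ¬G.Adj x y := by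
    intro x hx y hy
    obtain ⟨hxs, hxC, -⟩ := hlmem x hx
    exact hsep hxs hxC hy
  have hprop_ll : ∀ x ∈ l, ∀ y ∈ l, G.Adj x y → F x ≠ F y := by
    intro x hx y hy hadj
    obtain ⟨l₁, l₂, hsplit⟩ := List.append_of_mem hx
    have hxy : x ≠ y := hadj.ne
    have hyy : y ∈ l₁ ++ x :: l₂ := hsplit ▸ hy
    rcases List.mem_append.mp hyy with h | h
    · exact hPll x hx l₁ l₂ hsplit y hadj
        (Finset.mem_union_right _ (List.mem_toFinset.mpr h))
    · rcases List.mem_cons.mp h with h' | h'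
      · exact absurd h'.symm hxy
      · obtain ⟨p, q, hpq⟩ := List.append_of_mem h'
        have hsplit2 : l = (l₁ ++ x :: p) ++ y :: q := by
          rw [hsplit, hpq]
          simp
        intro hFeq
        refine hPll y hy (l₁ ++ x :: p) q hsplit2 x hadj.symm ?_ hFeq.symm
        refine Finset.mem_union_right _ (List.mem_toFinset.mpr ?_)
        simp
  have hgrundy_l : ∀ x ∈ l, ∀ i, 1 ≤ i → i < F x →
      ∃ y, G.Adj x y ∧ y ∈ insert v s ∧ F y = i := by
    intro x hx i h1 h2
    obtain ⟨l₁, l₂, hsplit⟩ := List.append_of_mem hx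
    obtain ⟨hfx, -⟩ := hmex l₁ l₂ x hsplit
    rw [hfx] at h2
    obtain ⟨y, hy, hFy⟩ := Finset.mem_image.mp (mem_of_lt_mex1 h1 h2)
    rw [Finset.mem_filter] at hy
    refine ⟨y, hy.2, ?_, hFy⟩
    rcases Finset.mem_union.mp hy.1 with h | h
    · rcases Finset.mem_insert.mp h with rfl | h
      · exact Set.mem_insert _ _
      · exact Set.mem_insert_of_mem _ (hCs ((hCF y).mp h))
    · have : y ∈ l := by
        rw [hsplit]
        exact List.mem_append.mpr (Or.inl (List.mem_toFinset.mp h))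
      exact Set.mem_insert_of_mem _ (hlmem y this).1
  -- the new coloring
  refine ⟨fun x => F ↑x, ⟨?_, ?_, ?_⟩, ?_, ?_⟩
  · -- colors in range
    rintro ⟨x, hx⟩
    simp only
    rcases htri x hx with rfl | h | h
    · rw [hFv]
      exact ⟨hm₀1, by omega⟩
    · rw [hFC x h, hcVs x (hCs h)]
      exact hpc.1 ⟨x, hCs h⟩
    · obtain ⟨h1, h2⟩ := hbounds x h
      exact ⟨h1, by omega⟩
  · -- proper
    rintro ⟨a, ha⟩ ⟨b, hb⟩ hadj
    have hadj' : G.Adj a b := hadj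
    simp only
    rcases htri a ha with rfl | hA | hA <;> rcases htri b hb with rfl | hB | hB
    · exact absurd hadj' (G.irrefl)
    · rw [hFv, hFC b hB]
      exact fun h => hm₀nbr b hB hadj' h.symm
    · exact fun h => hprop_lv b hB hadj'.symm h.symm
    · rw [hFv, hFC a hA]
      exact hm₀nbr a hA hadj'.symm
    · rw [hFC a hA, hFC b hB, hcVs a (hCs hA), hcVs b (hCs hB)]
      exact hpc.2.1 ⟨a, hCs hA⟩ ⟨b, hCs hB⟩ hadj'
    · exact absurd hadj'.symm (hprop_lC b hB a hA)
    · exact hprop_lv a hA hadj'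
    · exact absurd hadj' (hprop_lC a hA b hB)
    · exact hprop_ll a hA b hB hadj'
  · -- all colors used
    intro j hj
    by_cases hjk : j = k
    · refine ⟨⟨↑u, Set.mem_insert_of_mem _ u.2⟩, ?_⟩
      simp only
      rw [hFC ↑u huC, hcVs ↑u u.2]
      rw [Subtype.eta]
      rw [huk, hjk]
    · obtain ⟨w, hadjw, hcw⟩ := hun.1 j hj (by rw [huk]; exact hjk)
      have hwC : ↑w ∈ Cstar := hclose huC w.2 hadjw.symm
      refine ⟨⟨↑w, Set.mem_insert_of_mem _ w.2⟩, ?_⟩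
      simp only
      rw [hFC ↑w hwC, hcVs ↑w w.2, Subtype.eta, hcw]
  · -- nice vertex
    refine ⟨⟨↑u, Set.mem_insert_of_mem _ u.2⟩, ?_, ?_, ?_⟩
    · simp only
      rw [hFC ↑u huC, hcVs ↑u u.2, Subtype.eta, huk]
    · -- b-vertex
      intro j hj hjne
      have hjne' : j ≠ c u := by
        intro h
        apply hjne
        simp only
        rw [hFC ↑u huC, hcVs ↑u u.2, Subtype.eta, ← h]
      obtain ⟨w, hadjw, hcw⟩ := hun.1 j hj hjne'
      have hwC : ↑w ∈ Cstar := hclose huC w.2 hadjw.symm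
      refine ⟨⟨↑w, Set.mem_insert_of_mem _ w.2⟩, hadjw, ?_⟩
      simp only
      rw [hFC ↑w hwC, hcVs ↑w w.2, Subtype.eta, hcw]
    · -- b-vertex neighbours
      intro j hj hjne
      have hjne' : j ≠ c u := by
        intro h
        apply hjne
        simp only
        rw [hFC ↑u huC, hcVs ↑u u.2, Subtype.eta, ← h]
      obtain ⟨w, hadjw, hcw, hbw⟩ := hun.2 j hj hjne'
      have hwC : ↑w ∈ Cstar := hclose huC w.2 hadjw.symm
      refine ⟨⟨↑w, Set.mem_insert_of_mem _ w.2⟩, hadjw, ?_, ?_⟩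
      · simp only
        rw [hFC ↑w hwC, hcVs ↑w w.2, Subtype.eta, hcw]
      · intro i hi hine
        have hine' : i ≠ c w := by
          intro h
          apply hine
          simp only
          rw [hFC ↑w hwC, hcVs ↑w w.2, Subtype.eta, ← h]
        obtain ⟨y, hadjy, hcy⟩ := hbw i hi hine'
        have hyC : ↑y ∈ Cstar := hclose hwC y.2 hadjy.symm
        refine ⟨⟨↑y, Set.mem_insert_of_mem _ y.2⟩, hadjy, ?_⟩
        simp only
        rw [hFC ↑y hyC, hcVs ↑y y.2, Subtype.eta, hcy]
  · -- Grundy is preserved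
    intro hgr i j h1 hij hjk x hxj
    obtain ⟨xv, hxv⟩ := x
    simp only at hxj
    rcases htri xv hxv with rfl | h | h
    · rw [hFv] at hxj
      obtain ⟨y, hyC, hyadj, hycV⟩ := hm₀small i h1 (by omega)
      refine ⟨⟨y, Set.mem_insert_of_mem _ (hCs hyC)⟩, hyadj, ?_⟩
      simp only
      rw [hFC y hyC, hycV]
    · rw [hFC xv h, hcVs xv (hCs h)] at hxj
      obtain ⟨w, hadjw, hcw⟩ := hgr i j h1 hij hjk ⟨xv, hCs h⟩ hxj
      have hwC : ↑w ∈ Cstar := hclose h w.2 hadjw.symm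
      refine ⟨⟨↑w, Set.mem_insert_of_mem _ w.2⟩, hadjw, ?_⟩
      simp only
      rw [hFC ↑w hwC, hcVs ↑w w.2, Subtype.eta, hcw]
    · obtain ⟨y, hadjy, hys, hFy⟩ := hgrundy_l xv h i h1 (by rw [hxj]; omega)
      exact ⟨⟨y, hys⟩, hadjy, hFy⟩

end StepMain
section StepSmall
variable {V : Type*} {G : SimpleGraph V}

lemma step_small {s : Set V} {v : V} (hv : v ∉ s) {k : ℕ}
    {c : ↥s → ℕ} (hk : k ≤ 2) (hpc : IsProperKColoring (G.induce s) k c)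
    {u : ↥s} (huk : c u = k) (hun : IsNiceVertex (G.induce s) k c u) :
    ∃ k', k ≤ k' ∧ ∃ c' : ↥(insert v s) → ℕ,
      IsZColoring (G.induce (insert v s)) k' c' := by
  classical
  have hk1 : 1 ≤ k := le_trans (hpc.1 u).1 (le_of_eq huk)
  by_cases hedge : ∃ a b : ↥(insert v s), (G.induce (insert v s)).Adj a b
  · by_cases h2c : ∃ c₂ : ↥(insert v s) → ℕ, (∀ x, c₂ x = 1 ∨ c₂ x = 2) ∧
        ∀ a b : ↥(insert v s), (G.induce (insert v s)).Adj a b → c₂ a ≠ c₂ b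
    · -- two-colorable case
      obtain ⟨c₂, hc₂v, hc₂p⟩ := h2c
      set c₄ : ↥(insert v s) → ℕ :=
        fun x => if ∃ y, (G.induce (insert v s)).Adj x y then c₂ x else 1 with hc₄def
      have hc₄nbr : ∀ x y, (G.induce (insert v s)).Adj x y → c₄ x = c₂ x := by
        intro x y h
        have hex : ∃ y', (G.induce (insert v s)).Adj x y' := ⟨y, h⟩
        simp only [hc₄def]
        rw [if_pos hex]
      have hval : ∀ x, c₄ x = 1 ∨ c₄ x = 2 := by
        intro x
        by_cases h : ∃ y, (G.induce (insert v s)).Adj x y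
        · simp only [hc₄def]; rw [if_pos h]; exact hc₂v x
        · simp only [hc₄def]; rw [if_neg h]; exact Or.inl rfl
      have hprop : ∀ x y, (G.induce (insert v s)).Adj x y → c₄ x ≠ c₄ y := by
        intro x y h
        rw [hc₄nbr x y h, hc₄nbr y x h.symm]
        exact hc₂p x y h
      have hgr2 : ∀ x, c₄ x = 2 → ∃ y, (G.induce (insert v s)).Adj x y ∧ c₄ y = 1 := by
        intro x hx2
        by_cases h : ∃ y, (G.induce (insert v s)).Adj x y
        · obtain ⟨y, hy⟩ := h
          refine ⟨y, hy, ?_⟩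
          have := hprop x y hy
          rcases hval y with h1 | h2
          · exact h1
          · rw [hx2, h2] at this; exact absurd rfl this
        · simp only [hc₄def] at hx2; rw [if_neg h] at hx2; omega
      obtain ⟨a, b, hab⟩ := hedge
      have hex : ∃ a' b' : ↥(insert v s), (G.induce (insert v s)).Adj a' b' ∧
          c₄ a' = 2 ∧ c₄ b' = 1 := by
        have hne := hprop a b hab
        rcases hval a with h1 | h2
        · rcases hval b with h1' | h2'
          · rw [h1, h1'] at hne; exact absurd rfl hne
          · exact ⟨b, a, hab.symm, h2', h1⟩
        · rcases hval b with h1' | h2'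
          · exact ⟨a, b, hab, h2, h1'⟩
          · rw [h2, h2'] at hne; exact absurd rfl hne
      obtain ⟨a', b', hab', ha2, hb1⟩ := hex
      refine ⟨2, hk, c₄, ⟨⟨?_, ?_, ?_⟩, ?_⟩, a', ha2, ?_, ?_⟩
      · intro x
        rcases hval x with h | h <;> rw [h] <;> simp
      · exact hprop
      · intro j hj
        simp only [Set.mem_Icc] at hj
        obtain ⟨hj1, hj2⟩ := hj
        interval_cases j
        · exact ⟨b', hb1⟩
        · exact ⟨a', ha2⟩
      · intro i j h1 hij hj2 x hxj
        have : i = 1 ∧ j = 2 := by omega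
        obtain ⟨rfl, rfl⟩ := this
        exact hgr2 x hxj
      · intro j hj hjne
        simp only [Set.mem_Icc] at hj
        rw [ha2] at hjne
        have : j = 1 := by omega
        subst this
        exact ⟨b', hab', hb1⟩
      · intro j hj hjne
        simp only [Set.mem_Icc] at hj
        rw [ha2] at hjne
        have : j = 1 := by omega
        subst this
        refine ⟨b', hab', hb1, ?_⟩
        intro i hi hine
        simp only [Set.mem_Icc] at hi
        rw [hb1] at hine
        have : i = 2 := by omega
        subst this
        exact ⟨a', hab'.symm, ha2⟩
    · -- not two-colorable: k = 2 and an odd connection, use three colors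
      set cV : V → ℕ := fun x => if h : x ∈ s then c ⟨x, h⟩ else 0 with hcVdef
      have hcVs : ∀ (x : V) (h : x ∈ s), cV x = c ⟨x, h⟩ := fun x h => dif_pos h
      have hk2 : k = 2 := by
        rcases (by omega : k = 1 ∨ k = 2) with h1 | h2
        · exfalso
          apply h2c
          have hnoedge : ∀ p q : ↥s, ¬(G.induce s).Adj p q := by
            intro p q hpq
            have hp := hpc.1 p
            have hq := hpc.1 q
            rw [h1] at hp hq
            simp only [Set.mem_Icc] at hp hq
            exact hpc.2.1 p q hpq (by omega)
          refine ⟨fun x => if ↑x = v then 2 else 1, fun x => by by_cases h : ↑x = v <;> simp [h], ?_⟩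
          intro x y hxy
          have hxy' : G.Adj (↑x : V) ↑y := hxy
          by_cases hxv : (↑x : V) = v <;> by_cases hyv : (↑y : V) = v
          · exact absurd (hxv ▸ hyv ▸ hxy') G.irrefl
          · simp only [if_pos hxv, if_neg hyv]; omega
          · simp only [if_neg hxv, if_pos hyv]; omega
          · exfalso
            have hxs : (↑x : V) ∈ s := by
              rcases x.2 with h | h
              · exact absurd h hxv
              · exact h
            have hys : (↑y : V) ∈ s := by
              rcases y.2 with h | h
              · exact absurd h hyv
              · exact h
            exact hnoedge ⟨↑x, hxs⟩ ⟨↑y, hys⟩ hxy'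
        · exact h2
      have hcVval : ∀ x, x ∈ s → cV x = 1 ∨ cV x = 2 := by
        intro x hx
        rw [hcVs x hx]
        have := hpc.1 ⟨x, hx⟩
        rw [hk2] at this
        simp only [Set.mem_Icc] at this
        omega
      have hcprop : ∀ x y, x ∈ s → y ∈ s → G.Adj x y → cV x ≠ cV y := by
        intro x y hx hy hadj
        rw [hcVs x hx, hcVs y hy]
        exact hpc.2.1 ⟨x, hx⟩ ⟨y, hy⟩ hadj
      -- find two v-neighbours in the same component with different colors
      have hww : ∃ w w', w ∈ s ∧ w' ∈ s ∧ G.Adj v w ∧ G.Adj v w' ∧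
          SReach G s w w' ∧ cV w ≠ cV w' := by
        by_contra hno
        push_neg at hno
        apply h2c
        set P : V → Prop := fun x => ∃ y, y ∈ s ∧ G.Adj v y ∧ SReach G s x y ∧ cV y = 2
          with hPdef
        set c₂' : ↥(insert v s) → ℕ := fun x => if (↑x : V) = v then 2 else
          (if P ↑x then 3 - cV ↑x else cV ↑x) with hc₂'def
        have hc₂'v : ∀ (a : V) (h2 : a ∈ insert v s), a = v → c₂' ⟨a, h2⟩ = 2 := by
          intro a h2 h
          simp only [hc₂'def]
          rw [if_pos h]
        have hc₂'f : ∀ (a : V) (h2 : a ∈ insert v s), a ≠ v → P a → c₂' ⟨a, h2⟩ = 3 - cV a := by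
          intro a h2 h hP
          simp only [hc₂'def]
          rw [if_neg h, if_pos hP]
        have hc₂'n : ∀ (a : V) (h2 : a ∈ insert v s), a ≠ v → ¬P a → c₂' ⟨a, h2⟩ = cV a := by
          intro a h2 h hP
          simp only [hc₂'def]
          rw [if_neg h, if_neg hP]
        -- every neighbour of v inside s gets value 1
        have hvnbr : ∀ (a : V) (h2 : a ∈ insert v s), a ∈ s → G.Adj v a → c₂' ⟨a, h2⟩ = 1 := by
          intro a h2 hzs hadjz
          have hzv : a ≠ v := fun h => hv (by rw [← h]; exact hzs)
          by_cases hP : P a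
          · rw [hc₂'f a h2 hzv hP]
            obtain ⟨y, hys, hadjy, hreach, hy2⟩ := hP
            have := hno a y hzs hys hadjz hadjy hreach
            rw [this, hy2]
          · rw [hc₂'n a h2 hzv hP]
            rcases hcVval a hzs with h | h
            · exact h
            · exact absurd ⟨a, hzs, hadjz, SReach.refl hzs, h⟩ hP
        refine ⟨c₂', ?_, ?_⟩
        · rintro ⟨a, h2⟩
          by_cases hxv : a = v
          · rw [hc₂'v a h2 hxv]
            exact Or.inr rfl
          · have hxs : a ∈ s := by
              rcases Set.mem_insert_iff.mp h2 with h | h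
              · exact absurd h hxv
              · exact h
            rcases hcVval a hxs with h | h <;> by_cases hP : P a
            · rw [hc₂'f a h2 hxv hP, h]
              exact Or.inr rfl
            · rw [hc₂'n a h2 hxv hP]
              exact Or.inl h
            · rw [hc₂'f a h2 hxv hP, h]
              exact Or.inl rfl
            · rw [hc₂'n a h2 hxv hP]
              exact Or.inr h
        · rintro ⟨xv, hx2⟩ ⟨yv, hy2⟩ hxy
          have hxy' : G.Adj xv yv := hxy
          by_cases hxv : xv = v <;> by_cases hyv : yv = v
          · exact absurd (hxv ▸ hyv ▸ hxy') G.irrefl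
          · have hys : yv ∈ s := by
              rcases Set.mem_insert_iff.mp hy2 with h | h
              · exact absurd h hyv
              · exact h
            rw [hc₂'v xv hx2 hxv, hvnbr yv hy2 hys (hxv ▸ hxy')]
            omega
          · have hxs : xv ∈ s := by
              rcases Set.mem_insert_iff.mp hx2 with h | h
              · exact absurd h hxv
              · exact h
            rw [hc₂'v yv hy2 hyv, hvnbr xv hx2 hxs (hyv ▸ hxy'.symm)]
            omega
          · have hxs : xv ∈ s := by
              rcases Set.mem_insert_iff.mp hx2 with h | h
              · exact absurd h hxv
              · exact h
            have hys : yv ∈ s := by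
              rcases Set.mem_insert_iff.mp hy2 with h | h
              · exact absurd h hyv
              · exact h
            have hPiff : P xv ↔ P yv := by
              simp only [hPdef]
              constructor
              · rintro ⟨z, hz1, hz2, hz3, hz4⟩
                exact ⟨z, hz1, hz2, (SReach.adj hys hxs hxy'.symm).trans hz3, hz4⟩
              · rintro ⟨z, hz1, hz2, hz3, hz4⟩
                exact ⟨z, hz1, hz2, (SReach.adj hxs hys hxy').trans hz3, hz4⟩
            have hne := hcprop xv yv hxs hys hxy'
            have hvx := hcVval xv hxs
            have hvy := hcVval yv hys
            by_cases hP : P xv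
            · rw [hc₂'f xv hx2 hxv hP, hc₂'f yv hy2 hyv (hPiff.mp hP)]
              omega
            · rw [hc₂'n xv hx2 hxv hP, hc₂'n yv hy2 hyv (fun h => hP (hPiff.mpr h))]
              exact hne
      obtain ⟨w, w', hws, hw's, havw, havw', hrww', hcww'⟩ := hww
      have hwne : w ≠ w' := fun h => hcww' (by rw [h])
      -- w and w' both have neighbours inside s
      have hnbrw : ∃ y, y ∈ s ∧ G.Adj w y := by
        obtain ⟨p, hp⟩ := hrww'
        cases p with
        | nil => exact absurd rfl hwne
        | cons h q =>
          rename_i x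
          exact ⟨x, hp x (by simp [Walk.support_cons]), h⟩
      have hnbrw' : ∃ y, y ∈ s ∧ G.Adj w' y := by
        obtain ⟨p, hp⟩ := hrww'.symm
        cases p with
        | nil => exact absurd rfl hwne.symm
        | cons h q =>
          rename_i x
          exact ⟨x, hp x (by simp [Walk.support_cons]), h⟩
      -- region flip so that w gets 1 and w' gets 2
      set c₀ : V → ℕ := fun x => if cV w = 1 then cV x else
        (if SReach G s x w then 3 - cV x else cV x) with hc₀def
      have hc₀w : c₀ w = 1 := by
        by_cases h : cV w = 1
        · simp only [hc₀def]
          rw [if_pos h]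
          exact h
        · simp only [hc₀def]
          rw [if_neg h, if_pos (SReach.refl hws)]
          have := hcVval w hws
          omega
      have hc₀w' : c₀ w' = 2 := by
        by_cases h : cV w = 1
        · simp only [hc₀def]
          rw [if_pos h]
          have := hcVval w' hw's
          omega
        · simp only [hc₀def]
          rw [if_neg h, if_pos hrww'.symm]
          have h1 := hcVval w hws
          have h2 := hcVval w' hw's
          omega
      have hc₀val : ∀ x, x ∈ s → c₀ x = 1 ∨ c₀ x = 2 := by
        intro x hx
        have := hcVval x hx
        simp only [hc₀def]
        split_ifs <;> omega
      have hc₀prop : ∀ x y, x ∈ s → y ∈ s → G.Adj x y → c₀ x ≠ c₀ y := by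
        intro x y hx hy hadj
        have hne := hcprop x y hx hy hadj
        have hvx := hcVval x hx
        have hvy := hcVval y hy
        simp only [hc₀def]
        by_cases hcw : cV w = 1
        · rw [if_pos hcw, if_pos hcw]
          exact hne
        · rw [if_neg hcw, if_neg hcw]
          have hreachiff : SReach G s x w ↔ SReach G s y w := by
            constructor
            · intro h
              exact (SReach.adj hy hx hadj.symm).trans h
            · intro h
              exact (SReach.adj hx hy hadj).trans h
          by_cases hr : SReach G s x w
          · rw [if_pos hr, if_pos (hreachiff.mp hr)]
            omega
          · rw [if_neg hr, if_neg (fun h => hr (hreachiff.mpr h))]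
            exact hne
      -- fix isolated vertices
      set c₅ : V → ℕ := fun x => if ∃ y, y ∈ s ∧ G.Adj x y then c₀ x else 1 with hc₅def
      have hc₅pos : ∀ x, (∃ y, y ∈ s ∧ G.Adj x y) → c₅ x = c₀ x := by
        intro x h
        simp only [hc₅def]
        rw [if_pos h]
      have hc₅w : c₅ w = 1 := by rw [hc₅pos w hnbrw]; exact hc₀w
      have hc₅w' : c₅ w' = 2 := by rw [hc₅pos w' hnbrw']; exact hc₀w'
      have hc₅val : ∀ x, x ∈ s → c₅ x = 1 ∨ c₅ x = 2 := by
        intro x hx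
        by_cases h : ∃ y, y ∈ s ∧ G.Adj x y
        · rw [hc₅pos x h]
          exact hc₀val x hx
        · simp only [hc₅def]
          rw [if_neg h]
          exact Or.inl rfl
      have hc₅prop : ∀ x y, x ∈ s → y ∈ s → G.Adj x y → c₅ x ≠ c₅ y := by
        intro x y hx hy hadj
        rw [hc₅pos x ⟨y, hy, hadj⟩, hc₅pos y ⟨x, hx, hadj.symm⟩]
        exact hc₀prop x y hx hy hadj
      have hc₅opp : ∀ x, x ∈ s → (∃ y, y ∈ s ∧ G.Adj x y) →
          ∃ y, y ∈ s ∧ G.Adj x y ∧ c₅ y = 3 - c₅ x := by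
        rintro x hx ⟨y, hy, hadj⟩
        refine ⟨y, hy, hadj, ?_⟩
        have h1 := hc₅prop x y hx hy hadj
        have h2 := hc₅val x hx
        have h3 := hc₅val y hy
        omega
      -- the final coloring with v of color 3
      have hwv : w ≠ v := fun h => hv (h ▸ hws)
      have hw'v : w' ≠ v := fun h => hv (h ▸ hw's)
      set c' : ↥(insert v s) → ℕ := fun x => if (↑x : V) = v then 3 else c₅ ↑x with hc'def
      have hc'v : ∀ (h2 : v ∈ insert v s), c' ⟨v, h2⟩ = 3 := by
        intro h2
        simp only [hc'def]
        simp
      have hc's : ∀ (a : V) (h2 : a ∈ insert v s), a ≠ v → c' ⟨a, h2⟩ = c₅ a := by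
        intro a h2 h
        simp only [hc'def]
        exact if_neg h
      refine ⟨3, by omega, c', ⟨⟨?_, ?_, ?_⟩, ?_⟩,
        ⟨v, Set.mem_insert v s⟩, hc'v _, ?_, ?_⟩
      · rintro ⟨a, h2⟩
        by_cases hxv : a = v
        · subst hxv
          rw [hc'v h2]
          simp
        · have hxs : a ∈ s := by
            rcases Set.mem_insert_iff.mp h2 with h | h
            · exact absurd h hxv
            · exact h
          rw [hc's a h2 hxv]
          rcases hc₅val a hxs with h | h <;> rw [h] <;> simp
      · rintro ⟨xv, hx2⟩ ⟨yv, hy2⟩ hxy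
        have hxy' : G.Adj xv yv := hxy
        by_cases hxv : xv = v <;> by_cases hyv : yv = v
        · exact absurd (hxv ▸ hyv ▸ hxy') G.irrefl
        · have hys : yv ∈ s := by
            rcases Set.mem_insert_iff.mp hy2 with h | h
            · exact absurd h hyv
            · exact h
          subst hxv
          rw [hc'v hx2, hc's yv hy2 hyv]
          rcases hc₅val yv hys with h | h <;> omega
        · have hxs : xv ∈ s := by
            rcases Set.mem_insert_iff.mp hx2 with h | h
            · exact absurd h hxv
            · exact h
          subst hyv
          rw [hc'v hy2, hc's xv hx2 hxv]
          rcases hc₅val xv hxs with h | h <;> omega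
        · have hxs : xv ∈ s := by
            rcases Set.mem_insert_iff.mp hx2 with h | h
            · exact absurd h hxv
            · exact h
          have hys : yv ∈ s := by
            rcases Set.mem_insert_iff.mp hy2 with h | h
            · exact absurd h hyv
            · exact h
          rw [hc's xv hx2 hxv, hc's yv hy2 hyv]
          exact hc₅prop xv yv hxs hys hxy'
      · intro j hj
        simp only [Set.mem_Icc] at hj
        obtain ⟨hj1, hj3⟩ := hj
        interval_cases j
        · exact ⟨⟨w, Set.mem_insert_of_mem _ hws⟩, by rw [hc's w _ hwv]; exact hc₅w⟩
        · exact ⟨⟨w', Set.mem_insert_of_mem _ hw's⟩,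
            by rw [hc's w' _ hw'v]; exact hc₅w'⟩
        · exact ⟨⟨v, Set.mem_insert v s⟩, hc'v _⟩
      · -- Grundy
        rintro i j h1 hij hj3 ⟨xv, hx2⟩ hxj
        by_cases hxv : xv = v
        · subst hxv
          rw [hc'v hx2] at hxj
          subst hxj
          have hi12 : i = 1 ∨ i = 2 := by omega
          rcases hi12 with rfl | rfl
          · refine ⟨⟨w, Set.mem_insert_of_mem _ hws⟩, havw, ?_⟩
            rw [hc's w _ hwv]
            exact hc₅w
          · refine ⟨⟨w', Set.mem_insert_of_mem _ hw's⟩, havw', ?_⟩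
            rw [hc's w' _ hw'v]
            exact hc₅w'
        · rw [hc's xv hx2 hxv] at hxj
          have hxs : xv ∈ s := by
            rcases Set.mem_insert_iff.mp hx2 with h | h
            · exact absurd h hxv
            · exact h
          have hj2 : j = 2 := by
            rcases hc₅val xv hxs with h | h <;> omega
          have hi1 : i = 1 := by omega
          subst hj2
          subst hi1
          have hnoniso : ∃ y, y ∈ s ∧ G.Adj xv y := by
            by_contra h
            simp only [hc₅def] at hxj
            rw [if_neg h] at hxj
            omega
          obtain ⟨y, hys, hadjy, hcy⟩ := hc₅opp xv hxs hnoniso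
          refine ⟨⟨y, Set.mem_insert_of_mem _ hys⟩, hadjy, ?_⟩
          have hyv : y ≠ v := fun h => hv (h ▸ hys)
          rw [hc's y _ hyv, hcy, hxj]
      · -- b-vertex v
        intro j hj hjne
        simp only [Set.mem_Icc] at hj
        rw [hc'v _] at hjne
        have : j = 1 ∨ j = 2 := by omega
        rcases this with rfl | rfl
        · exact ⟨⟨w, Set.mem_insert_of_mem _ hws⟩, havw,
            by rw [hc's w _ hwv]; exact hc₅w⟩
        · exact ⟨⟨w', Set.mem_insert_of_mem _ hw's⟩, havw',
            by rw [hc's w' _ hw'v]; exact hc₅w'⟩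
      · -- nice witnesses
        intro j hj hjne
        simp only [Set.mem_Icc] at hj
        rw [hc'v _] at hjne
        have : j = 1 ∨ j = 2 := by omega
        rcases this with rfl | rfl
        · refine ⟨⟨w, Set.mem_insert_of_mem _ hws⟩, havw,
            by rw [hc's w _ hwv]; exact hc₅w, ?_⟩
          intro i hi hine
          simp only [Set.mem_Icc] at hi
          rw [hc's w _ hwv, hc₅w] at hine
          have : i = 2 ∨ i = 3 := by omega
          rcases this with rfl | rfl
          · obtain ⟨y, hys, hadjy, hcy⟩ := hc₅opp w hws hnbrw
            refine ⟨⟨y, Set.mem_insert_of_mem _ hys⟩, hadjy, ?_⟩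
            have hyv : y ≠ v := fun h => hv (h ▸ hys)
            rw [hc's y _ hyv, hcy, hc₅w]
          · exact ⟨⟨v, Set.mem_insert v s⟩, havw.symm, hc'v _⟩
        · refine ⟨⟨w', Set.mem_insert_of_mem _ hw's⟩, havw',
            by rw [hc's w' _ hw'v]; exact hc₅w', ?_⟩
          intro i hi hine
          simp only [Set.mem_Icc] at hi
          rw [hc's w' _ hw'v, hc₅w'] at hine
          have : i = 1 ∨ i = 3 := by omega
          rcases this with rfl | rfl
          · obtain ⟨y, hys, hadjy, hcy⟩ := hc₅opp w' hw's hnbrw'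
            refine ⟨⟨y, Set.mem_insert_of_mem _ hys⟩, hadjy, ?_⟩
            have hyv : y ≠ v := fun h => hv (h ▸ hys)
            rw [hc's y _ hyv, hcy, hc₅w']
          · exact ⟨⟨v, Set.mem_insert v s⟩, havw'.symm, hc'v _⟩
  · -- no edges at all: k must be 1
    have hknot2 : k ≠ 2 := by
      intro h2
      have h1mem : (1 : ℕ) ∈ Set.Icc 1 k := by rw [h2]; simp
      obtain ⟨w, hadjw, -⟩ := hun.1 1 h1mem (by rw [huk, h2]; omega)
      exact hedge ⟨⟨↑u, Set.mem_insert_of_mem _ u.2⟩, ⟨↑w, Set.mem_insert_of_mem _ w.2⟩, hadjw⟩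
    have hke1 : k = 1 := by omega
    refine ⟨1, by omega, fun _ => 1, ⟨⟨?_, ?_, ?_⟩, ?_⟩, ⟨v, Set.mem_insert v s⟩, rfl, ?_, ?_⟩
    · intro x; simp
    · intro x y hxy
      exact absurd ⟨x, y, hxy⟩ hedge
    · intro j hj
      simp only [Set.mem_Icc] at hj
      have : j = 1 := by omega
      exact ⟨⟨v, Set.mem_insert v s⟩, this.symm⟩
    · intro i j h1 hij hj1 x hxj
      omega
    · intro j hj hjne
      simp only [Set.mem_Icc] at hj
      have : j = 1 := by omega
      exact absurd this hjne
    · intro j hj hjne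
      simp only [Set.mem_Icc] at hj
      have : j = 1 := by omega
      exact absurd this hjne

end StepSmall
section FinalAsm
variable {V : Type*} [Fintype V] {G : SimpleGraph V}

lemma stepZ (hc : IsCactus G) {s : Set V} {v : V} (hv : v ∉ s) {k : ℕ} {c : ↥s → ℕ}
    (h : IsZColoring (G.induce s) k c) :
    ∃ k', k ≤ k' ∧ ∃ c' : ↥(insert v s) → ℕ, IsZColoring (G.induce (insert v s)) k' c' := by
  classical
  obtain ⟨⟨hpc, hgr⟩, u, huk, hun⟩ := h
  by_cases hk : 3 ≤ k
  · obtain ⟨c', hpc', hnice', hgr'⟩ := step_main hc hv hk hpc huk hun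
    exact ⟨k, le_refl k, c', ⟨hpc', hgr' hgr⟩, hnice'⟩
  · exact step_small hv (by omega) hpc huk hun

lemma stepB (hc : IsCactus G) {s : Set V} {v : V} (hv : v ∉ s) {k : ℕ} {c : ↥s → ℕ}
    (h : IsBStarColoring (G.induce s) k c) :
    ∃ k', k ≤ k' ∧ ∃ c' : ↥(insert v s) → ℕ,
      IsBStarColoring (G.induce (insert v s)) k' c' := by
  classical
  obtain ⟨hpc, u, huk, hun⟩ := h
  by_cases hk : 3 ≤ k
  · obtain ⟨c', hpc', hnice', -⟩ := step_main hc hv hk hpc huk hun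
    exact ⟨k, le_refl k, c', hpc', hnice'⟩
  · obtain ⟨k', hk', c', hz⟩ := step_small hv (by omega) hpc huk hun
    exact ⟨k', hk', c', hz.1.1, hz.2⟩

lemma kBound {s : Set V} {k : ℕ} {c : ↥s → ℕ}
    (h : IsProperKColoring (G.induce s) k c) : k ≤ Fintype.card V := by
  classical
  rcases Nat.eq_zero_or_pos k with rfl | hk
  · exact Nat.zero_le _
  have hinj : ∀ j ∈ Finset.Icc 1 k, ∃ x : ↥s, c x = j := fun j hj =>
    h.2.2 j (by simpa using hj)
  choose f hf using hinj
  have h1 : (1 : ℕ) ∈ Finset.Icc 1 k := by simp; omega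
  set F : ℕ → V := fun j => if hj : j ∈ Finset.Icc 1 k then ↑(f j hj) else ↑(f 1 h1)
    with hF
  have hcard : (Finset.Icc 1 k).card ≤ Fintype.card V := by
    rw [← Finset.card_univ]
    apply Finset.card_le_card_of_injOn F (fun x _ => Finset.mem_univ _)
    intro a ha b hb hab
    have ha' : a ∈ Finset.Icc 1 k := Finset.mem_coe.mp ha
    have hb' : b ∈ Finset.Icc 1 k := Finset.mem_coe.mp hb
    simp only [hF] at hab
    rw [dif_pos ha', dif_pos hb'] at hab
    have heq : f a ha' = f b hb' := Subtype.ext hab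
    rw [← hf a ha', ← hf b hb', heq]
  rw [Nat.card_Icc] at hcard
  omega

lemma zNum_le_insert (hc : IsCactus G) (s : Set V) (v : V) :
    zNum (G.induce s) ≤ zNum (G.induce (insert v s)) := by
  classical
  by_cases hv : v ∈ s
  · rw [Set.insert_eq_self.mpr hv]
  · rw [zNum, zNum]
    have hbdd : BddAbove {k | ∃ c : ↥(insert v s) → ℕ,
        IsZColoring (G.induce (insert v s)) k c} := by
      refine ⟨Fintype.card V, ?_⟩
      rintro k ⟨c', hc'⟩
      exact kBound hc'.1.1
    rcases Set.eq_empty_or_nonempty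
        {k | ∃ c : ↥s → ℕ, IsZColoring (G.induce s) k c} with he | hne
    · rw [he, csSup_empty]
      exact bot_le
    · apply csSup_le hne
      rintro k ⟨c, hkc⟩
      obtain ⟨k', hkk', c', hz⟩ := stepZ hc hv hkc
      exact le_trans hkk' (le_csSup hbdd ⟨c', hz⟩)

lemma bStar_le_insert (hc : IsCactus G) (s : Set V) (v : V) :
    bStar (G.induce s) ≤ bStar (G.induce (insert v s)) := by
  classical
  by_cases hv : v ∈ s
  · rw [Set.insert_eq_self.mpr hv]
  · rw [bStar, bStar]
    have hbdd : BddAbove {k | ∃ c : ↥(insert v s) → ℕ,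
        IsBStarColoring (G.induce (insert v s)) k c} := by
      refine ⟨Fintype.card V, ?_⟩
      rintro k ⟨c', hc'⟩
      exact kBound hc'.1
    rcases Set.eq_empty_or_nonempty
        {k | ∃ c : ↥s → ℕ, IsBStarColoring (G.induce s) k c} with he | hne
    · rw [he, csSup_empty]
      exact bot_le
    · apply csSup_le hne
      rintro k ⟨c, hkc⟩
      obtain ⟨k', hkk', c', hz⟩ := stepB hc hv hkc
      exact le_trans hkk' (le_csSup hbdd ⟨c', hz⟩)

lemma zNum_le_union (hc : IsCactus G) (s : Set V) (d : Finset V) :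
    zNum (G.induce s) ≤ zNum (G.induce (s ∪ ↑d)) := by
  classical
  induction d using Finset.induction_on with
  | empty => rw [show (s ∪ ↑(∅ : Finset V)) = s by simp]
  | insert a d ha ih =>
    have hE : (s ∪ ↑(insert a d) : Set V) = insert a (s ∪ ↑d) := by
      rw [Finset.coe_insert, Set.union_insert]
    rw [hE]
    exact le_trans ih (zNum_le_insert hc _ _)

lemma bStar_le_union (hc : IsCactus G) (s : Set V) (d : Finset V) :
    bStar (G.induce s) ≤ bStar (G.induce (s ∪ ↑d)) := by
  classical
  induction d using Finset.induction_on with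
  | empty => rw [show (s ∪ ↑(∅ : Finset V)) = s by simp]
  | insert a d ha ih =>
    have hE : (s ∪ ↑(insert a d) : Set V) = insert a (s ∪ ↑d) := by
      rw [Finset.coe_insert, Set.union_insert]
    rw [hE]
    exact le_trans ih (bStar_le_insert hc _ _)

end FinalAsm


/-- every cactus is z-monotonic and b*-monotonic: for nested induced
subgraphs `G[s₂] ⊆ G[s₁]` (with `s₂` nonempty), `z(G[s₂]) ≤ z(G[s₁])` and
`b*(G[s₂]) ≤ b*(G[s₁])`. -/
theorem cactus_z_and_bStar_monotonic [Fintype V] (G : SimpleGraph V) (hc : IsCactus G) :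
    ∀ s₁ s₂ : Set V, s₂ ⊆ s₁ → s₂.Nonempty →
      zNum (G.induce s₂) ≤ zNum (G.induce s₁) ∧
      bStar (G.induce s₂) ≤ bStar (G.induce s₁) := by
  intro s₁ s₂ hsub _
  classical
  have h1 : s₁ = s₂ ∪ ↑((Set.toFinite (s₁ \ s₂)).toFinset) := by
    rw [Set.Finite.coe_toFinset, Set.union_diff_cancel hsub]
  constructor
  · rw [h1]
    exact zNum_le_union hc s₂ _
  · rw [h1]
    exact bStar_le_union hc s₂ _
end

section
/- Let k ≥ 2 and let G be a thin spider: a graph with vertices c_1,…,c_k forming a clique and s_1,…,s_k forming an independent set, where s_i is adjacent to c_j if and only if i = j, possibly together with one additional vertex c_0 adjacent to all of c_1,…,c_k and to none of s_1,…,s_k. Then b*(G) = ω(G). -/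
variable {V : Type*} {W : Type*}

/-- The thin spider with clique `c_1,…,c_k` (the `Sum.inl` vertices), independent set
`s_1,…,s_k` (the `Sum.inr ∘ Sum.inl` vertices) where `s_i ~ c_j ↔ i = j`, and, when
`hasHead = true`, a head `c_0` (the `Sum.inr ∘ Sum.inr` vertex) adjacent exactly to
`c_1,…,c_k`. -/
def thinSpider (k : ℕ) (hasHead : Bool) :
    SimpleGraph (Fin k ⊕ (Fin k ⊕ Fin (cond hasHead 1 0))) :=
  SimpleGraph.fromRel fun x y =>
    match x, y with
    | Sum.inl _, Sum.inl _ => True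
    | Sum.inl i, Sum.inr (Sum.inl j) => i = j
    | Sum.inl _, Sum.inr (Sum.inr _) => True
    | _, _ => False

section ThinSpiderAux

private lemma colorsCardLe {V' : Type*} (c : V' → ℕ) (S : Finset V') (J : Finset ℕ)
    (h : ∀ j ∈ J, ∃ w ∈ S, c w = j) : J.card ≤ S.card := by
  have hsub : J ⊆ S.image c := by
    intro j hj
    obtain ⟨w, hw, hcw⟩ := h j hj
    exact Finset.mem_image.mpr ⟨w, hw, hcw⟩
  exact (Finset.card_le_card hsub).trans Finset.card_image_le

private lemma natSSupEq {S : Set ℕ} {m : ℕ} (h1 : m ∈ S) (h2 : ∀ x ∈ S, x ≤ m) :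
    sSup S = m :=
  le_antisymm (csSup_le ⟨m, h1⟩ h2) (le_csSup ⟨m, h2⟩ h1)

variable {k : ℕ} {hh : Bool}

private lemma ts_adj_inl_inl {i j : Fin k} :
    (thinSpider k hh).Adj (.inl i) (.inl j) ↔ i ≠ j := by
  simp [thinSpider, SimpleGraph.fromRel_adj]

private lemma ts_adj_inl_pend {i j : Fin k} :
    (thinSpider k hh).Adj (.inl i) (.inr (.inl j)) ↔ i = j := by
  simp [thinSpider, SimpleGraph.fromRel_adj]

private lemma ts_adj_inl_head {i : Fin k} {t} :
    (thinSpider k hh).Adj (.inl i) (.inr (.inr t)) := by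
  simp [thinSpider, SimpleGraph.fromRel_adj]

private lemma ts_pend_nbr {t : Fin k} {y} (h : (thinSpider k hh).Adj (.inr (.inl t)) y) :
    y = .inl t := by
  rcases y with i | (j | s) <;>
    simp [thinSpider, SimpleGraph.fromRel_adj] at h <;> simp [h]

private lemma ts_head_nbr {t} {y} (h : (thinSpider k hh).Adj (.inr (.inr t)) y) :
    ∃ j : Fin k, y = .inl j := by
  rcases y with i | (j | s) <;>
    simp [thinSpider, SimpleGraph.fromRel_adj] at h
  exact ⟨_, rfl⟩

/-- Any b-vertex for a coloring with many colors must be a clique vertex `inl i`. -/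
private lemma bvertex_is_inl {m : ℕ} {c : Fin k ⊕ (Fin k ⊕ Fin (cond hh 1 0)) → ℕ}
    (hk : 2 ≤ k) (hm : k + cond hh 1 0 + 1 ≤ m)
    (hcol : ∀ v, c v ∈ Set.Icc 1 m) {w} (hb : IsBVertex (thinSpider k hh) m c w) :
    ∃ i : Fin k, w = .inl i := by
  have hcw : c w ∈ Finset.Icc 1 m := by
    simpa using hcol w
  have hcard : ((Finset.Icc 1 m).erase (c w)).card = m - 1 := by
    rw [Finset.card_erase_of_mem hcw, Nat.card_Icc]
    omega
  rcases w with i | (t | t)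
  · exact ⟨i, rfl⟩
  · exfalso
    have hle : ((Finset.Icc 1 m).erase (c (Sum.inr (Sum.inl t)))).card ≤
        ({Sum.inl t} : Finset (Fin k ⊕ (Fin k ⊕ Fin (cond hh 1 0)))).card := by
      apply colorsCardLe c
      intro j hj
      have hj1 := Finset.mem_of_mem_erase hj
      simp only [Finset.mem_Icc] at hj1
      obtain ⟨w', hadj, hcw'⟩ := hb j (by simpa using hj1) (Finset.ne_of_mem_erase hj)
      exact ⟨w', Finset.mem_singleton.mpr (ts_pend_nbr hadj), hcw'⟩
    rw [hcard, Finset.card_singleton] at hle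
    omega
  · exfalso
    have ht : hh = true := by
      cases hh
      · exact t.elim0
      · rfl
    subst ht
    have hle : ((Finset.Icc 1 m).erase (c (Sum.inr (Sum.inr t)))).card ≤
        ((Finset.univ : Finset (Fin k)).image
          (Sum.inl : Fin k → Fin k ⊕ (Fin k ⊕ Fin (cond true 1 0)))).card := by
      apply colorsCardLe c
      intro j hj
      have hj1 := Finset.mem_of_mem_erase hj
      simp only [Finset.mem_Icc] at hj1
      obtain ⟨w', hadj, hcw'⟩ := hb j (by simpa using hj1) (Finset.ne_of_mem_erase hj)
      obtain ⟨j', rfl⟩ := ts_head_nbr hadj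
      exact ⟨Sum.inl j', by simp, hcw'⟩
    rw [hcard, Finset.card_image_of_injective _ Sum.inl_injective] at hle
    simp only [Finset.card_univ, Fintype.card_fin] at hle
    simp only [Bool.cond_true] at hm
    omega

/-- Upper bound: any b*-coloring uses at most `k + head` colors. -/
private lemma ts_bstar_le {m : ℕ} {c : Fin k ⊕ (Fin k ⊕ Fin (cond hh 1 0)) → ℕ}
    (hk : 2 ≤ k) (hbs : IsBStarColoring (thinSpider k hh) m c) :
    m ≤ k + cond hh 1 0 := by
  by_contra hcon
  push_neg at hcon
  have hm : k + cond hh 1 0 + 1 ≤ m := hcon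
  obtain ⟨⟨hcol, hprop, hused⟩, u, hcu, hbu, hnice⟩ := hbs
  obtain ⟨i, rfl⟩ := bvertex_is_inl hk hm hcol hbu
  have hmem : m ∈ Finset.Icc 1 m := by
    simp only [Finset.mem_Icc]; omega
  have hle : ((Finset.Icc 1 m).erase m).card ≤
      (((Finset.univ : Finset (Fin k)).erase i).image
        (Sum.inl : Fin k → Fin k ⊕ (Fin k ⊕ Fin (cond hh 1 0)))).card := by
    apply colorsCardLe c
    intro j hj
    have hj1 := Finset.mem_of_mem_erase hj
    simp only [Finset.mem_Icc] at hj1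
    have hjne : j ≠ c (Sum.inl i) := by rw [hcu]; exact Finset.ne_of_mem_erase hj
    obtain ⟨w', hadj, hcw', hbw'⟩ := hnice j (by simpa using hj1) hjne
    obtain ⟨i', rfl⟩ := bvertex_is_inl hk hm hcol hbw'
    have hii' : i ≠ i' := ts_adj_inl_inl.mp hadj
    exact ⟨Sum.inl i',
      Finset.mem_image_of_mem _ (Finset.mem_erase.mpr ⟨hii'.symm, Finset.mem_univ _⟩), hcw'⟩
  rw [Finset.card_erase_of_mem hmem, Nat.card_Icc,
    Finset.card_image_of_injective _ Sum.inl_injective,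
    Finset.card_erase_of_mem (Finset.mem_univ i),
    Finset.card_univ, Fintype.card_fin] at hle
  cases hh <;> simp only [Bool.cond_true, Bool.cond_false] at hm <;> omega

/-- The optimal coloring. -/
private def spCol (k : ℕ) {α : Type*} : (Fin k ⊕ (Fin k ⊕ α)) → ℕ
  | .inl i => i.val + 1
  | .inr (.inl t) => if t.val = 0 then 2 else 1
  | .inr (.inr _) => k + 1

private lemma spCol_inl {α : Type*} (i : Fin k) :
    spCol k (Sum.inl i : Fin k ⊕ (Fin k ⊕ α)) = i.val + 1 := rfl

/-- Every clique vertex is a b-vertex for the optimal coloring. -/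
private lemma ts_inl_bvertex (hk : 2 ≤ k) (i : Fin k) :
    IsBVertex (thinSpider k hh) (k + cond hh 1 0) (spCol k) (.inl i) := by
  intro j hj hne
  simp only [Set.mem_Icc] at hj
  rw [spCol_inl] at hne
  by_cases hjk : j ≤ k
  · refine ⟨Sum.inl ⟨j - 1, by omega⟩, ?_, ?_⟩
    · rw [ts_adj_inl_inl]
      intro hcon
      apply hne
      have hval : i.val = j - 1 := congrArg Fin.val hcon
      omega
    · show j - 1 + 1 = j
      omega
  · have ht : hh = true := by
      cases hh
      · simp only [Bool.cond_false, Nat.add_zero] at hj; omega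
      · rfl
    subst ht
    simp only [Bool.cond_true] at hj
    refine ⟨Sum.inr (Sum.inr ⟨0, Nat.one_pos⟩), ts_adj_inl_head, ?_⟩
    show k + 1 = j
    omega

/-- The optimal coloring is a proper (k + head)-coloring. -/
private lemma ts_proper (hk : 2 ≤ k) :
    IsProperKColoring (thinSpider k hh) (k + cond hh 1 0) (spCol k) := by
  refine ⟨?_, ?_, ?_⟩
  · rintro (i | (t | t))
    · simp only [spCol_inl, Set.mem_Icc]
      have := i.isLt
      omega
    · simp only [spCol, Set.mem_Icc]
      split <;> omega
    · have ht : hh = true := by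
        cases hh
        · exact t.elim0
        · rfl
      subst ht
      simp only [spCol, Set.mem_Icc, Bool.cond_true]
      omega
  · rintro (i | (t | t)) (i' | (t' | t')) hadj
    · have hne := ts_adj_inl_inl.mp hadj
      simp only [spCol]
      intro h
      exact hne (Fin.ext (by omega))
    · have he := ts_adj_inl_pend.mp hadj
      subst he
      simp only [spCol]
      split <;> omega
    · simp only [spCol]
      have := i.isLt
      omega
    · have he := ts_adj_inl_pend.mp hadj.symm
      subst he
      simp only [spCol]
      split <;> omega
    · exact absurd (ts_pend_nbr hadj) (by simp)
    · exact absurd (ts_pend_nbr hadj) (by simp)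
    · simp only [spCol]
      have := i'.isLt
      omega
    · obtain ⟨j, hj⟩ := ts_head_nbr hadj
      simp at hj
    · obtain ⟨j, hj⟩ := ts_head_nbr hadj
      simp at hj
  · intro j hj
    simp only [Set.mem_Icc] at hj
    by_cases hjk : j ≤ k
    · refine ⟨Sum.inl ⟨j - 1, by omega⟩, ?_⟩
      show j - 1 + 1 = j
      omega
    · have ht : hh = true := by
        cases hh
        · simp only [Bool.cond_false, Nat.add_zero] at hj; omega
        · rfl
      subst ht
      simp only [Bool.cond_true] at hj
      refine ⟨Sum.inr (Sum.inr ⟨0, Nat.one_pos⟩), ?_⟩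
      show k + 1 = j
      omega

/-- Lower bound: the optimal coloring is a b*-coloring with `k + head` colors. -/
private lemma ts_bstar_coloring (hk : 2 ≤ k) :
    IsBStarColoring (thinSpider k hh) (k + cond hh 1 0) (spCol k) := by
  refine ⟨ts_proper hk, ?_⟩
  cases hh
  · -- no head : nice vertex is inl (k-1)
    refine ⟨Sum.inl ⟨k - 1, by omega⟩, ?_, ts_inl_bvertex hk _, ?_⟩
    · show k - 1 + 1 = k + 0
      omega
    · intro j hj hne
      simp only [Set.mem_Icc, Bool.cond_false, Nat.add_zero] at hj
      have hne' : j ≠ k - 1 + 1 := hne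
      refine ⟨Sum.inl ⟨j - 1, by omega⟩, ?_, ?_, ts_inl_bvertex hk _⟩
      · rw [ts_adj_inl_inl]
        intro hcon
        have hval : k - 1 = j - 1 := congrArg Fin.val hcon
        omega
      · show j - 1 + 1 = j
        omega
  · -- head : nice vertex is the head
    have hbhead : IsBVertex (thinSpider k true) (k + cond true 1 0) (spCol k)
        (Sum.inr (Sum.inr ⟨0, Nat.one_pos⟩)) := by
      intro j hj hne
      simp only [Set.mem_Icc, Bool.cond_true] at hj
      have hne' : j ≠ k + 1 := hne
      refine ⟨Sum.inl ⟨j - 1, by omega⟩, ts_adj_inl_head.symm, ?_⟩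
      show j - 1 + 1 = j
      omega
    refine ⟨Sum.inr (Sum.inr ⟨0, Nat.one_pos⟩), rfl, hbhead, ?_⟩
    intro j hj hne
    simp only [Set.mem_Icc, Bool.cond_true] at hj
    have hne' : j ≠ k + 1 := hne
    refine ⟨Sum.inl ⟨j - 1, by omega⟩, ts_adj_inl_head.symm, ?_, ts_inl_bvertex hk _⟩
    show j - 1 + 1 = j
    omega

private def bigClique (k : ℕ) (hh : Bool) : Finset (Fin k ⊕ (Fin k ⊕ Fin (cond hh 1 0))) :=
  (Finset.univ.image Sum.inl) ∪
    (Finset.univ.image (fun t : Fin (cond hh 1 0) => Sum.inr (Sum.inr t)))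

private lemma ts_isNClique (hk : 2 ≤ k) :
    (thinSpider k hh).IsNClique (k + cond hh 1 0) (bigClique k hh) := by
  constructor
  · intro x hx y hy hne
    simp only [bigClique, Finset.coe_union, Set.mem_union, Finset.coe_image,
      Finset.coe_univ, Set.image_univ, Set.mem_range] at hx hy
    obtain ⟨i, rfl⟩ | ⟨t, rfl⟩ := hx <;> obtain ⟨i', rfl⟩ | ⟨t', rfl⟩ := hy
    · exact ts_adj_inl_inl.mpr (fun h => hne (by rw [h]))
    · exact ts_adj_inl_head
    · exact ts_adj_inl_head.symm
    · exfalso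
      apply hne
      cases hh
      · exact t.elim0
      · have h1 := t.isLt
        have h2 := t'.isLt
        simp only [Bool.cond_true] at h1 h2
        have het : t = t' := Fin.ext (by omega)
        rw [het]
  · have hdisj : Disjoint (Finset.univ.image (Sum.inl : Fin k → Fin k ⊕ (Fin k ⊕ Fin (cond hh 1 0))))
        (Finset.univ.image (fun t : Fin (cond hh 1 0) => Sum.inr (Sum.inr t))) := by
      simp only [Finset.disjoint_left, Finset.mem_image, Finset.mem_univ, true_and]
      rintro a ⟨i, rfl⟩ ⟨t, ht⟩
      simp at ht
    rw [bigClique, Finset.card_union_of_disjoint hdisj,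
      Finset.card_image_of_injective _ Sum.inl_injective,
      Finset.card_image_of_injective _ (fun a b h => by simpa using h)]
    simp

private lemma ts_clique_le (hk : 2 ≤ k) {m : ℕ}
    {s : Finset (Fin k ⊕ (Fin k ⊕ Fin (cond hh 1 0)))}
    (hs : (thinSpider k hh).IsNClique m s) : m ≤ k + cond hh 1 0 := by
  by_cases hp : ∃ t : Fin k, Sum.inr (Sum.inl t) ∈ s
  · obtain ⟨t, ht⟩ := hp
    have hsub : s ⊆ {Sum.inr (Sum.inl t), Sum.inl t} := by
      intro x hx
      by_cases hxe : x = Sum.inr (Sum.inl t)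
      · simp [hxe]
      · have hadj := hs.1 ht hx (fun h => hxe h.symm)
        simp [ts_pend_nbr hadj]
    have hc := (Finset.card_le_card hsub).trans (Finset.card_insert_le _ _)
    rw [hs.2] at hc
    simp only [Finset.card_singleton] at hc
    omega
  · push_neg at hp
    have hsub : s ⊆ bigClique k hh := by
      intro x hx
      rcases x with i | (t | t)
      · simp [bigClique]
      · exact absurd hx (hp t)
      · simp [bigClique]
    have hc := Finset.card_le_card hsub
    rw [hs.2] at hc
    calc m ≤ (bigClique k hh).card := hc
      _ = k + cond hh 1 0 := (ts_isNClique hk).2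

end ThinSpiderAux

/-- for `k ≥ 2`, the b*-chromatic number of a thin spider (with or
without head) equals its clique number. -/
theorem thinSpider_bStar_eq_omega (k : ℕ) (hk : 2 ≤ k) (hasHead : Bool) :
    bStar (thinSpider k hasHead) = omegaNum (thinSpider k hasHead) := by
  have h1 : bStar (thinSpider k hasHead) = k + cond hasHead 1 0 := by
    apply natSSupEq
    · exact ⟨spCol k, ts_bstar_coloring hk⟩
    · rintro x ⟨c, hc⟩
      exact ts_bstar_le hk hc
  have h2 : omegaNum (thinSpider k hasHead) = k + cond hasHead 1 0 := by
    apply natSSupEq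
    · exact ⟨bigClique k hasHead, ts_isNClique hk⟩
    · rintro x ⟨s, hs⟩
      exact ts_clique_le hk hs
  rw [h1, h2]
end
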